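/- arXiv:1107.3341 — 8 statements merged into one kernel-verified Lean document; each statement's English description precedes it below -/
import Mathlib

section
/- Let w1, w2 be words, let H1, H2 and G be finite groups, let π : G → G/Z(G) be the quotient map, let φ_i : H_i → G/Z(G) be group homomorphisms (i = 1, 2), and let x_i ∈ w_i(H_i) be elements such that: (a) C1·C2 = G/Z(G), where C_i denotes the conjugacy class of φ_i(x_i) in G/Z(G); and (b) the preimage π^{-1}(φ_1(x_1)) of φ_1(x_1) in G is contained in a single conjugacy class of G. Then w1(G)·w2(G) = G. -/
/-- The set of values of the word `w` in the group `G`: the image of the word map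
`G^d → G` induced by substitution. -/
def wordImage {d : ℕ} (w : FreeGroup (Fin d)) (G : Type*) [Group G] : Set G :=
  Set.range fun f : Fin d → G => FreeGroup.lift f w

lemma word_map_aux {d : ℕ} (w : FreeGroup (Fin d)) {A B : Type*} [Group A] [Group B]
    (φ : A →* B) (f : Fin d → A) :
    φ (FreeGroup.lift f w) = FreeGroup.lift (⇑φ ∘ f) w := by
  rw [← MonoidHom.comp_apply]
  refine DFunLike.congr_fun ?_ w
  ext i
  simp

lemma word_conj_mem {d : ℕ} (w : FreeGroup (Fin d)) {G : Type*} [Group G]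
    {y : G} (hy : y ∈ wordImage w G) (c : G) : c * y * c⁻¹ ∈ wordImage w G := by
  obtain ⟨f, hf⟩ := hy
  refine ⟨fun i => c * f i * c⁻¹, ?_⟩
  have h := word_map_aux w (MulAut.conj c).toMonoidHom f
  simp only [MulEquiv.coe_toMonoidHom, MulAut.conj_apply] at h
  rw [show (⇑(MulAut.conj c) ∘ f) = fun i => c * f i * c⁻¹ from rfl] at h
  simp only at hf ⊢
  rw [← hf, ← h]

theorem stmt2 {d1 d2 : ℕ} (w1 : FreeGroup (Fin d1)) (w2 : FreeGroup (Fin d2))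
    (H1 H2 G : Type) [Group H1] [Group H2] [Group G] [Finite H1] [Finite H2] [Finite G]
    (φ1 : H1 →* G ⧸ Subgroup.center G) (φ2 : H2 →* G ⧸ Subgroup.center G)
    (x1 : H1) (x2 : H2) (hx1 : x1 ∈ wordImage w1 H1) (hx2 : x2 ∈ wordImage w2 H2)
    -- (a) the product of the conjugacy classes of `φ1 x1` and `φ2 x2` is all of `G/Z(G)`
    (hclasses : ∀ g : G ⧸ Subgroup.center G, ∃ c1 c2 : G ⧸ Subgroup.center G,
      IsConj (φ1 x1) c1 ∧ IsConj (φ2 x2) c2 ∧ g = c1 * c2)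
    -- (b) all elements of `G` lying over `φ1 x1` are conjugate in `G`
    (hfiber : ∀ g1 g2 : G, (g1 : G ⧸ Subgroup.center G) = φ1 x1 →
      (g2 : G ⧸ Subgroup.center G) = φ1 x1 → IsConj g1 g2) :
    ∀ g : G, ∃ a ∈ wordImage w1 G, ∃ b ∈ wordImage w2 G, g = a * b := by
  intro g
  obtain ⟨f1, hf1⟩ := hx1
  obtain ⟨f2, hf2⟩ := hx2
  have hπ : Function.Surjective (QuotientGroup.mk (s := Subgroup.center G)) :=
    QuotientGroup.mk_surjective
  choose F1 hF1 using fun i => hπ (φ1 (f1 i))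
  choose F2 hF2 using fun i => hπ (φ2 (f2 i))
  set π : G →* G ⧸ Subgroup.center G := QuotientGroup.mk' (Subgroup.center G) with hπdef
  set y1 : G := FreeGroup.lift F1 w1 with hy1def
  set y2 : G := FreeGroup.lift F2 w2 with hy2def
  have hfun1 : (⇑π ∘ F1) = (⇑φ1 ∘ f1) := funext fun i => hF1 i
  have hfun2 : (⇑π ∘ F2) = (⇑φ2 ∘ f2) := funext fun i => hF2 i
  have hy1 : π y1 = φ1 x1 := by
    rw [hy1def, word_map_aux, hfun1, ← word_map_aux]
    exact congrArg φ1 hf1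
  have hy2 : π y2 = φ2 x2 := by
    rw [hy2def, word_map_aux, hfun2, ← word_map_aux]
    exact congrArg φ2 hf2
  obtain ⟨c1, c2, hc1, hc2, hg⟩ := hclasses (π g)
  obtain ⟨t1, ht1⟩ := hc1
  obtain ⟨t2, ht2⟩ := hc2
  rw [SemiconjBy] at ht1 ht2
  obtain ⟨s1, hs1⟩ := hπ (t1 : G ⧸ Subgroup.center G)
  obtain ⟨s2, hs2⟩ := hπ (t2 : G ⧸ Subgroup.center G)
  set b : G := s2 * y2 * s2⁻¹ with hbdef
  have hb : b ∈ wordImage w2 G := word_conj_mem w2 ⟨F2, rfl⟩ s2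
  have hπb : π b = c2 := by
    have h : π b = π s2 * φ2 x2 * (π s2)⁻¹ := by simp [hbdef, hy2]
    rw [h, hπdef]
    simp only [QuotientGroup.mk'_apply, hs2]
    rw [mul_inv_eq_iff_eq_mul]
    exact ht2
  set a : G := g * b⁻¹ with hadef
  have hπa : π a = c1 := by
    rw [hadef, map_mul, map_inv, hπb]
    rw [show π g = c1 * c2 from hg]
    group
  have h1 : π (s1⁻¹ * a * s1) = φ1 x1 := by
    rw [map_mul, map_mul, map_inv, hπa, hπdef]
    simp only [QuotientGroup.mk'_apply, hs1]
    rw [mul_assoc, inv_mul_eq_iff_eq_mul]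
    exact ht1.symm
  have hconj : IsConj y1 (s1⁻¹ * a * s1) := hfiber _ _ hy1 h1
  obtain ⟨u, hu⟩ := hconj
  rw [SemiconjBy] at hu
  have ha : a ∈ wordImage w1 G := by
    have heq : a = (s1 * (u : G)) * y1 * (s1 * (u : G))⁻¹ := by
      rw [mul_inv_rev,
        show s1 * (u : G) * y1 * ((u : G)⁻¹ * s1⁻¹) = s1 * ((u : G) * y1) * (u : G)⁻¹ * s1⁻¹
          by group,
        hu]
      group
    rw [heq]
    exact word_conj_mem w1 ⟨F1, rfl⟩ (s1 * (u : G))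
  exact ⟨a, ha, b, hb, by rw [hadef]; group⟩
end

section
/- Let q ≥ 5 be an odd prime power and let a be the integer defined by 2^{a+1} = (q^2−1)_2 (so a ≥ 2). Then the map (x, y) ↦ x^{2^a} y^{2^a} from SL_2(q) × SL_2(q) to SL_2(q) is not surjective; in fact, the central involution −I of SL_2(q) is not of the form x^{2^a} y^{2^a}. -/
open Matrix

private lemma ch2 {R : Type*} [CommRing R] (A : Matrix (Fin 2) (Fin 2) R) :
    A * A = A.trace • A - A.det • (1 : Matrix (Fin 2) (Fin 2) R) := by
  ext i j
  fin_cases i <;> fin_cases j <;>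
    simp [Matrix.mul_apply, Matrix.trace_fin_two, Matrix.det_fin_two, Fin.sum_univ_two,
      Matrix.one_apply] <;> ring

/-- Abstract core: a 2×2 matrix of det 1 over an alg. closed field whose trace is fixed
by the `q`-power Frobenius satisfies `A ^ n = 1`. -/
private lemma corepow (L : Type) [Field L] [IsAlgClosed L] {p : ℕ} (hp : p.Prime)
    [CharP L p] (hpodd : Odd p) (q n : ℕ) (hq1 : 1 ≤ q)
    (hfq : ∀ x y : L, (x + y) ^ q = x ^ q + y ^ q)
    (hdvd1 : (q - 1) ∣ n) (hdvd2 : (q + 1) ∣ n) (hdvd3 : 2 * p ∣ n)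
    (A : Matrix (Fin 2) (Fin 2) L) (hdet : A.det = 1) (htq : A.trace ^ q = A.trace) :
    A ^ n = 1 := by
  haveI : Fact p.Prime := ⟨hp⟩
  have hp2 : p ≠ 2 := by rintro rfl; revert hpodd; decide
  have hCH : A * A = A.trace • A - 1 := by
    have := ch2 A; rwa [hdet, one_smul] at this
  have h2L : (2 : L) ≠ 0 := by
    intro h
    have h0 : ((2 : ℕ) : L) = 0 := by exact_mod_cast h
    exact hp2 ((Nat.prime_dvd_prime_iff_eq hp Nat.prime_two).1
      ((CharP.cast_eq_zero_iff L p 2).1 h0))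
  obtain ⟨s, hs⟩ : ∃ s : L, s ^ 2 = A.trace ^ 2 - 4 :=
    IsAlgClosed.exists_pow_nat_eq _ (by norm_num)
  set l := (A.trace + s) / 2 with hldef
  set m := (A.trace - s) / 2 with hmdef
  have hsum : l + m = A.trace := by rw [hldef, hmdef]; field_simp; ring
  have hprod : l * m = 1 := by
    rw [hldef, hmdef]; field_simp; linear_combination -hs
  by_cases hlm : l = m
  · -- repeated eigenvalue
    have hll : l * l = 1 := by rw [← hlm] at hprod; exact hprod
    have hquad2 : A * A = (l + l) • A - 1 := by
      rw [← hsum, ← hlm] at hCH; exact hCH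
    have e1 : A * (l • (1 : Matrix (Fin 2) (Fin 2) L)) = l • A := by
      rw [Matrix.mul_smul, mul_one]
    have e2 : (l • (1 : Matrix (Fin 2) (Fin 2) L)) * A = l • A := by
      rw [Matrix.smul_mul, one_mul]
    have e3 : (l • (1 : Matrix (Fin 2) (Fin 2) L)) * (l • (1 : Matrix (Fin 2) (Fin 2) L))
        = (l * l) • (1 : Matrix (Fin 2) (Fin 2) L) := by
      rw [Matrix.smul_mul, one_mul, smul_smul]
    have hN : (A - l • 1) * (A - l • 1) = 0 := by
      calc (A - l • 1) * (A - l • 1)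
          = A * A - A * (l • 1) - ((l • 1) * A - (l • 1) * (l • 1)) := by
            rw [Matrix.sub_mul, Matrix.mul_sub, Matrix.mul_sub]
        _ = ((l + l) • A - 1) - l • A - (l • A - (l * l) • 1) := by
            rw [hquad2, e1, e2, e3]
        _ = 0 := by rw [hll]; module
    set D := l • A - 1 with hDdef
    have hDD : D * D = 0 := by
      have hDN : D = l • (A - l • 1) := by
        rw [smul_sub, smul_smul, hll, one_smul]
      rw [hDN, Matrix.smul_mul, Matrix.mul_smul, hN, smul_zero, smul_zero]
    clear_value D
    have hpowB : ∀ j : ℕ, (l • A) ^ j = 1 + (j : L) • D := by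
      intro j; induction j with
      | zero => simp
      | succ j ih =>
          have hB : l • A = 1 + D := by rw [hDdef]; abel
          rw [pow_succ, ih, hB, mul_add, mul_one, add_mul, one_mul, Matrix.smul_mul,
            hDD, smul_zero, add_zero]
          push_cast
          rw [add_smul, one_smul]
          abel
    have hBp : (l • A) ^ p = 1 := by
      rw [hpowB p, CharP.cast_eq_zero L p, zero_smul, add_zero]
    have hlp : l ^ p = l := by
      obtain ⟨e, he⟩ := hpodd
      have hl2 : l ^ 2 = 1 := by rw [pow_two]; exact hll
      rw [he, pow_succ, pow_mul, hl2, one_pow, one_mul]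
    have hAp : A ^ p = l • 1 := by
      have hA : A = l • (l • A) := by rw [smul_smul, hll, one_smul]
      conv_lhs => rw [hA]
      rw [smul_pow, hBp, hlp]
    have hA2p : A ^ (2 * p) = 1 := by
      rw [mul_comm, pow_mul, hAp, smul_pow, one_pow, pow_two, hll, one_smul]
    obtain ⟨e, he⟩ := hdvd3
    rw [he, pow_mul, hA2p, one_pow]
  · -- distinct eigenvalues
    have hl0 : l ≠ 0 := left_ne_zero_of_mul_eq_one hprod
    have hlq : l * l + 1 = A.trace * l := by linear_combination l * hsum - hprod
    have hfrob : (l ^ q) * (l ^ q) + 1 = A.trace * l ^ q := by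
      have h1 : (l * l + 1) ^ q = (A.trace * l) ^ q := by rw [hlq]
      rw [hfq, mul_pow, one_pow, mul_pow, htq] at h1
      exact h1
    have hroot : (l ^ q - l) * (l ^ q - m) = 0 := by
      linear_combination hfrob - (l ^ q) * hsum + hprod
    have hln1 : l ^ n = 1 := by
      rcases mul_eq_zero.1 hroot with h | h
      · have hql : l ^ q = l := by rwa [sub_eq_zero] at h
        have h3 : l ^ (q - 1) * l = l := by
          rw [← pow_succ, Nat.sub_add_cancel hq1]; exact hql
        have h4 : l ^ (q - 1) = 1 :=
          mul_right_cancel₀ hl0 (h3.trans (one_mul l).symm)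
        obtain ⟨e, he⟩ := hdvd1
        rw [he, pow_mul, h4, one_pow]
      · have hql : l ^ q = m := by rwa [sub_eq_zero] at h
        have h3 : l ^ (q + 1) = 1 := by
          rw [pow_succ, hql]; rw [mul_comm] at hprod; exact hprod
        obtain ⟨e, he⟩ := hdvd2
        rw [he, pow_mul, h3, one_pow]
    have hmn1 : m ^ n = 1 := by
      have h5 : m ^ n * l ^ n = 1 := by rw [← mul_pow, mul_comm m l, hprod, one_pow]
      rwa [hln1, mul_one] at h5
    set d := l - m with hddef
    have hd0 : d ≠ 0 := sub_ne_zero.2 hlm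
    set P := d⁻¹ • (A - m • 1) with hPdef
    set Q := d⁻¹ • (l • (1 : Matrix (Fin 2) (Fin 2) L) - A) with hQdef
    have hPQ : P + Q = 1 := by
      rw [hPdef, hQdef, ← smul_add]
      have h5 : (A - m • 1) + (l • (1 : Matrix (Fin 2) (Fin 2) L) - A)
          = d • (1 : Matrix (Fin 2) (Fin 2) L) := by
        rw [hddef, sub_smul]; abel
      rw [h5, smul_smul, inv_mul_cancel₀ hd0, one_smul]
    have hquad' : A * A = (l + m) • A - (l * m) • 1 := by
      rw [hsum, hprod, one_smul]; exact hCH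
    have hAP : A * P = l • P := by
      have h6 : A * (A - m • 1) = l • (A - m • 1) := by
        rw [Matrix.mul_sub, Matrix.mul_smul, mul_one, hquad', smul_sub, smul_smul]
        module
      rw [hPdef, Matrix.mul_smul, h6, smul_comm]
    have hAQ : A * Q = m • Q := by
      have h6 : A * (l • (1 : Matrix (Fin 2) (Fin 2) L) - A)
          = m • (l • (1 : Matrix (Fin 2) (Fin 2) L) - A) := by
        rw [Matrix.mul_sub, Matrix.mul_smul, mul_one, hquad', smul_sub, smul_smul]
        module
      rw [hQdef, Matrix.mul_smul, h6, smul_comm]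
    clear_value P Q
    have hpowA : ∀ j : ℕ, A ^ j = l ^ j • P + m ^ j • Q := by
      intro j; induction j with
      | zero => simpa using hPQ.symm
      | succ j ih =>
          rw [pow_succ', ih, mul_add, Matrix.mul_smul, Matrix.mul_smul, hAP, hAQ,
            smul_smul, smul_smul, ← pow_succ, ← pow_succ]
    rw [hpowA n, hln1, hmn1, one_smul, one_smul, hPQ]

private lemma expo (F : Type) [Field F] [Fintype F] (hodd : Odd (Fintype.card F))
    (g : Matrix.SpecialLinearGroup (Fin 2) F) :
    g ^ (ringChar F * ((Fintype.card F ^ 2 - 1) / 2)) = 1 := by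
  classical
  set q := Fintype.card F with hqdef
  set p := ringChar F with hpdef
  haveI : CharP F p := ringChar.charP F
  have hp : p.Prime := CharP.char_is_prime F p
  haveI : Fact p.Prime := ⟨hp⟩
  obtain ⟨k, -, hcard⟩ := FiniteField.card F p
  have hp2 : p ≠ 2 := by
    intro h2
    have h2d : 2 ∣ q := by rw [hqdef, hcard, h2]; exact dvd_pow_self 2 k.ne_zero
    obtain ⟨c, hc⟩ := hodd
    omega
  have hpodd : Odd p := hp.odd_of_ne_two hp2
  have hq1 : 1 ≤ q := Fintype.card_pos
  obtain ⟨c, hc⟩ := hodd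
  have hq2 : q ^ 2 = 4 * (c * (c + 1)) + 1 := by rw [hc]; ring
  have hhalf : (q ^ 2 - 1) / 2 = 2 * (c * (c + 1)) := by omega
  set n := p * ((q ^ 2 - 1) / 2) with hndef
  have hdvd1 : (q - 1) ∣ n := ⟨p * (c + 1), by
    rw [hndef, hhalf, show q - 1 = 2 * c by omega]; ring⟩
  have hdvd2 : (q + 1) ∣ n := ⟨p * c, by
    rw [hndef, hhalf, show q + 1 = 2 * (c + 1) by omega]; ring⟩
  have hdvd3 : 2 * p ∣ n := ⟨c * (c + 1), by rw [hndef, hhalf]; ring⟩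
  -- move to the algebraic closure
  let L := AlgebraicClosure F
  let f : F →+* L := algebraMap F L
  have hfinj : Function.Injective f := f.injective
  haveI hchL : CharP L p := charP_of_injective_algebraMap hfinj p
  set M := (g : Matrix (Fin 2) (Fin 2) F) with hMdef
  set A := M.map f with hAdef
  have hdet : A.det = 1 := by
    rw [hAdef, ← RingHom.mapMatrix_apply, ← RingHom.map_det, g.prop]
    exact _root_.map_one f
  have ht : A.trace = f M.trace := by
    simp [hAdef, Matrix.trace_fin_two, Matrix.map_apply, map_add]
  have htq : A.trace ^ q = A.trace := by rw [ht, ← map_pow, hqdef, FiniteField.pow_card]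
  have hfq : ∀ x y : L, (x + y) ^ q = x ^ q + y ^ q := by
    intro x y; rw [hqdef, hcard]; exact add_pow_char_pow x y p k
  have hAn : A ^ n = 1 :=
    corepow L hp hpodd q n hq1 hfq hdvd1 hdvd2 hdvd3 A hdet htq
  have hMn : M ^ n = 1 := by
    have h1 : f.mapMatrix (M ^ n) = 1 := by
      rw [map_pow, RingHom.mapMatrix_apply]; exact hAn
    have hinj : Function.Injective (f.mapMatrix :
        Matrix (Fin 2) (Fin 2) F →+* Matrix (Fin 2) (Fin 2) L) := by
      intro X Y h
      ext i j
      apply hfinj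
      have := Matrix.ext_iff.2 h i j
      simpa [RingHom.mapMatrix_apply, Matrix.map_apply] using this
    exact hinj (h1.trans (_root_.map_one f.mapMatrix).symm)
  apply Subtype.ext
  rw [Matrix.SpecialLinearGroup.coe_pow]
  exact hMn

theorem stmt7 (q a : ℕ) (hq : IsPrimePow q) (hodd : Odd q) (hq5 : 5 ≤ q)
    -- `2 ^ (a+1)` is the 2-part of `q^2 - 1`
    (ha : (q ^ 2 - 1).factorization 2 = a + 1)
    (F : Type) [Field F] [Fintype F] (hF : Fintype.card F = q) :
    (¬ Function.Surjective (fun xy :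
        Matrix.SpecialLinearGroup (Fin 2) F × Matrix.SpecialLinearGroup (Fin 2) F =>
          xy.1 ^ 2 ^ a * xy.2 ^ 2 ^ a)) ∧
    ∀ x y : Matrix.SpecialLinearGroup (Fin 2) F,
      ((x ^ 2 ^ a * y ^ 2 ^ a : Matrix.SpecialLinearGroup (Fin 2) F) :
        Matrix (Fin 2) (Fin 2) F) ≠ -1 := by
  have hq25 : 25 ≤ q ^ 2 := by nlinarith
  have hne : q ^ 2 - 1 ≠ 0 := by omega
  set p := ringChar F with hpdef
  haveI : CharP F p := ringChar.charP F
  have hp : p.Prime := CharP.char_is_prime F p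
  obtain ⟨k, -, hcard⟩ := FiniteField.card F p
  have hp2 : p ≠ 2 := by
    intro h2
    have h2d : 2 ∣ q := by rw [← hF, hcard, h2]; exact dvd_pow_self 2 k.ne_zero
    obtain ⟨c, hc⟩ := hodd
    omega
  have hpodd : Odd p := hp.odd_of_ne_two hp2
  -- 2-adic decomposition of q^2 - 1
  set sodd := (q ^ 2 - 1) / 2 ^ (a + 1) with hsdef
  have hfact : 2 ^ (a + 1) * sodd = q ^ 2 - 1 := by
    have := Nat.ordProj_mul_ordCompl_eq_self (q ^ 2 - 1) 2
    rwa [ha] at this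
  have hsodd : Odd sodd := by
    have h2 : ¬ (2 : ℕ) ∣ sodd := by
      have := Nat.not_dvd_ordCompl Nat.prime_two hne
      rwa [ha] at this
    rcases Nat.even_or_odd sodd with h | h
    · exact absurd h.two_dvd h2
    · exact h
  have hhalf : (q ^ 2 - 1) / 2 = 2 ^ a * sodd := by
    have h1 : q ^ 2 - 1 = 2 * (2 ^ a * sodd) := by rw [← hfact, pow_succ]; ring
    rw [h1, Nat.mul_div_cancel_left _ two_pos]
  have hm : Odd (p * sodd) := hpodd.mul hsodd
  -- determinant of -1
  have hdetneg : (-1 : Matrix (Fin 2) (Fin 2) F).det = 1 := by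
    simp [Matrix.det_fin_two, Matrix.one_apply]
  set w : Matrix.SpecialLinearGroup (Fin 2) F := ⟨-1, hdetneg⟩ with hwdef
  have key : ∀ x y : Matrix.SpecialLinearGroup (Fin 2) F,
      ((x ^ 2 ^ a * y ^ 2 ^ a : Matrix.SpecialLinearGroup (Fin 2) F) :
        Matrix (Fin 2) (Fin 2) F) ≠ -1 := by
    intro x y h
    have hexp : ∀ z : Matrix.SpecialLinearGroup (Fin 2) F, (z ^ 2 ^ a) ^ (p * sodd) = 1 := by
      intro z
      have := expo F (by rwa [hF]) z
      rw [hF, hhalf] at this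
      rw [← pow_mul, show 2 ^ a * (p * sodd) = p * (2 ^ a * sodd) by ring]
      exact this
    set u := x ^ 2 ^ a with hudef
    set v := y ^ 2 ^ a with hvdef
    have huv : u * v = w := Subtype.ext h
    have hwu : w * u = u * w := by
      apply Subtype.ext
      show ((-1 : Matrix (Fin 2) (Fin 2) F)) * u = (u : Matrix (Fin 2) (Fin 2) F) * (-1)
      rw [neg_one_mul, mul_neg_one]
    have hcomm : Commute u v := by
      have hv : v = u⁻¹ * w := by rw [← huv, inv_mul_cancel_left]
      show u * v = v * u
      rw [huv, hv, mul_assoc, hwu, ← mul_assoc, inv_mul_cancel, one_mul]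
    have hw1 : w ^ (p * sodd) = 1 := by
      rw [← huv, hcomm.mul_pow, hexp x, hexp y, one_mul]
    have hcontr : ((-1 : Matrix (Fin 2) (Fin 2) F)) ^ (p * sodd) = 1 := by
      have := congrArg (Subtype.val) hw1
      rwa [Matrix.SpecialLinearGroup.coe_pow] at this
    rw [hm.neg_one_pow] at hcontr
    have h11 : (-1 : F) = 1 := by
      have := Matrix.ext_iff.2 hcontr 0 0
      simpa [Matrix.one_apply] using this
    have h20 : ((2 : ℕ) : F) = 0 := by push_cast; linear_combination -h11
    exact hp2 ((Nat.prime_dvd_prime_iff_eq hp Nat.prime_two).1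
      ((CharP.cast_eq_zero_iff F p 2).1 h20))
  refine ⟨?_, key⟩
  intro hsurj
  obtain ⟨⟨x, y⟩, hxy⟩ := hsurj w
  have hxy' : x ^ 2 ^ a * y ^ 2 ^ a = w := hxy
  exact key x y (by rw [hxy'])
end

section
/- Let q be a prime power, ε = ±1, n ≥ 2, let p be a prime divisor of gcd(n, q−ε), and let z be a central element of order p in SL^ε_n(q). Define the integer a by: a = ⌊log_p n⌋ + log_p( (q−ε)_p ) if p > 2, and a = ⌊log_2 n⌋ − 1 + log_2( (q^2−1)_2 ) if p = 2. Then z ≠ x^{p^a} y^{p^a} for all x, y ∈ GL^ε_n(q). -/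
/-- The defining condition of the unitary group: `(M^(q))ᵀ * M = 1`, where `M^(q)` raises
every entry of `M` to the `q`-th power. -/
def UnitaryMat {n : ℕ} {K : Type*} [Field K] (q : ℕ) (M : Matrix (Fin n) (Fin n) K) : Prop :=
  (M.map (· ^ q)).transpose * M = 1

/-- The special unitary group `SU_n(q)`, realized as the set of elements of
`SL_n(K)` (where `K` is the field with `q^2` elements) satisfying the unitarity condition. -/
def suSet (n q : ℕ) (K : Type*) [Field K] : Set (Matrix.SpecialLinearGroup (Fin n) K) :=
  {g | UnitaryMat q (g : Matrix (Fin n) (Fin n) K)}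

open Polynomial Matrix

section Aux

variable {K : Type*} [Field K] {n : ℕ}

lemma my_pow_mul_pow_cancel {R : Type*} [Monoid R] {A B : R} (hAB : A * B = 1) :
    ∀ k : ℕ, A ^ k * B ^ k = 1 := by
  intro k
  induction k with
  | zero => simp
  | succ k ih =>
    rw [pow_succ A, pow_succ' B, mul_assoc, ← mul_assoc A B, hAB, one_mul, ih]

lemma my_aeval_transpose (A : Matrix (Fin n) (Fin n) K) (P : K[X]) :
    aeval Aᵀ P = (aeval A P)ᵀ := by
  rw [aeval_eq_sum_range, aeval_eq_sum_range, Matrix.transpose_sum]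
  exact Finset.sum_congr rfl fun i _ => by
    rw [Matrix.transpose_smul, Matrix.transpose_pow]

lemma my_aeval_map (σ : K →+* K) (A : Matrix (Fin n) (Fin n) K) (P : K[X]) :
    aeval (A.map σ) (P.map σ) = (aeval A P).map σ := by
  have h1 : (aeval A P).map σ = (σ.mapMatrix : Matrix (Fin n) (Fin n) K →+* _) (aeval A P) := rfl
  rw [h1, aeval_def, aeval_def, hom_eval₂, eval₂_map]
  have h2 : ((σ.mapMatrix : Matrix (Fin n) (Fin n) K →+* _).comp
      (algebraMap K (Matrix (Fin n) (Fin n) K))) =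
      (algebraMap K (Matrix (Fin n) (Fin n) K)).comp σ := by
    ext r i j
    simp [Matrix.algebraMap_eq_diagonal, Matrix.diagonal_apply, apply_ite σ]
  rw [h2]
  rfl

lemma my_aeval_reflect (A B : Matrix (Fin n) (Fin n) K) (hAB : A * B = 1) (hBA : B * A = 1)
    (N : ℕ) (f : K[X]) (hf : f.natDegree ≤ N) :
    aeval B (reflect N f) * A ^ N = aeval A f := by
  refine induction_with_natDegree_le
    (fun f => aeval B (reflect N f) * A ^ N = aeval A f) N (by simp) ?_ ?_ f hf
  · intro i r _ hiN
    rw [reflect_C_mul, reflect_monomial, revAt_le hiN]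
    rw [_root_.map_mul, _root_.map_mul, aeval_C, aeval_C, _root_.map_pow, _root_.map_pow, aeval_X, aeval_X]
    have hsplit : A ^ N = A ^ (N - i) * A ^ i := by
      rw [← pow_add, Nat.sub_add_cancel hiN]
    rw [hsplit, mul_assoc, ← mul_assoc (B ^ (N - i)), my_pow_mul_pow_cancel hBA, one_mul]
  · intro f g _ _ hf hg
    rw [reflect_add, map_add, add_mul, hf, hg, map_add]

end Aux


section NT

lemma my_sq_sub_one (Q : ℕ) (hQ : 1 ≤ Q) : Q ^ 2 - 1 = (Q + 1) * (Q - 1) := by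
  obtain ⟨m, rfl⟩ : ∃ m, Q = m + 1 := ⟨Q - 1, by omega⟩
  have h1 : (m + 1) ^ 2 = m ^ 2 + 2 * m + 1 := by ring
  have h2 : m + 1 - 1 = m := by omega
  have h3 : (m + 1 + 1) * m = m ^ 2 + 2 * m := by ring
  rw [h1, h2, h3]
  omega

lemma my_padic_le_log {p d n : ℕ} (hp : 1 < p) (hd : 0 < d) (hdn : d ≤ n) :
    padicValNat p d ≤ Nat.log p n := by
  have h1 : p ^ padicValNat p d ∣ d := pow_padicValNat_dvd
  have h2 : p ^ padicValNat p d ≤ n := le_trans (Nat.le_of_dvd hd h1) hdn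
  exact (Nat.le_log_iff_pow_le hp (by omega)).mpr h2

lemma my_le_padic {p K m : ℕ} (hp : p.Prime) (hm : m ≠ 0) (h : p ^ K ∣ m) :
    K ≤ padicValNat p m := by
  have := (Nat.Prime.pow_dvd_iff_le_factorization hp hm).mp h
  rwa [Nat.factorization_def _ hp] at this

lemma my_nt_odd {p Q k d n : ℕ} (hp : p.Prime) (hodd : Odd p) (hQ : 2 ≤ Q)
    (hpQ : p ∣ Q - 1) (hd : 0 < d) (hdn : d ≤ n)
    (hdvd : p ^ k ∣ Q ^ d - 1) : k ≤ Nat.log p n + padicValNat p (Q - 1) := by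
  haveI : Fact p.Prime := ⟨hp⟩
  have hQd : 2 ≤ Q ^ d := le_trans hQ (Nat.le_self_pow (by omega) Q)
  have hk : k ≤ padicValNat p (Q ^ d - 1) := my_le_padic hp (by omega) hdvd
  have hnp : ¬ p ∣ Q := by
    intro h
    have h1 : p ∣ Q - (Q - 1) := Nat.dvd_sub h hpQ
    rw [(by omega : Q - (Q - 1) = 1)] at h1
    exact hp.one_lt.ne' (Nat.eq_one_of_dvd_one h1 ▸ rfl)
  have := padicValNat.pow_sub_pow (x := Q) (y := 1) hodd (by omega) (by simpa using hpQ)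
    hnp (by omega : d ≠ 0)
  rw [one_pow] at this
  have hvd : padicValNat p d ≤ Nat.log p n := my_padic_le_log hp.one_lt hd hdn
  omega

lemma my_nt_two_even {Q k d : ℕ} (hQodd2 : Odd Q) (hQ : 3 ≤ Q) (hd : d ≠ 0) (hde : Even d)
    (hdvd : 2 ^ k ∣ Q ^ d - 1) :
    k + 1 ≤ padicValNat 2 (Q ^ 2 - 1) + padicValNat 2 d := by
  have hQd : 2 ≤ Q ^ d := le_trans (by omega) (Nat.le_self_pow hd Q)
  have hk : k ≤ padicValNat 2 (Q ^ d - 1) := my_le_padic Nat.prime_two (by omega) hdvd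
  have hn2 : ¬ 2 ∣ Q := by
    rintro ⟨c, rfl⟩
    exact (Nat.not_odd_iff_even.mpr ⟨c, by omega⟩) hQodd2
  have hLTE := padicValNat.pow_two_sub_pow (x := Q) (y := 1) (by omega)
    (by obtain ⟨c, hc⟩ := hQodd2; omega) hn2 hd hde
  rw [one_pow] at hLTE
  haveI : Fact (Nat.Prime 2) := ⟨Nat.prime_two⟩
  have hmul : padicValNat 2 (Q ^ 2 - 1) = padicValNat 2 (Q + 1) + padicValNat 2 (Q - 1) := by
    rw [my_sq_sub_one Q (by omega), padicValNat.mul (by omega) (by omega)]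
  omega

lemma my_nt_two_any {Q k d : ℕ} (hQodd : Odd Q) (hQ : 3 ≤ Q) (hd : d ≠ 0)
    (hdvd : 2 ^ k ∣ Q ^ d - 1) :
    k ≤ padicValNat 2 (Q ^ 2 - 1) + padicValNat 2 d := by
  have hdd : Q ^ d - 1 ∣ Q ^ (2 * d) - 1 := by
    have := Nat.sub_dvd_pow_sub_pow (Q ^ d) 1 2
    rwa [one_pow, ← pow_mul, mul_comm d 2] at this
  have := my_nt_two_even hQodd hQ (by omega) (by exact ⟨d, by omega⟩) (hdvd.trans hdd)
  haveI : Fact (Nat.Prime 2) := ⟨Nat.prime_two⟩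
  have h2d : padicValNat 2 (2 * d) = 1 + padicValNat 2 d := by
    rw [padicValNat.mul (by omega) hd, padicValNat_self]
  omega

lemma my_nt_two_plus {Q k e : ℕ} (hQodd : Odd Q) (hQ : 3 ≤ Q) (he : e ≠ 0)
    (hdvd : 2 ^ k ∣ Q ^ e + 1) :
    k ≤ padicValNat 2 (Q ^ 2 - 1) + padicValNat 2 e := by
  have hdd : Q ^ e + 1 ∣ Q ^ (2 * e) - 1 := by
    refine ⟨Q ^ e - 1, ?_⟩
    have h1 : 1 ≤ Q ^ e := Nat.one_le_pow _ _ (by omega)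
    have := my_sq_sub_one (Q ^ e) h1
    rwa [← pow_mul, mul_comm e 2] at this
  have h := my_nt_two_even hQodd hQ (by omega : 2 * e ≠ 0) ⟨e, by omega⟩ (hdvd.trans hdd)
  haveI : Fact (Nat.Prime 2) := ⟨Nat.prime_two⟩
  have h2e : padicValNat 2 (2 * e) = 1 + padicValNat 2 e := by
    rw [padicValNat.mul (by omega) he, padicValNat_self]
  omega

end NT


section Factor

variable {F : Type*} [Field F] [Fintype F] {n p k : ℕ}

lemma my_monic_dvd_eq {a b : F[X]} (ha : a.Monic) (hb : b.Monic) (hdvd : a ∣ b)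
    (hdeg : b.natDegree ≤ a.natDegree) : a = b := by
  obtain ⟨c, rfl⟩ := hdvd
  have hc0 : c ≠ 0 := by
    rintro rfl
    rw [mul_zero] at hb
    exact hb.ne_zero rfl
  have h1 : (a * c).natDegree = a.natDegree + c.natDegree :=
    natDegree_mul ha.ne_zero hc0
  have h2 : c.natDegree = 0 := by omega
  have h3 : c = C (c.coeff 0) := eq_C_of_natDegree_eq_zero h2
  have h4 : c.coeff 0 = 1 := by
    have hlc := Polynomial.Monic.leadingCoeff hb
    rw [leadingCoeff_mul, ha.leadingCoeff, one_mul] at hlc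
    rw [Polynomial.leadingCoeff, h2] at hlc
    exact hlc
  rw [h3, h4, Polynomial.C_1, mul_one]

lemma my_exists_good_factor (hp : p.Prime) (hk : 0 < k) (hchar : (p : F) ≠ 0)
    {M : Matrix (Fin n) (Fin n) F} (h1 : M ^ p ^ k = 1) (h2 : M ^ p ^ (k - 1) ≠ 1) :
    ∃ f : F[X], Irreducible f ∧ f ∣ minpoly F M ∧ f ∣ (X ^ p ^ k - 1) ∧
      ¬ f ∣ (X ^ p ^ (k - 1) - 1) ∧ 0 < f.natDegree ∧ f.natDegree ≤ n := by
  classical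
  set m := minpoly F M with hm
  have hint : IsIntegral F M := Matrix.isIntegral M
  have hm0 : m ≠ 0 := minpoly.ne_zero hint
  have hdvd : m ∣ (X ^ p ^ k - 1 : F[X]) := by
    apply minpoly.dvd
    rw [map_sub, _root_.map_one, _root_.map_pow, aeval_X, h1, sub_self]
  have hsep : (X ^ p ^ k - 1 : F[X]).Separable := by
    have : ((p ^ k : ℕ) : F) ≠ 0 := by
      push_cast
      exact pow_ne_zero _ hchar
    simpa using separable_X_pow_sub_C (1 : F) this one_ne_zero
  have hsq : Squarefree m := (hsep.of_dvd hdvd).squarefree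
  have hnd : ¬ m ∣ (X ^ p ^ (k - 1) - 1 : F[X]) := by
    rintro ⟨t, ht⟩
    apply h2
    have : aeval M (X ^ p ^ (k - 1) - 1 : F[X]) = 0 := by
      rw [ht, _root_.map_mul, minpoly.aeval, zero_mul]
    rw [map_sub, _root_.map_one, _root_.map_pow, aeval_X, sub_eq_zero] at this
    exact this
  set g := (X ^ p ^ (k - 1) - 1 : F[X]) with hgdef
  set d := EuclideanDomain.gcd m g with hd
  obtain ⟨e, he⟩ : d ∣ m := EuclideanDomain.gcd_dvd_left m g
  have he0 : e ≠ 0 := by rintro rfl; rw [mul_zero] at he; exact hm0 he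
  have heu : ¬ IsUnit e := by
    intro hu
    obtain ⟨e', he'⟩ := isUnit_iff_exists_inv.mp hu
    apply hnd
    have hmd : m ∣ d := ⟨e', by rw [he, mul_assoc, he', mul_one]⟩
    exact hmd.trans (EuclideanDomain.gcd_dvd_right m g)
  obtain ⟨f, hfirr, hfe⟩ := WfDvdMonoid.exists_irreducible_factor heu he0
  have hfm : f ∣ m := hfe.trans ⟨d, by rw [he, mul_comm]⟩
  have hfg : ¬ f ∣ g := by
    intro hfg
    have hfd : f ∣ d := EuclideanDomain.dvd_gcd hfm hfg
    have : f * f ∣ m := by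
      rw [he]
      exact mul_dvd_mul hfd hfe
    exact hfirr.not_isUnit (hsq f this)
  refine ⟨f, hfirr, hfm, hfm.trans hdvd, hfg, ?_, ?_⟩
  · exact hfirr.natDegree_pos
  · calc f.natDegree ≤ m.natDegree := natDegree_le_of_dvd hfm hm0
      _ ≤ M.charpoly.natDegree := natDegree_le_of_dvd (Matrix.minpoly_dvd_charpoly M)
          (Matrix.charpoly_monic M).ne_zero
      _ = n := by rw [Matrix.charpoly_natDegree_eq_dim, Fintype.card_fin]

end Factor


section L0

variable {F : Type*} [Field F] [Fintype F] {n p k : ℕ}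

lemma my_root_order {f : F[X]} (hp : p.Prime) (hk : 0 < k) (hirr : Irreducible f)
    (hfk : f ∣ (X ^ p ^ k - 1)) (hfk' : ¬ f ∣ (X ^ p ^ (k - 1) - 1)) :
    orderOf (AdjoinRoot.root f) = p ^ k ∧ (AdjoinRoot.root f) ≠ 0 := by
  haveI : Fact (Irreducible f) := ⟨hirr⟩
  set μ := AdjoinRoot.root f with hμ
  have h1 : μ ^ p ^ k = 1 := by
    have : aeval μ (X ^ p ^ k - 1 : F[X]) = 0 := by
      rw [AdjoinRoot.aeval_eq, AdjoinRoot.mk_eq_zero]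
      exact hfk
    rw [map_sub, _root_.map_one, _root_.map_pow, aeval_X, sub_eq_zero] at this
    exact this
  have h2 : μ ^ p ^ (k - 1) ≠ 1 := by
    intro hcon
    apply hfk'
    rw [← AdjoinRoot.mk_eq_zero, ← AdjoinRoot.aeval_eq]
    rw [map_sub, _root_.map_one, _root_.map_pow, aeval_X, hcon, sub_self]
  have hμ0 : μ ≠ 0 := by
    intro hcon
    rw [hcon, zero_pow (pow_ne_zero _ hp.ne_zero)] at h1
    exact zero_ne_one h1
  haveI : Fact p.Prime := ⟨hp⟩
  have hord : orderOf μ = p ^ k := by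
    have := orderOf_eq_prime_pow (x := μ) (n := k - 1) h2
      (by rw [Nat.sub_add_cancel hk]; exact h1)
    rwa [Nat.sub_add_cancel hk] at this
  exact ⟨hord, hμ0⟩

lemma my_adjoinroot_card {f : F[X]} (hirr : Irreducible f) :
    ∃ _ : Fintype (AdjoinRoot f), Fintype.card (AdjoinRoot f) = Fintype.card F ^ f.natDegree := by
  haveI : Fact (Irreducible f) := ⟨hirr⟩
  have hf0 : f ≠ 0 := hirr.ne_zero
  let pb := AdjoinRoot.powerBasis hf0
  haveI : Module.Finite F (AdjoinRoot f) := Module.Finite.of_basis pb.basis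
  haveI : Finite (AdjoinRoot f) := Module.finite_of_finite F
  letI : Fintype (AdjoinRoot f) := Fintype.ofFinite _
  refine ⟨inferInstance, ?_⟩
  rw [Module.card_eq_pow_finrank (K := F) (V := AdjoinRoot f), PowerBasis.finrank pb,
    AdjoinRoot.powerBasis_dim]

lemma my_pow_dvd_card_pow_sub_one (hp : p.Prime) (hk : 0 < k) (hchar : (p : F) ≠ 0)
    {M : Matrix (Fin n) (Fin n) F} (h1 : M ^ p ^ k = 1) (h2 : M ^ p ^ (k - 1) ≠ 1) :
    ∃ d, 0 < d ∧ d ≤ n ∧ p ^ k ∣ Fintype.card F ^ d - 1 := by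
  obtain ⟨f, hirr, hfm, hfk, hfk', hdeg1, hdegn⟩ := my_exists_good_factor hp hk hchar h1 h2
  haveI : Fact (Irreducible f) := ⟨hirr⟩
  obtain ⟨hord, hμ0⟩ := my_root_order hp hk hirr hfk hfk'
  obtain ⟨hfin, hcard⟩ := my_adjoinroot_card (F := F) hirr
  refine ⟨f.natDegree, hdeg1, hdegn, ?_⟩
  have hdvd : orderOf (AdjoinRoot.root f) ∣ Fintype.card (AdjoinRoot f) - 1 :=
    orderOf_dvd_of_pow_eq_one (FiniteField.pow_card_sub_one_eq_one _ hμ0)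
  rwa [hord, hcard] at hdvd

end L0


section Char

lemma my_char_setup {K : Type*} [Field K] [Fintype K] {q : ℕ} (hq : IsPrimePow q)
    (hK : Fintype.card K = q ^ 2) :
    ∃ p₀ s : ℕ, p₀.Prime ∧ 0 < s ∧ p₀ ^ s = q ∧ CharP K p₀ := by
  obtain ⟨p₀, s, hp₀, hs, hqe⟩ := hq
  haveI := ringChar.charP K
  obtain ⟨m, hm, hcard⟩ := FiniteField.card K (ringChar K)
  have hp₀' : p₀.Prime := Nat.prime_iff.mpr hp₀
  have heq : (ringChar K) ^ (m : ℕ) = p₀ ^ (2 * s) := by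
    rw [← hcard, hK, ← hqe, ← pow_mul, mul_comm]
  have hdvd : p₀ ∣ ringChar K ^ (m : ℕ) := by
    rw [heq]; exact dvd_pow_self _ (by omega)
  have hpe : p₀ = ringChar K :=
    (Nat.prime_dvd_prime_iff_eq hp₀' hm).mp (hp₀'.dvd_of_dvd_pow hdvd)
  exact ⟨p₀, s, hp₀', hs, hqe, hpe ▸ inferInstance⟩

lemma my_frob_hom {K : Type*} [Field K] {p₀ s q : ℕ} [Fact p₀.Prime] [CharP K p₀]
    (hq : p₀ ^ s = q) : ∃ σ : K →+* K, ∀ x, σ x = x ^ q :=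
  ⟨iterateFrobenius K p₀ s, fun x => by rw [iterateFrobenius_def, hq]⟩

end Char

section PI

variable {K : Type*} [Field K] [Fintype K] {n q : ℕ}

lemma my_reflect_eq (hq2 : Fintype.card K = q ^ 2) (hn : 0 < n)
    (σ : K →+* K) (hσ : ∀ x : K, σ x = x ^ q)
    {M : Matrix (Fin n) (Fin n) K} (hU : (M.map (· ^ q)).transpose * M = 1) :
    reflect (minpoly K M).natDegree (minpoly K M) =
      (minpoly K M).map σ * C ((minpoly K M).coeff 0) ∧ (minpoly K M).coeff 0 ≠ 0 := by
  set m := minpoly K M with hmdef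
  have hint : IsIntegral K M := Matrix.isIntegral M
  have hm0 : m ≠ 0 := minpoly.ne_zero hint
  have hmon : m.Monic := minpoly.monic hint
  have hMmap : M.map (· ^ q) = M.map σ := by
    ext i j; simp [Matrix.map_apply, hσ]
  set Minv := (M.map σ)ᵀ with hMinvdef
  have hMinvM : Minv * M = 1 := by rw [hMinvdef, ← hMmap]; exact hU
  have hMMinv : M * Minv = 1 := mul_eq_one_comm.mp hMinvM
  have hintI : IsIntegral K Minv := Matrix.isIntegral _
  have key : ∀ A : Matrix (Fin n) (Fin n) K,
      aeval ((A.map σ)ᵀ) ((minpoly K A).map σ) = 0 := by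
    intro A
    rw [my_aeval_transpose, my_aeval_map, minpoly.aeval]
    simp
  have h1 : minpoly K Minv ∣ m.map σ := minpoly.dvd _ _ (key M)
  have hσσ : ∀ x : K, σ (σ x) = x := by
    intro x
    rw [hσ, hσ, ← pow_mul, ← pow_two, ← hq2]
    exact FiniteField.pow_card x
  have hMinvb : ((Minv.map σ)ᵀ) = M := by
    rw [hMinvdef, Matrix.transpose_map, Matrix.transpose_transpose]
    ext i j; simp [Matrix.map_apply, hσσ]
  have h2 : m ∣ (minpoly K Minv).map σ := by
    have h := key Minv
    rw [hMinvb] at h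
    exact minpoly.dvd _ _ h
  have hmapmon : (m.map σ).Monic := hmon.map σ
  have hd1 : (minpoly K Minv).natDegree ≤ m.natDegree := by
    have := natDegree_le_of_dvd h1 hmapmon.ne_zero
    rwa [natDegree_map] at this
  have hd2 : m.natDegree ≤ (minpoly K Minv).natDegree := by
    have := natDegree_le_of_dvd h2 ((minpoly.monic hintI).map σ).ne_zero
    rwa [natDegree_map] at this
  have heqh : minpoly K Minv = m.map σ :=
    my_monic_dvd_eq (minpoly.monic hintI) hmapmon h1 (by rw [natDegree_map]; omega)
  have hM0 : m.coeff 0 ≠ 0 := by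
    intro hc
    obtain ⟨t, ht⟩ := X_dvd_iff.mpr hc
    have ht0 : t ≠ 0 := fun h => hm0 (by rw [ht, h, mul_zero])
    have hT : aeval M t = 0 := by
      have h0 : aeval M m = 0 := minpoly.aeval K M
      rw [ht, _root_.map_mul, aeval_X] at h0
      calc aeval M t = (Minv * M) * aeval M t := by rw [hMinvM, one_mul]
        _ = Minv * (M * aeval M t) := by rw [mul_assoc]
        _ = 0 := by rw [h0, mul_zero]
    have hled : m.natDegree ≤ t.natDegree := natDegree_le_of_dvd (minpoly.dvd K M hT) ht0
    have hdeq : m.natDegree = 1 + t.natDegree := by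
      rw [ht, natDegree_mul X_ne_zero ht0, natDegree_X]
    omega
  set D := m.natDegree with hDdef
  have hrcoeff : (reflect D m).coeff D = m.coeff 0 := by
    rw [coeff_reflect, revAt_le le_rfl, Nat.sub_self]
  have hrd_le : (reflect D m).natDegree ≤ D := by
    rw [natDegree_le_iff_coeff_eq_zero]
    intro N hN
    rw [coeff_reflect, revAt_eq_self_of_lt hN]
    exact coeff_eq_zero_of_natDegree_lt hN
  have h3 : minpoly K Minv ∣ reflect D m := by
    apply minpoly.dvd
    have hrfl := my_aeval_reflect M Minv hMMinv hMinvM D m le_rfl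
    rw [minpoly.aeval] at hrfl
    calc aeval Minv (reflect D m)
        = aeval Minv (reflect D m) * (M ^ D * Minv ^ D) := by
          rw [my_pow_mul_pow_cancel hMMinv, mul_one]
      _ = (aeval Minv (reflect D m) * M ^ D) * Minv ^ D := by rw [← mul_assoc]
      _ = 0 := by rw [hrfl, zero_mul]
  obtain ⟨c, hc⟩ := h3
  have hhmon : (minpoly K Minv).Monic := minpoly.monic hintI
  have hc0 : c ≠ 0 := by
    rintro rfl
    rw [mul_zero] at hc
    exact hM0 (by rw [← hrcoeff, hc, coeff_zero])
  have hdegc : c.natDegree = 0 := by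
    have h4 : (reflect D m).natDegree = (minpoly K Minv).natDegree + c.natDegree := by
      rw [hc, natDegree_mul hhmon.ne_zero hc0]
    have h5 : (minpoly K Minv).natDegree = D := by rw [heqh, natDegree_map]
    omega
  have hcC : c = C (c.coeff 0) := eq_C_of_natDegree_eq_zero hdegc
  have hcoeffD : c.coeff 0 = m.coeff 0 := by
    have h6 : (reflect D m).coeff D = ((minpoly K Minv) * c).coeff D := by rw [← hc]
    rw [hrcoeff] at h6
    rw [hcC, Polynomial.coeff_mul_C] at h6
    have h7 : (minpoly K Minv).coeff D = 1 := by
      have h5 : (minpoly K Minv).natDegree = D := by rw [heqh, natDegree_map]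
      rw [← h5, Polynomial.coeff_natDegree, hhmon.leadingCoeff]
    rw [h7, one_mul] at h6
    exact h6.symm
  refine ⟨?_, hM0⟩
  rw [hc, heqh, hcC, hcoeffD]

end PI


section UK

lemma my_unitary_key {K : Type*} [Field K] [Fintype K] {q n p k : ℕ}
    (hq : IsPrimePow q) (hK : Fintype.card K = q ^ 2) (hp : p.Prime) (hk : 0 < k)
    (hn : 0 < n) (hchar : (p : K) ≠ 0)
    {M : Matrix (Fin n) (Fin n) K} (hU : (M.map (· ^ q)).transpose * M = 1)
    (h1 : M ^ p ^ k = 1) (h2 : M ^ p ^ (k - 1) ≠ 1) :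
    ∃ e, 0 < e ∧ e ≤ n ∧
      ((Even e ∧ p ^ k ∣ q ^ e - 1) ∨ (Odd e ∧ p ^ k ∣ q ^ e + 1)) := by
  classical
  obtain ⟨p₀, s, hp₀, hs, hqe, hcharK⟩ := my_char_setup hq hK
  haveI : Fact p₀.Prime := ⟨hp₀⟩
  haveI : CharP K p₀ := hcharK
  obtain ⟨σ, hσ⟩ := my_frob_hom (K := K) hqe
  obtain ⟨hPI, hM0⟩ := my_reflect_eq hK hn σ hσ hU
  set m := minpoly K M with hmdef
  have hint : IsIntegral K M := Matrix.isIntegral M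
  have hmon : m.Monic := minpoly.monic hint
  set D := m.natDegree with hDdef
  obtain ⟨f, hirr, hfm, hfk, hfk', hdeg1, hdegn⟩ := my_exists_good_factor hp hk hchar h1 h2
  haveI : Fact (Irreducible f) := ⟨hirr⟩
  set L := AdjoinRoot f with hLdef
  set ι := algebraMap K L with hιdef
  haveI : CharP L p₀ := charP_of_injective_algebraMap (ι.injective) p₀
  obtain ⟨σL, hσL⟩ := my_frob_hom (K := L) hqe
  set mL := m.map ι with hmLdef
  have hmL0 : mL ≠ 0 := (hmon.map ι).ne_zero
  have hmLdeg : mL.natDegree = D := natDegree_map ι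
  -- stability
  have hstab : ∀ t : L, t ≠ 0 → mL.eval t = 0 → mL.eval ((t ^ q)⁻¹) = 0 := by
    intro t ht0 hroot
    have hstep1 : ((m.map σ).map ι).eval (t ^ q) = 0 := by
      have hcomm : (m.map σ).map ι = mL.map σL := by
        rw [hmLdef, Polynomial.map_map, Polynomial.map_map]
        congr 1
        ext x
        simp only [RingHom.comp_apply, hσ, hσL, map_pow]
      rw [hcomm, ← hσL t, Polynomial.eval_map, Polynomial.eval₂_at_apply, hroot, map_zero]
    have hstep2 : (reflect D mL).eval (t ^ q) = 0 := by
      have hmap : reflect D mL = (m.map σ).map ι * C (ι (m.coeff 0)) := by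
        rw [hmLdef, reflect_map, hPI, Polynomial.map_mul, Polynomial.map_C]
      rw [hmap, eval_mul, hstep1, zero_mul]
    have htq0 : (t ^ q) ≠ 0 := pow_ne_zero _ ht0
    letI : Invertible ((t ^ q)⁻¹) := invertibleOfNonzero (inv_ne_zero htq0)
    have hiff := eval₂_reflect_eq_zero_iff (RingHom.id L) ((t ^ q)⁻¹) D mL
      (le_of_eq hmLdeg)
    rw [invOf_eq_inv, inv_inv, eval₂_eq_eval_map, eval₂_eq_eval_map] at hiff
    simp only [Polynomial.map_id] at hiff
    exact hiff.mp hstep2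
  -- the root and its order
  obtain ⟨hord, hμ0⟩ := my_root_order hp hk hirr hfk hfk'
  set μ := AdjoinRoot.root f with hμdef
  have hμroot : mL.eval μ = 0 := by
    have : aeval μ m = 0 := by
      rw [hμdef, AdjoinRoot.aeval_eq, AdjoinRoot.mk_eq_zero]
      exact hfm
    rwa [aeval_def, eval₂_eq_eval_map] at this
  -- the orbit
  set T := mL.roots.toFinset with hTdef
  have hTcard : T.card ≤ D := le_trans (Multiset.toFinset_card_le _)
    (le_trans (Polynomial.card_roots' mL) (le_of_eq hmLdeg))
  have hDn : D ≤ n := by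
    have hc1 : m.natDegree ≤ M.charpoly.natDegree := natDegree_le_of_dvd
      (Matrix.minpoly_dvd_charpoly M) (Matrix.charpoly_monic M).ne_zero
    have hc2 : M.charpoly.natDegree = n := by
      rw [Matrix.charpoly_natDegree_eq_dim, Fintype.card_fin]
    omega
  have hTn : T.card ≤ n := le_trans hTcard hDn
  set g : L → L := fun t => (t ^ q)⁻¹ with hgdef
  have hginj : Function.Injective g := by
    have h1 : Function.Injective (fun t : L => t ^ q) := by
      intro a b hab
      apply σL.injective
      rw [hσL, hσL]
      exact hab
    exact fun a b hab => h1 (inv_injective hab)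
  have horb : ∀ i : ℕ, g^[i] μ ∈ T ∧ g^[i] μ ≠ 0 := by
    intro i
    induction i with
    | zero =>
      refine ⟨?_, hμ0⟩
      simp only [Function.iterate_zero, id]
      rw [hTdef, Multiset.mem_toFinset, Polynomial.mem_roots hmL0]
      exact hμroot
    | succ i ih =>
      obtain ⟨hmem, h0⟩ := ih
      rw [Function.iterate_succ_apply']
      have hroot : mL.eval (g^[i] μ) = 0 := by
        rw [hTdef, Multiset.mem_toFinset, Polynomial.mem_roots hmL0] at hmem
        exact hmem
      refine ⟨?_, ?_⟩
      · rw [hTdef, Multiset.mem_toFinset, Polynomial.mem_roots hmL0]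
        exact hstab _ h0 hroot
      · exact inv_ne_zero (pow_ne_zero _ h0)
  -- pigeonhole
  have hlt : Fintype.card {x // x ∈ T} < Fintype.card (Fin (T.card + 1)) := by
    rw [Fintype.card_coe, Fintype.card_fin]
    omega
  obtain ⟨i, j, hij, hije⟩ := Fintype.exists_ne_map_eq_of_card_lt
    (fun i : Fin (T.card + 1) => (⟨g^[(i : ℕ)] μ, (horb i).1⟩ : {x // x ∈ T})) hlt
  have hije' : g^[(i : ℕ)] μ = g^[(j : ℕ)] μ := congrArg Subtype.val hije
  -- wlog i < j
  have hkey : ∃ e, 0 < e ∧ e ≤ n ∧ g^[e] μ = μ := by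
    rcases lt_or_gt_of_ne (fun h : (i : ℕ) = (j : ℕ) => hij (Fin.ext h)) with h | h
    · refine ⟨(j : ℕ) - (i : ℕ), by omega, ?_, ?_⟩
      · have := j.is_le
        omega
      · apply hginj.iterate (i : ℕ)
        rw [← Function.iterate_add_apply, (by omega : (i:ℕ) + ((j:ℕ) - (i:ℕ)) = (j:ℕ))]
        exact hije'.symm
    · refine ⟨(i : ℕ) - (j : ℕ), by omega, ?_, ?_⟩
      · have := i.is_le
        omega
      · apply hginj.iterate (j : ℕ)
        rw [← Function.iterate_add_apply, (by omega : (j:ℕ) + ((i:ℕ) - (j:ℕ)) = (i:ℕ))]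
        exact hije'
  obtain ⟨e, he0, hen, hiter⟩ := hkey
  -- zpow formula in units
  set ζ : Lˣ := Units.mk0 μ hμ0 with hζdef
  have hiterate : ∀ i : ℕ, g^[i] μ = ((ζ ^ ((-(q : ℤ)) ^ i) : Lˣ) : L) := by
    intro i
    induction i with
    | zero => simp [hζdef]
    | succ i ih =>
      rw [Function.iterate_succ_apply']
      have hgapp : g (g^[i] μ) = ((g^[i] μ) ^ q)⁻¹ := rfl
      rw [hgapp, ih]
      have h1 : ((ζ ^ ((-(q : ℤ)) ^ i) : Lˣ) : L) ^ q = ((ζ ^ ((-(q : ℤ)) ^ i * q) : Lˣ) : L) := by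
        rw [← Units.val_pow_eq_pow_val, ← zpow_natCast (ζ ^ ((-(q : ℤ)) ^ i)) q, ← _root_.zpow_mul]
      rw [h1, ← Units.val_inv_eq_inv_val, ← _root_.zpow_neg]
      congr 2
      ring
  have hζe : ζ ^ ((-(q : ℤ)) ^ e) = ζ := by
    have h1 := hiterate e
    rw [hiter] at h1
    exact Units.ext h1.symm
  have hzdvd : ((p : ℤ) ^ k) ∣ ((-(q : ℤ)) ^ e - 1) := by
    have h2 : ζ ^ ((-(q : ℤ)) ^ e - 1) = 1 := by
      rw [_root_.zpow_sub, hζe, zpow_one, mul_inv_cancel]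
    have h3 := orderOf_dvd_iff_zpow_eq_one.mpr h2
    have h4 : orderOf ζ = p ^ k := by
      have hval : (ζ : L) = μ := rfl
      rw [← orderOf_units (y := ζ), hval, hμdef, hord]
    rw [h4] at h3
    exact_mod_cast h3
  refine ⟨e, he0, hen, ?_⟩
  rcases Nat.even_or_odd e with heven | hodd
  · left
    refine ⟨heven, ?_⟩
    rw [heven.neg_pow] at hzdvd
    have hq1 : 1 ≤ q ^ e := Nat.one_le_pow _ _ (by have := hq.two_le; omega)
    have : ((p ^ k : ℕ) : ℤ) ∣ ((q ^ e - 1 : ℕ) : ℤ) := by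
      push_cast [hq1]
      exact_mod_cast hzdvd
    exact_mod_cast this
  · right
    refine ⟨hodd, ?_⟩
    rw [hodd.neg_pow] at hzdvd
    have : ((p ^ k : ℕ) : ℤ) ∣ ((q ^ e + 1 : ℕ) : ℤ) := by
      have h5 : (-(q:ℤ) ^ e - 1) = -((q:ℤ) ^ e + 1) := by ring
      rw [h5, dvd_neg] at hzdvd
      push_cast
      exact_mod_cast hzdvd
    exact_mod_cast this

end UK


lemma my_neg_one_pow {K : Type*} [Field K] [Fintype K] {q : ℕ} (hq : IsPrimePow q)
    (hK : Fintype.card K = q ^ 2) : (-1 : K) ^ q = -1 := by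
  obtain ⟨p₀, s, hp₀, hs, hqe, hchar⟩ := my_char_setup hq hK
  by_cases h2 : p₀ = 2
  · haveI : CharP K 2 := h2 ▸ hchar
    have hne : (-1 : K) = 1 := by
      have := CharTwo.neg_eq (R := K) 1
      simpa using this
    rw [hne, one_pow]
  · have hqodd : Odd q := by
      rw [← hqe]
      exact (hp₀.odd_of_ne_two h2).pow
    exact hqodd.neg_one_pow

lemma my_exists_zeta {K : Type*} [Field K] [Fintype K] {q : ℕ} (hq2 : 2 ≤ q)
    (hK : Fintype.card K = q ^ 2) :
    ∃ ζ : K, ζ ^ (q + 1) = 1 ∧ ζ ≠ 1 ∧ ζ * ζ ≠ 1 := by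
  classical
  obtain ⟨g, hg⟩ := IsCyclic.exists_generator (α := Kˣ)
  have hordg : orderOf g = q ^ 2 - 1 := by
    rw [orderOf_eq_card_of_forall_mem_zpowers hg, Nat.card_eq_fintype_card,
      Fintype.card_units, hK]
  have hdvd : (q - 1) ∣ (q ^ 2 - 1) := ⟨q + 1, by
    rw [my_sq_sub_one q (by omega), mul_comm]⟩
  set u := g ^ (q - 1) with hu
  have hordu : orderOf u = q + 1 := by
    rw [hu, orderOf_pow, hordg, Nat.gcd_eq_right hdvd]
    have h1 : q ^ 2 - 1 = (q - 1) * (q + 1) := by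
      rw [my_sq_sub_one q (by omega), mul_comm]
    rw [h1, Nat.mul_div_cancel_left _ (by omega : 0 < q - 1)]
  refine ⟨(u : K), ?_, ?_, ?_⟩
  · rw [← Units.val_pow_eq_pow_val, ← hordu, pow_orderOf_eq_one, Units.val_one]
  · intro hcon
    have h0 : u = 1 := Units.ext hcon
    rw [h0, orderOf_one] at hordu
    omega
  · intro hcon
    have h1 : u * u = 1 := Units.ext (by rw [Units.val_mul, hcon, Units.val_one])
    have h2 : u ^ 2 = 1 := by rw [pow_two]; exact h1
    have h3 := orderOf_dvd_of_pow_eq_one h2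
    rw [hordu] at h3
    have := Nat.le_of_dvd (by omega) h3
    omega

section Scalar

variable {K : Type} [Field K] [Fintype K] {n q : ℕ}

lemma my_su_scalar (hq : IsPrimePow q) (hK : Fintype.card K = q ^ 2) (hn : 2 ≤ n)
    (z : Matrix.SpecialLinearGroup (Fin n) K)
    (hzc : ∀ g ∈ suSet n q K, g * z = z * g) :
    ∃ c : K, (z : Matrix (Fin n) (Fin n) K) = Matrix.scalar (Fin n) c := by
  classical
  have hq2 : 2 ≤ q := hq.two_le
  obtain ⟨ζ, hζ1, hζne, hζsq⟩ := my_exists_zeta hq2 hK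
  set Z : Matrix (Fin n) (Fin n) K := (z : Matrix (Fin n) (Fin n) K) with hZ
  have hζqne : ζ ^ q ≠ ζ := by
    intro hcon
    apply hζsq
    calc ζ * ζ = ζ ^ q * ζ := by rw [hcon]
      _ = ζ ^ (q + 1) := by rw [pow_succ]
      _ = 1 := hζ1
  have hζq1 : ζ ^ q ≠ 1 := by
    intro hcon
    apply hζne
    calc ζ = ζ ^ q * ζ := by rw [hcon, one_mul]
      _ = ζ ^ (q + 1) := by rw [pow_succ]
      _ = 1 := hζ1
  -- off-diagonal entries vanish
  have hcommute : ∀ g : Matrix.SpecialLinearGroup (Fin n) K, UnitaryMat q (g : Matrix (Fin n) (Fin n) K) →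
      (g : Matrix (Fin n) (Fin n) K) * Z = Z * (g : Matrix (Fin n) (Fin n) K) := by
    intro g hg
    have := hzc g hg
    have h1 : ((g * z : Matrix.SpecialLinearGroup (Fin n) K) : Matrix (Fin n) (Fin n) K)
        = ((z * g : Matrix.SpecialLinearGroup (Fin n) K) : Matrix (Fin n) (Fin n) K) := by
      rw [this]
    rwa [Matrix.SpecialLinearGroup.coe_mul, Matrix.SpecialLinearGroup.coe_mul] at h1
  have hoff : ∀ i j : Fin n, i ≠ j → Z i j = 0 := by
    intro i j hij
    set sfun : Fin n → K := fun l => if l = i then ζ else if l = j then ζ ^ q else 1 with hsfun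
    have hsi : sfun i = ζ := by simp [hsfun]
    have hsj : sfun j = ζ ^ q := by simp [hsfun, Ne.symm hij]
    have hs1 : ∀ l, sfun l ^ (q + 1) = 1 := by
      intro l
      by_cases h1 : l = i
      · rw [h1, hsi]
        exact hζ1
      by_cases h2 : l = j
      · rw [h2, hsj, ← pow_mul, mul_comm q (q + 1), pow_mul, hζ1, one_pow]
      · have : sfun l = 1 := by simp [hsfun, h1, h2]
        rw [this, one_pow]
    have hdet : (Matrix.diagonal sfun).det = 1 := by
      rw [Matrix.det_diagonal]
      rw [← Finset.mul_prod_erase Finset.univ sfun (Finset.mem_univ i)]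
      rw [← Finset.mul_prod_erase _ sfun
        (Finset.mem_erase.mpr ⟨(Ne.symm hij), Finset.mem_univ j⟩)]
      have hrest : ∏ l ∈ (Finset.univ.erase i).erase j, sfun l = 1 := by
        apply Finset.prod_eq_one
        intro l hl
        have h1 := Finset.mem_erase.mp hl
        have h2 := Finset.mem_erase.mp h1.2
        simp [hsfun, h1.1, h2.1]
      rw [hrest, mul_one, hsi, hsj, mul_comm, ← pow_succ, hζ1]
    have hunit : UnitaryMat q (Matrix.diagonal sfun) := by
      unfold UnitaryMat
      rw [Matrix.diagonal_map (by simp [zero_pow (by omega : q ≠ 0)]),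
        Matrix.diagonal_transpose, Matrix.diagonal_mul_diagonal]
      have hfun : (fun l => sfun l ^ q * sfun l) = fun _ => (1 : K) := by
        funext l
        rw [← pow_succ, hs1 l]
      rw [hfun, Matrix.diagonal_one]
    have hm : Matrix.diagonal sfun * Z = Z * Matrix.diagonal sfun :=
      hcommute ⟨Matrix.diagonal sfun, hdet⟩ hunit
    have h2 := congrFun (congrFun hm i) j
    rw [Matrix.diagonal_mul, Matrix.mul_diagonal, hsi, hsj] at h2
    have h3 : Z i j * (ζ - ζ ^ q) = 0 := by
      rw [mul_sub, ← h2]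
      ring
    rcases mul_eq_zero.mp h3 with h | h
    · exact h
    · exact absurd (sub_eq_zero.mp h).symm hζqne
  -- equal diagonal entries
  have hdiageq : ∀ i j : Fin n, i ≠ j → Z i i = Z j j := by
    intro i j hij
    set σp := Equiv.swap i j with hσp
    set s2 : Fin n → K := fun l => if l = i then (-1 : K) else 1 with hs2
    set PM := (σp.permMatrix K) * Matrix.diagonal s2 with hPM
    have hperm_entry : ∀ k l, (σp.permMatrix K) k l = if l = σp k then 1 else 0 := by
      intro k l
      rw [Equiv.Perm.permMatrix, PEquiv.toMatrix_apply, Equiv.toPEquiv_apply]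
      simp [eq_comm]
    have hdet : PM.det = 1 := by
      rw [hPM, Matrix.det_mul, Matrix.det_permutation, Equiv.Perm.sign_swap hij,
        Matrix.det_diagonal]
      have hprod : ∏ l, s2 l = -1 := by
        rw [hs2]
        rw [Finset.prod_ite_eq' Finset.univ i (fun _ => (-1 : K))]
        simp
      rw [hprod]
      simp
    have hps : σp.symm = σp := Equiv.symm_swap i j ▸ rfl
    have hpermT : (σp.permMatrix K)ᵀ = σp.permMatrix K := by
      show ((σp.toPEquiv).toMatrix)ᵀ = _
      rw [← PEquiv.toMatrix_symm, ← Equiv.toPEquiv_symm, hps]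
    have hpermsq : (σp.permMatrix K) * (σp.permMatrix K) = 1 := by
      rw [Equiv.Perm.permMatrix, ← PEquiv.toMatrix_trans, ← Equiv.toPEquiv_trans]
      have : σp.trans σp = Equiv.refl (Fin n) := by
        ext x
        simp [hσp]
      rw [this, Equiv.toPEquiv_refl, PEquiv.toMatrix_refl]
    have hD2sq : Matrix.diagonal s2 * Matrix.diagonal s2 = 1 := by
      rw [Matrix.diagonal_mul_diagonal]
      have hfun : (fun l => s2 l * s2 l) = fun _ => (1 : K) := by
        funext l
        by_cases h1 : l = i <;> simp [hs2, h1]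
      rw [hfun, Matrix.diagonal_one]
    have hmapPM : PM.map (· ^ q) = PM := by
      ext k l
      rw [Matrix.map_apply]
      have hentry : PM k l = (if l = σp k then 1 else 0) * s2 l := by
        rw [hPM, Matrix.mul_diagonal, hperm_entry]
      rw [hentry]
      rw [mul_pow]
      congr 1
      · by_cases h1 : l = σp k <;> simp [h1, one_pow, zero_pow (by omega : q ≠ 0)]
      · by_cases h1 : l = i <;> simp [hs2, h1, my_neg_one_pow hq hK]
    have hunit : UnitaryMat q PM := by
      unfold UnitaryMat
      rw [hmapPM]
      rw [hPM, Matrix.transpose_mul, Matrix.diagonal_transpose, hpermT]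
      calc Matrix.diagonal s2 * σp.permMatrix K * (σp.permMatrix K * Matrix.diagonal s2)
          = Matrix.diagonal s2 * (σp.permMatrix K * σp.permMatrix K) * Matrix.diagonal s2 := by
            rw [mul_assoc, mul_assoc, mul_assoc]
        _ = 1 := by rw [hpermsq, mul_one, hD2sq]
    have hm : PM * Z = Z * PM := hcommute ⟨PM, hdet⟩ hunit
    have h2 := congrFun (congrFun hm i) j
    have hPMij : PM i j = 1 := by
      rw [hPM, Matrix.mul_diagonal, hperm_entry]
      have h3 : σp i = j := Equiv.swap_apply_left i j
      have h4 : s2 j = 1 := by simp [hs2, Ne.symm hij]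
      rw [h4, h3]
      simp
    have hleft : (PM * Z) i j = PM i j * Z j j := by
      rw [Matrix.mul_apply]
      apply Finset.sum_eq_single j
      · intro t _ htj
        rw [hoff t j htj, mul_zero]
      · intro h
        exact absurd (Finset.mem_univ j) h
    have hright : (Z * PM) i j = Z i i * PM i j := by
      rw [Matrix.mul_apply]
      apply Finset.sum_eq_single i
      · intro t _ hti
        rw [hoff i t ?_, zero_mul]
        exact fun h => hti h.symm
      · intro h
        exact absurd (Finset.mem_univ i) h
    rw [hleft, hright, hPMij, mul_one, one_mul] at h2
    exact h2.symm
  -- conclude scalar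
  have hi0 : (0 : ℕ) < n := by omega
  set i0 : Fin n := ⟨0, hi0⟩ with hi0def
  refine ⟨Z i0 i0, ?_⟩
  ext k l
  by_cases hkl : k = l
  · subst hkl
    rw [Matrix.scalar_apply, Matrix.diagonal_apply_eq]
    by_cases hk0 : k = i0
    · rw [hk0]
    · exact (hdiageq i0 k (fun h => hk0 h.symm)).symm
  · rw [Matrix.scalar_apply, Matrix.diagonal_apply_ne _ hkl]
    exact hoff k l hkl

end Scalar


lemma my_unitary_pow {K : Type*} [Field K] {n q : ℕ} (σ : K →+* K) (hσ : ∀ x : K, σ x = x ^ q)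
    {M : Matrix (Fin n) (Fin n) K} (hU : UnitaryMat q M) (c : ℕ) : UnitaryMat q (M ^ c) := by
  have hmap : ∀ A : Matrix (Fin n) (Fin n) K, A.map (· ^ q) = A.map σ := fun A => by
    ext i j; simp [Matrix.map_apply, hσ]
  unfold UnitaryMat at hU ⊢
  rw [hmap] at hU ⊢
  have h1 : (M ^ c).map σ = (M.map σ) ^ c := by
    have := map_pow (σ.mapMatrix (m := Fin n)) M c
    simpa [RingHom.mapMatrix_apply] using this
  rw [h1, Matrix.transpose_pow]
  exact my_pow_mul_pow_cancel hU c

lemma my_not_prod {G : Type*} [Group G] {p : ℕ} (hp : p.Prime) {Z U V : G}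
    (hZU : Commute Z U) (hordZ : orderOf Z = p) (hU : ¬ p ∣ orderOf U) (hV : ¬ p ∣ orderOf V) :
    Z ≠ U * V := by
  intro h
  have hVeq : V = U⁻¹ * Z := by rw [h]; group
  have hcomm : Commute U⁻¹ Z := (hZU.symm).inv_left
  have h1 : (U⁻¹ * Z) ^ orderOf V = 1 := by rw [← hVeq]; exact pow_orderOf_eq_one V
  rw [hcomm.mul_pow, inv_pow] at h1
  have h2 : Z ^ orderOf V = U ^ orderOf V := by
    have := congrArg (fun w => (U ^ orderOf V) * w) h1
    simpa [mul_assoc] using this.symm |>.symm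
  have h3 : Z ^ (orderOf V * orderOf U) = 1 := by
    rw [pow_mul, h2, ← pow_mul, mul_comm, pow_mul, pow_orderOf_eq_one, one_pow]
  have h4 := orderOf_dvd_of_pow_eq_one h3
  rw [hordZ] at h4
  rcases (Nat.Prime.dvd_mul hp).mp h4 with h | h
  exacts [hV h, hU h]


-- generic reduction: if the p-valuation of every element order is ≤ a then p ∤ ord (x ^ p ^ a)
lemma my_ord_reduction {F : Type} [Field F] [Fintype F] {n p a : ℕ} (hp : p.Prime)
    (x : GL (Fin n) F) (hka : (orderOf x).factorization p ≤ a) :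
    ¬ p ∣ orderOf (x ^ p ^ a) := by
  classical
  set t := orderOf x with ht
  have ht0 : t ≠ 0 := (orderOf_pos x).ne'
  set k := t.factorization p with hkdef
  have h1 : x ^ p ^ a = (x ^ p ^ k) ^ p ^ (a - k) := by
    rw [← pow_mul, ← pow_add, Nat.add_sub_cancel' hka]
  have h2 : orderOf (x ^ p ^ k) = t / p ^ k := by
    rw [orderOf_pow, ← ht, Nat.gcd_eq_right (Nat.ordProj_dvd t p)]
  intro hpdvd
  have h3 : orderOf (x ^ p ^ a) ∣ t / p ^ k := by
    rw [h1, ← h2]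
    exact orderOf_pow_dvd _
  exact Nat.not_dvd_ordCompl hp ht0 (hpdvd.trans h3)

-- the p-part of the order, realized as a p-element (common to both branches)
lemma my_p_part {F : Type} [Field F] [Fintype F] {n p : ℕ} (hp : p.Prime)
    (x : GL (Fin n) F) (hk : 0 < (orderOf x).factorization p) :
    ∃ c : ℕ, orderOf (x ^ c) = p ^ (orderOf x).factorization p ∧
      ((x : Matrix (Fin n) (Fin n) F) ^ c) ^ p ^ (orderOf x).factorization p = 1 ∧
      ((x : Matrix (Fin n) (Fin n) F) ^ c) ^ p ^ ((orderOf x).factorization p - 1) ≠ 1 := by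
  classical
  set t := orderOf x with ht
  have ht0 : t ≠ 0 := (orderOf_pos x).ne'
  set k := t.factorization p with hkdef
  refine ⟨t / p ^ k, ?_, ?_, ?_⟩
  · rw [orderOf_pow, ← ht, Nat.gcd_eq_right (Nat.ordCompl_dvd t p),
      Nat.div_div_self (Nat.ordProj_dvd t p) ht0]
  · have hy : (x ^ (t / p ^ k)) ^ p ^ k = 1 := by
      rw [← pow_mul, Nat.div_mul_cancel (Nat.ordProj_dvd t p), ht]
      exact pow_orderOf_eq_one x
    have := congrArg (Units.val) hy
    simpa [Units.val_pow_eq_pow_val] using this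
  · intro hcon
    have hy : (x ^ (t / p ^ k)) ^ p ^ (k - 1) = 1 := by
      apply Units.ext
      simpa [Units.val_pow_eq_pow_val] using hcon
    have hordy : orderOf (x ^ (t / p ^ k)) = p ^ k := by
      rw [orderOf_pow, ← ht, Nat.gcd_eq_right (Nat.ordCompl_dvd t p),
        Nat.div_div_self (Nat.ordProj_dvd t p) ht0]
    have hdv := orderOf_dvd_of_pow_eq_one hy
    rw [hordy] at hdv
    have := (Nat.pow_dvd_pow_iff_le_right hp.one_lt).mp hdv
    omega

theorem stmt9 (q n p : ℕ) (hq : IsPrimePow q) (hn : 2 ≤ n) (hp : p.Prime) :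
    -- the case ε = +1: SL_n(q) and GL_n(q)
    (∀ a : ℕ, p ∣ Nat.gcd n (q - 1) →
      a = (if p = 2 then Nat.log 2 n - 1 + (q ^ 2 - 1).factorization 2
        else Nat.log p n + (q - 1).factorization p) →
      ∀ (F : Type) [Field F] [Fintype F], Fintype.card F = q →
        ∀ z : Matrix.SpecialLinearGroup (Fin n) F,
          z ∈ Subgroup.center (Matrix.SpecialLinearGroup (Fin n) F) → orderOf z = p →
          ∀ x y : Matrix.GeneralLinearGroup (Fin n) F,
            (z : Matrix (Fin n) (Fin n) F) ≠
              ((x ^ p ^ a * y ^ p ^ a : Matrix.GeneralLinearGroup (Fin n) F) :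
                Matrix (Fin n) (Fin n) F)) ∧
    -- the case ε = -1: SU_n(q) ⊆ SL_n(q^2) and GU_n(q) ⊆ GL_n(q^2)
    (∀ a : ℕ, p ∣ Nat.gcd n (q + 1) →
      a = (if p = 2 then Nat.log 2 n - 1 + (q ^ 2 - 1).factorization 2
        else Nat.log p n + (q + 1).factorization p) →
      ∀ (K : Type) [Field K] [Fintype K], Fintype.card K = q ^ 2 →
        ∀ z : Matrix.SpecialLinearGroup (Fin n) K, z ∈ suSet n q K →
          (∀ g ∈ suSet n q K, g * z = z * g) → orderOf z = p →
          ∀ x y : Matrix.GeneralLinearGroup (Fin n) K,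
            UnitaryMat q (x : Matrix (Fin n) (Fin n) K) →
            UnitaryMat q (y : Matrix (Fin n) (Fin n) K) →
            (z : Matrix (Fin n) (Fin n) K) ≠
              ((x ^ p ^ a * y ^ p ^ a : Matrix.GeneralLinearGroup (Fin n) K) :
                Matrix (Fin n) (Fin n) K)) := by
  classical
  have hq2 : 2 ≤ q := hq.two_le
  have hn0 : 0 < n := by omega
  constructor
  · -- linear case
    intro a hgcd haeq F _ _ hF z hcent hzord x y heq
    have hpq : p ∣ q - 1 := hgcd.trans (Nat.gcd_dvd_right _ _)
    have hcharF : (p : F) ≠ 0 := by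
      intro h0
      obtain ⟨c, hc⟩ := hpq
      have hcast : ((q - 1 : ℕ) : F) = -1 := by
        have h1 : (1 : ℕ) ≤ q := by omega
        rw [Nat.cast_sub h1, ← hF, FiniteField.cast_card_eq_zero]
        simp
      rw [hc] at hcast
      push_cast at hcast
      rw [h0, zero_mul] at hcast
      exact one_ne_zero (neg_eq_zero.mp hcast.symm)
    -- bound on p-valuation of all element orders in GL_n(F)
    have hkey : ∀ w : GL (Fin n) F, ¬ p ∣ orderOf (w ^ p ^ a) := by
      intro w
      apply my_ord_reduction hp
      set t := orderOf w with ht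
      set k := t.factorization p with hkdef
      by_cases hk0 : k = 0
      · omega
      have hk : 0 < k := Nat.pos_of_ne_zero hk0
      obtain ⟨c, hordc, hM1, hM2⟩ := my_p_part hp w hk
      obtain ⟨d, hd0, hdn, hdvd⟩ := my_pow_dvd_card_pow_sub_one hp hk hcharF hM1 hM2
      rw [hF] at hdvd
      by_cases hp2 : p = 2
      · subst hp2
        rw [if_pos rfl] at haeq
        have hqodd : Odd q := by
          obtain ⟨c2, hc2⟩ := hpq
          exact ⟨c2, by omega⟩
        have hq3 : 3 ≤ q := by
          obtain ⟨c2, hc2⟩ := hqodd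
          omega
        have hlog1 : 1 ≤ Nat.log 2 n :=
          (Nat.le_log_iff_pow_le (by omega) (by omega)).mpr (by simpa using hn)
        have hfac : (q ^ 2 - 1).factorization 2 = padicValNat 2 (q ^ 2 - 1) :=
          Nat.factorization_def _ Nat.prime_two
        have hvd : padicValNat 2 d ≤ Nat.log 2 n := my_padic_le_log (by omega) hd0 hdn
        rcases Nat.even_or_odd d with hde | hdo
        · have := my_nt_two_even hqodd hq3 (by omega) hde hdvd
          omega
        · have h1 := my_nt_two_any hqodd hq3 (by omega) hdvd
          have h2 : padicValNat 2 d = 0 :=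
            padicValNat.eq_zero_of_not_dvd (by
              intro h
              exact (Nat.not_odd_iff_even.mpr ((even_iff_two_dvd).mpr h)) hdo)
          omega
      · rw [if_neg hp2] at haeq
        have hodd : Odd p := hp.odd_of_ne_two hp2
        have h1 := my_nt_odd hp hodd hq2 hpq hd0 hdn hdvd
        have hfac : (q - 1).factorization p = padicValNat p (q - 1) :=
          Nat.factorization_def _ hp
        omega
    -- z is scalar
    have hi0 : (0 : ℕ) < n := hn0
    have hscalar : Matrix.scalar (Fin n) ((z : Matrix (Fin n) (Fin n) F) ⟨0, hi0⟩ ⟨0, hi0⟩)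
        = (z : Matrix (Fin n) (Fin n) F) :=
      Matrix.SpecialLinearGroup.scalar_eq_self_of_mem_center hcent _
    -- move to GL
    set Zg := Matrix.SpecialLinearGroup.toGL z with hZg
    have hZcoe : (Zg : Matrix (Fin n) (Fin n) F) = (z : Matrix (Fin n) (Fin n) F) := rfl
    have htoGLinj : Function.Injective
        (Matrix.SpecialLinearGroup.toGL (n := Fin n) (R := F)) := by
      intro A B h
      exact Subtype.ext (congrArg Units.val h)
    have hordZ : orderOf Zg = p := by
      rw [hZg, orderOf_injective _ htoGLinj z, hzord]
    have hcomm : Commute Zg (x ^ p ^ a) := by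
      apply Units.ext
      show (Zg : Matrix (Fin n) (Fin n) F) * _ = _ * (Zg : Matrix (Fin n) (Fin n) F)
      rw [hZcoe, ← hscalar]
      exact (Matrix.scalar_commute _ (fun r => Commute.all _ r) _)
    exact my_not_prod hp hcomm hordZ (hkey x) (hkey y) (Units.ext heq)
  · -- unitary case
    intro a hgcd haeq K _ _ hK z hzsu hzc hzord x y hxu hyu heq
    have hpq : p ∣ q + 1 := hgcd.trans (Nat.gcd_dvd_right _ _)
    have hq0K : ((q : ℕ) : K) = 0 := by
      have h1 : ((q ^ 2 : ℕ) : K) = 0 := by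
        rw [← hK, FiniteField.cast_card_eq_zero]
      push_cast at h1
      exact pow_eq_zero_iff (by omega : 2 ≠ 0) |>.mp h1
    have hcharK : (p : K) ≠ 0 := by
      intro h0
      obtain ⟨c, hc⟩ := hpq
      have hcast : ((q + 1 : ℕ) : K) = 1 := by push_cast [hq0K]; ring
      rw [hc] at hcast
      push_cast at hcast
      rw [h0, zero_mul] at hcast
      exact one_ne_zero hcast.symm
    obtain ⟨p₀, s, hp₀, hs, hqe, hcharK0⟩ := my_char_setup hq hK
    haveI : Fact p₀.Prime := ⟨hp₀⟩
    haveI : CharP K p₀ := hcharK0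
    obtain ⟨σ, hσ⟩ := my_frob_hom (K := K) hqe
    -- bound on p-valuation of orders of unitary elements
    have hkey : ∀ w : GL (Fin n) K, UnitaryMat q (w : Matrix (Fin n) (Fin n) K) →
        ¬ p ∣ orderOf (w ^ p ^ a) := by
      intro w hwu
      apply my_ord_reduction hp
      set t := orderOf w with ht
      set k := t.factorization p with hkdef
      by_cases hk0 : k = 0
      · omega
      have hk : 0 < k := Nat.pos_of_ne_zero hk0
      obtain ⟨c, hordc, hM1, hM2⟩ := my_p_part hp w hk
      have hMu : UnitaryMat q ((w : Matrix (Fin n) (Fin n) K) ^ c) :=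
        my_unitary_pow σ hσ hwu c
      by_cases hp2 : p = 2
      · subst hp2
        rw [if_pos rfl] at haeq
        have hqodd : Odd q := by
          obtain ⟨c2, hc2⟩ := hpq
          refine ⟨c2 - 1, by omega⟩
        have hq3 : 3 ≤ q := by
          obtain ⟨c2, hc2⟩ := hqodd
          omega
        have hlog1 : 1 ≤ Nat.log 2 n :=
          (Nat.le_log_iff_pow_le (by omega) (by omega)).mpr (by simpa using hn)
        have hfac : (q ^ 2 - 1).factorization 2 = padicValNat 2 (q ^ 2 - 1) :=
          Nat.factorization_def _ Nat.prime_two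
        obtain ⟨e, he0, hen, hcase⟩ :=
          my_unitary_key hq hK Nat.prime_two hk hn0 hcharK hMu hM1 hM2
        have hve : padicValNat 2 e ≤ Nat.log 2 n := my_padic_le_log (by omega) he0 hen
        rcases hcase with ⟨hee, hdvd⟩ | ⟨heo, hdvd⟩
        · have := my_nt_two_even hqodd hq3 (by omega) hee hdvd
          omega
        · have h1 := my_nt_two_plus hqodd hq3 (by omega) hdvd
          have h2 : padicValNat 2 e = 0 :=
            padicValNat.eq_zero_of_not_dvd (by
              intro h
              exact (Nat.not_odd_iff_even.mpr ((even_iff_two_dvd).mpr h)) heo)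
          omega
      · rw [if_neg hp2] at haeq
        have hodd : Odd p := hp.odd_of_ne_two hp2
        obtain ⟨d, hd0, hdn, hdvd⟩ := my_pow_dvd_card_pow_sub_one hp hk hcharK hM1 hM2
        rw [hK] at hdvd
        have hpq2 : p ∣ q ^ 2 - 1 := by
          rw [my_sq_sub_one q (by omega)]
          exact hpq.trans (dvd_mul_right _ _)
        have h1 := my_nt_odd hp hodd (by nlinarith : 2 ≤ q ^ 2) hpq2 hd0 hdn hdvd
        have hnotdvd : ¬ p ∣ q - 1 := by
          intro h
          have h2 : p ∣ (q + 1) - (q - 1) := Nat.dvd_sub hpq h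
          rw [(by omega : (q + 1) - (q - 1) = 2)] at h2
          have := Nat.le_of_dvd (by omega) h2
          have := hp.two_le
          interval_cases p
          · exact hp2 rfl
        haveI : Fact p.Prime := ⟨hp⟩
        have hsplit : padicValNat p (q ^ 2 - 1) = padicValNat p (q + 1) := by
          rw [my_sq_sub_one q (by omega), padicValNat.mul (by omega) (by omega),
            padicValNat.eq_zero_of_not_dvd hnotdvd, add_zero]
        have hfac : (q + 1).factorization p = padicValNat p (q + 1) :=
          Nat.factorization_def _ hp
        omega
    -- z is scalar
    obtain ⟨cz, hscalar⟩ := my_su_scalar hq hK hn z hzc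
    set Zg := Matrix.SpecialLinearGroup.toGL z with hZg
    have hZcoe : (Zg : Matrix (Fin n) (Fin n) K) = (z : Matrix (Fin n) (Fin n) K) := rfl
    have htoGLinj : Function.Injective
        (Matrix.SpecialLinearGroup.toGL (n := Fin n) (R := K)) := by
      intro A B h
      exact Subtype.ext (congrArg Units.val h)
    have hordZ : orderOf Zg = p := by
      rw [hZg, orderOf_injective _ htoGLinj z, hzord]
    have hcomm : Commute Zg (x ^ p ^ a) := by
      apply Units.ext
      show (Zg : Matrix (Fin n) (Fin n) K) * _ = _ * (Zg : Matrix (Fin n) (Fin n) K)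
      rw [hZcoe, hscalar]
      exact (Matrix.scalar_commute _ (fun r => Commute.all _ r) _)
    have hxau : UnitaryMat q ((x ^ p ^ a : GL (Fin n) K) : Matrix (Fin n) (Fin n) K) := by
      have := my_unitary_pow σ hσ hxu (p ^ a)
      simpa [Units.val_pow_eq_pow_val] using this
    have hyau : UnitaryMat q ((y ^ p ^ a : GL (Fin n) K) : Matrix (Fin n) (Fin n) K) := by
      have := my_unitary_pow σ hσ hyu (p ^ a)
      simpa [Units.val_pow_eq_pow_val] using this
    exact my_not_prod hp hcomm hordZ (hkey x hxu) (hkey y hyu) (Units.ext heq)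
end

section
/- Let p > 2 be a prime, ε = ±1, and q a prime power such that the p-part of q−ε equals p (i.e. (q−ε)_p = p). Then the map (x, y) ↦ x^p y^p from SL^ε_p(q) × SL^ε_p(q) to SL^ε_p(q) is not surjective. -/
section Aux

open Polynomial Finset

section NT
variable {p Q : ℕ}

lemma nt_expand (m : ℕ) : ∀ e : ℕ, ∃ t, (1 + m * p) ^ e = 1 + e * m * p + p^2 * t := by
  intro e
  induction e with
  | zero => exact ⟨0, by ring⟩
  | succ e ih =>
    obtain ⟨t, ht⟩ := ih
    exact ⟨e * m * m + t * (1 + m*p), by rw [pow_succ, ht]; ring⟩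

lemma nt_main (hp : p.Prime) (hp2 : 2 < p) (hQ : 2 ≤ Q)
    (hfac : (Q - 1).factorization p = 1) :
    p ∣ Q - 1 ∧ (∀ e, 0 < e → e < p → ¬ (p^2 ∣ Q^e - 1)) ∧
      ¬ (p^2 ∣ ∑ i ∈ range p, Q^i) := by
  have h0 : Q - 1 ≠ 0 := by omega
  have hdvd : p ∣ Q - 1 := by
    have := Nat.ordProj_dvd (Q - 1) p
    rwa [hfac, pow_one] at this
  have hndvd : ¬ p^2 ∣ Q - 1 := by
    have := Nat.pow_succ_factorization_not_dvd h0 hp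
    rwa [hfac] at this
  obtain ⟨m, hm⟩ := hdvd
  have hpm : ¬ p ∣ m := fun ⟨c, hc⟩ => hndvd ⟨c, by rw [hm, hc]; ring⟩
  have hQ1 : Q = 1 + m * p := by rw [mul_comm m p]; omega
  refine ⟨⟨m, hm⟩, ?_, ?_⟩
  · intro e he hep hdd
    obtain ⟨t, ht⟩ := nt_expand (p := p) m e
    rw [hQ1, ht] at hdd
    rw [show (1 + e * m * p + p^2 * t) - 1 = e * m * p + p^2 * t from by omega] at hdd
    have : p^2 ∣ e * m * p := by
      have h6 := Nat.dvd_sub hdd (Dvd.intro t rfl)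
      rwa [show e * m * p + p^2 * t - p^2 * t = e * m * p from by omega] at h6
    have : p ∣ e * m := by
      have hp0 : 0 < p := hp.pos
      rcases this with ⟨c, hc⟩
      exact ⟨c, by apply Nat.eq_of_mul_eq_mul_right hp0; rw [hc]; ring⟩
    rcases (Nat.Prime.dvd_mul hp).mp this with h | h
    · exact absurd (Nat.le_of_dvd he h) (by omega)
    · exact hpm h
  · intro hdd
    choose t ht using nt_expand (p := p) m
    have hodd : ∃ w, p = 2 * w + 1 := ⟨p / 2, by
      have := hp.two_le
      rcases hp.eq_one_or_self_of_dvd 2 with _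
      have : ¬ 2 ∣ p := by
        intro h2
        rcases (Nat.prime_dvd_prime_iff_eq Nat.prime_two hp).mp h2 with rfl
        omega
      omega⟩
    obtain ⟨w, hw⟩ := hodd
    have hsum : ∑ i ∈ range p, Q ^ i
        = p + p^2 * (m * w + ∑ i ∈ range p, t i) := by
      have : ∀ i ∈ range p, Q ^ i = 1 + i * m * p + p^2 * t i := fun i _ => by
        rw [hQ1]; exact ht i
      rw [Finset.sum_congr rfl this]
      rw [Finset.sum_add_distrib, Finset.sum_add_distrib]
      have h1 : ∑ _i ∈ range p, 1 = p := by simp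
      have h2 : ∑ i ∈ range p, i * m * p = p^2 * (m * w) := by
        rw [← Finset.sum_mul, ← Finset.sum_mul]
        have : (∑ i ∈ range p, i) = p * w := by
          have := Finset.sum_range_id_mul_two p
          have h3 : p * (p - 1) = p * w * 2 := by
            rw [show p - 1 = 2 * w from by omega]; ring
          omega
        rw [this]; ring
      rw [h1, h2, ← Finset.mul_sum]
      ring
    rw [hsum] at hdd
    have : p^2 ∣ p := (Nat.dvd_add_right ⟨_, rfl⟩).mp (by rwa [add_comm] at hdd)
    have := Nat.le_of_dvd hp.pos this
    nlinarith [hp.two_le]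

end NT


open Polynomial in
lemma no_torsion_p2 {p : ℕ} (hp : p.Prime) (hp2 : 2 < p)
    {K : Type} [Field K] [Fintype K]
    (hfac : (Fintype.card K - 1).factorization p = 1)
    (g : Matrix (Fin p) (Fin p) K) (hdet : g.det = 1)
    (h1 : g ^ (p * p) = 1) : g ^ p = 1 := by
  by_contra h2
  classical
  set Q := Fintype.card K with hQdef
  have hQ2 : 2 ≤ Q := Fintype.one_lt_card
  obtain ⟨hpQ1, hNT1, hNT2⟩ := nt_main hp hp2 hQ2 hfac
  have hpQ : ¬ p ∣ Q := by
    intro h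
    have hd := Nat.dvd_sub h hpQ1
    rw [show Q - (Q - 1) = 1 from by omega] at hd
    exact hp.one_lt.ne' (Nat.dvd_one.mp hd)
  -- (p : K) ≠ 0
  have hpK : ((p : ℕ) : K) ≠ 0 := by
    intro h
    have hd : ringChar K ∣ p := (ringChar.spec K p).mp h
    rcases (hp.eq_one_or_self_of_dvd _ hd) with h1' | h1'
    · exact CharP.ringChar_ne_one h1'
    · haveI : CharP K p := h1' ▸ ringChar.charP K
      obtain ⟨n, hn, hcard⟩ := FiniteField.card K p
      exact hpQ (by rw [hQdef, hcard]; exact dvd_pow_self p n.ne_zero)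
  -- the annihilating polynomial
  set P : K[X] := X ^ (p * p) - C 1 with hP
  have hPsep : P.Separable := separable_X_pow_sub_C 1
    (by rw [Nat.cast_mul]; exact mul_ne_zero hpK hpK) one_ne_zero
  have haev : aeval g P = 0 := by
    simp only [hP, map_sub, map_pow, aeval_X, aeval_C, map_one, h1, sub_self]
  set m := minpoly K g with hm
  have hmdvdP : m ∣ P := minpoly.dvd K g haev
  have hmsq : Squarefree m := (hPsep.of_dvd hmdvdP).squarefree
  have hgint : IsIntegral K g := IsIntegral.of_finite K g
  have hm0 : m ≠ 0 := minpoly.ne_zero hgint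
  set W : K[X] := X ^ p - C 1 with hW
  have haevW : ∀ h : K[X], m ∣ h → aeval g h = 0 := by
    rintro h ⟨c, rfl⟩
    rw [map_mul, minpoly.aeval, zero_mul]
  have hmW : ¬ m ∣ W := by
    intro hd
    apply h2
    have := haevW W hd
    simp only [hW, map_sub, map_pow, aeval_X, aeval_C, map_one, sub_eq_zero] at this
    exact this
  -- find an irreducible factor of m not dividing W
  set d := EuclideanDomain.gcd m W with hdgcd
  obtain ⟨e, he⟩ : d ∣ m := EuclideanDomain.gcd_dvd_left m W
  have heu : ¬ IsUnit e := by
    intro hu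
    obtain ⟨u, rfl⟩ := hu
    have hdW : d ∣ W := EuclideanDomain.gcd_dvd_right m W
    exact hmW (he ▸ (Units.mul_right_dvd.mpr hdW))
  have he0 : e ≠ 0 := by
    intro h
    exact hm0 (by rw [he, h, mul_zero])
  obtain ⟨f0, hf0irr, hf0e⟩ := WfDvdMonoid.exists_irreducible_factor heu he0
  set f : K[X] := normalize f0 with hf
  have hfirr : Irreducible f := (Associated.irreducible (associated_normalize f0) hf0irr)
  have hfmonic : f.Monic := monic_normalize hf0irr.ne_zero
  have hfe : f ∣ e := (normalize_dvd_iff).mpr hf0e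
  have hfm : f ∣ m := hfe.trans ⟨d, by rw [he, mul_comm]⟩
  have hfW : ¬ f ∣ W := by
    intro hfw
    have hfd : f ∣ d := EuclideanDomain.dvd_gcd hfm hfw
    have : f * f ∣ m := he ▸ mul_dvd_mul hfd hfe
    exact hfirr.not_isUnit (hmsq f this)
  -- pass to the algebraic closure
  set L := AlgebraicClosure K
  obtain ⟨ω, hω⟩ : ∃ x : L, aeval x f = 0 :=
    IsAlgClosed.exists_aeval_eq_zero L f
      (by simpa using (Polynomial.natDegree_pos_iff_degree_pos.mp hfirr.natDegree_pos).ne')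
  have hfmin : f = minpoly K ω := minpoly.eq_of_irreducible_of_monic hfirr hω hfmonic
  have haevω : ∀ h : K[X], f ∣ h → aeval ω h = 0 := by
    rintro h ⟨c, rfl⟩
    rw [map_mul, hω, zero_mul]
  have hωpp : ω ^ (p * p) = 1 := by
    have := haevω P (hfm.trans hmdvdP)
    simpa only [hP, map_sub, map_pow, aeval_X, aeval_C, map_one, sub_eq_zero] using this
  have hωp : ω ^ p ≠ 1 := by
    intro h
    apply hfW
    rw [hfmin]
    exact minpoly.dvd K ω (by simp only [hW, map_sub, map_pow, aeval_X, aeval_C, map_one, h, sub_self])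
  have hω0 : ω ≠ 0 := by
    intro h
    rw [h, zero_pow (by positivity)] at hωpp
    exact zero_ne_one hωpp
  have hord : orderOf ω = p ^ 2 := by
    have hdvd : orderOf ω ∣ p ^ 2 := orderOf_dvd_of_pow_eq_one (by rw [pow_two]; exact hωpp)
    rcases (Nat.dvd_prime_pow hp).mp hdvd with ⟨i, hi, hoi⟩
    rcases Nat.lt_or_ge i 2 with h | h
    · exfalso
      apply hωp
      apply orderOf_dvd_iff_pow_eq_one.mp
      rw [hoi]
      calc p ^ i ∣ p ^ 1 := pow_dvd_pow p (by omega)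
        _ = p := pow_one p
    · rw [le_antisymm hi h] at hoi; exact hoi
  -- Frobenius as an AlgHom
  haveI : CharP L (ringChar K) := charP_of_injective_algebraMap (algebraMap K L).injective _
  obtain ⟨n, hrp, hQr⟩ := FiniteField.card K (ringChar K)
  haveI : ExpChar L (ringChar K) := ExpChar.prime hrp
  set φ : L →ₐ[K] L :=
    { toRingHom := iterateFrobenius L (ringChar K) (n : ℕ)
      commutes' := fun a => by
        show iterateFrobenius L (ringChar K) (n : ℕ) (algebraMap K L a) = algebraMap K L a
        rw [iterateFrobenius_def, ← map_pow, ← hQr]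
        rw [show a ^ Q = a from FiniteField.pow_card a] } with hφ
  have hφdef : ∀ x : L, φ x = x ^ Q := fun x => by
    show iterateFrobenius L (ringChar K) (n : ℕ) x = x ^ Q
    rw [iterateFrobenius_def, ← hQr]
  -- Frobenius orbit of ω consists of roots of f
  have hroots : ∀ i : ℕ, aeval (ω ^ Q ^ i) f = 0 := by
    intro i
    induction i with
    | zero => rw [pow_zero, pow_one]; exact hω
    | succ i ih =>
      have : ω ^ Q ^ (i + 1) = φ (ω ^ Q ^ i) := by
        rw [hφdef, ← pow_mul, ← pow_succ]
      rw [this, aeval_algHom_apply, ih, map_zero]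
  -- the orbit elements are pairwise distinct
  have hdist : ∀ i j : ℕ, i < j → j < p → ω ^ Q ^ i ≠ ω ^ Q ^ j := by
    intro i j hij hjp hEq
    have hQpos : 0 < Q := by omega
    have hpow : Q ^ i ≤ Q ^ j := Nat.pow_le_pow_right (by omega) hij.le
    have h3 : ω ^ Q ^ i * ω ^ (Q ^ j - Q ^ i) = ω ^ Q ^ i * 1 := by
      rw [mul_one, ← pow_add, Nat.add_sub_cancel' hpow]
      exact hEq.symm
    have h4 : ω ^ (Q ^ j - Q ^ i) = 1 :=
      mul_left_cancel₀ (pow_ne_zero _ hω0) h3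
    have h5 : p ^ 2 ∣ Q ^ j - Q ^ i := hord ▸ orderOf_dvd_of_pow_eq_one h4
    have h6 : Q ^ j - Q ^ i = Q ^ i * (Q ^ (j - i) - 1) := by
      rw [Nat.mul_sub, mul_one, ← pow_add, Nat.add_sub_cancel' hij.le]
    have hcop : (Nat.Coprime (p ^ 2) (Q ^ i)) :=
      ((hp.coprime_iff_not_dvd).mpr hpQ).pow 2 i
    have h7 : p ^ 2 ∣ Q ^ (j - i) - 1 := by
      rw [h6] at h5
      exact hcop.dvd_of_dvd_mul_left h5
    exact hNT1 (j - i) (by omega) (by omega) h7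
  -- degree bookkeeping
  have hfdvdchar : f ∣ Matrix.charpoly g :=
    hfm.trans (minpoly.dvd K g (Matrix.aeval_self_charpoly g))
  have hchardeg : (Matrix.charpoly g).natDegree = p := by
    rw [Matrix.charpoly_natDegree_eq_dim, Fintype.card_fin]
  have hfdegle : f.natDegree ≤ p := by
    rw [← hchardeg]
    exact natDegree_le_of_dvd hfdvdchar (Matrix.charpoly_monic g).ne_zero
  -- roots of F := f mapped to L
  set F : L[X] := f.map (algebraMap K L) with hF
  have hFmonic : F.Monic := hfmonic.map _
  have hF0 : F ≠ 0 := hFmonic.ne_zero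
  have hFdeg : F.natDegree = f.natDegree := hfmonic.natDegree_map _
  have hFroots : ∀ i : ℕ, (ω ^ Q ^ i) ∈ F.roots := by
    intro i
    rw [mem_roots hF0]
    show F.eval _ = 0
    rw [hF, eval_map, ← aeval_def, hroots i]
  set T : Finset L := (Finset.range p).image (fun i => ω ^ Q ^ i) with hT
  have hinjOn : ∀ x ∈ Finset.range p, ∀ y ∈ Finset.range p,
      ω ^ Q ^ x = ω ^ Q ^ y → x = y := by
    intro x hx y hy hxy
    simp only [Finset.mem_range] at hx hy
    rcases lt_trichotomy x y with h | h | h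
    · exact absurd hxy (hdist x y h hy)
    · exact h
    · exact absurd hxy.symm (hdist y x h hx)
  have hTcard : T.card = p := by
    rw [hT, Finset.card_image_of_injOn hinjOn, Finset.card_range]
  have hTsub : T.val ≤ F.roots := by
    rw [Multiset.le_iff_subset T.nodup]
    intro a ha
    rw [Finset.mem_val, hT, Finset.mem_image] at ha
    obtain ⟨i, _, rfl⟩ := ha
    exact hFroots i
  have hsplits : F.Splits := IsAlgClosed.splits F
  have hrootscard : Multiset.card F.roots = F.natDegree :=
    (splits_iff_card_roots).mp hsplits
  have hrootslep : Multiset.card F.roots ≤ p := by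
    rw [hrootscard, hFdeg]; exact hfdegle
  have hple : p ≤ Multiset.card F.roots := by
    calc p = T.card := hTcard.symm
      _ = Multiset.card T.val := rfl
      _ ≤ Multiset.card F.roots := Multiset.card_le_card hTsub
  have hrootseq : F.roots = T.val :=
    (Multiset.eq_of_le_of_card_le hTsub
      (show Multiset.card F.roots ≤ T.card from hTcard ▸ hrootslep)).symm
  have hfdegp : f.natDegree = p := le_antisymm hfdegle (by
    rw [← hFdeg, ← hrootscard]; exact hple)
  -- charpoly g = f
  have hcharf : Matrix.charpoly g = f := by
    obtain ⟨c, hc⟩ := hfdvdchar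
    have hc0 : c ≠ 0 := by
      intro h
      exact (Matrix.charpoly_monic g).ne_zero (by rw [hc, h, mul_zero])
    have hcdeg : c.natDegree = 0 := by
      have hnd := natDegree_mul hfmonic.ne_zero hc0
      rw [← hc, hchardeg, hfdegp] at hnd
      omega
    have hcC : c = C (c.coeff 0) := eq_C_of_natDegree_eq_zero hcdeg
    have hlead : (1 : K) = f.leadingCoeff * c.leadingCoeff := by
      have hmon := (Matrix.charpoly_monic g)
      rw [Monic, hc, leadingCoeff_mul] at hmon
      exact hmon.symm
    rw [hfmonic.leadingCoeff, one_mul] at hlead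
    rw [hc, hcC, leadingCoeff_C] at *
    rw [← hlead, map_one, mul_one]
  -- compute the constant coefficient two ways
  have hoddp : Odd p := hp.odd_of_ne_two (by omega)
  have hcoeff : f.coeff 0 = -1 := by
    have hds := Matrix.det_eq_sign_charpoly_coeff g
    rw [hdet, hcharf, Fintype.card_fin, hoddp.neg_one_pow] at hds
    linear_combination hds
  have hFcoeff : F.coeff 0 = -1 := by
    rw [hF, coeff_map, hcoeff, map_neg, map_one]
  have hprodroots : F.coeff 0 = (-1) ^ F.natDegree * F.roots.prod :=
    hsplits.coeff_zero_eq_prod_roots_of_monic hFmonic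
  have hTprod : F.roots.prod = ω ^ (∑ i ∈ Finset.range p, Q ^ i) := by
    rw [hrootseq]
    have hvp : T.val.prod = ∏ x ∈ T, x := by
      rw [Finset.prod_eq_multiset_prod, Multiset.map_id']
    rw [hvp, hT, Finset.prod_image hinjOn, Finset.prod_pow_eq_pow_sum]
  rw [hFcoeff, hTprod, hFdeg, hfdegp, hoddp.neg_one_pow] at hprodroots
  have hωs : ω ^ (∑ i ∈ Finset.range p, Q ^ i) = 1 := by
    linear_combination hprodroots
  exact hNT2 (hord ▸ orderOf_dvd_of_pow_eq_one hωs)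


open Matrix in
lemma sl_no_p2 {p : ℕ} (hp : p.Prime) (hp2 : 2 < p)
    {K : Type} [Field K] [Fintype K]
    (hfac : (Fintype.card K - 1).factorization p = 1)
    (y : SpecialLinearGroup (Fin p) K) (h : y ^ (p * p) = 1) : y ^ p = 1 := by
  have hm : ((y : Matrix (Fin p) (Fin p) K)) ^ (p * p) = 1 := by
    rw [← Matrix.SpecialLinearGroup.coe_pow, h, Matrix.SpecialLinearGroup.coe_one]
  have := no_torsion_p2 hp hp2 hfac (y : Matrix (Fin p) (Fin p) K) y.property hm
  exact Subtype.coe_injective (by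
    show ((y ^ p : SpecialLinearGroup (Fin p) K) : Matrix (Fin p) (Fin p) K)
      = ((1 : SpecialLinearGroup (Fin p) K) : Matrix (Fin p) (Fin p) K)
    rw [Matrix.SpecialLinearGroup.coe_pow, this, Matrix.SpecialLinearGroup.coe_one])

open Matrix in
lemma ord_coprime {p : ℕ} (hp : p.Prime) (hp2 : 2 < p)
    {K : Type} [Field K] [Fintype K]
    (hfac : (Fintype.card K - 1).factorization p = 1)
    (x : SpecialLinearGroup (Fin p) K) : ¬ p ∣ orderOf (x ^ p) := by
  classical
  intro hdvd
  set n := orderOf x with hn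
  have hn0 : 0 < n := orderOf_pos x
  rw [orderOf_pow] at hdvd
  by_cases hpn : p ∣ n
  · rw [Nat.gcd_comm, Nat.gcd_eq_left hpn] at hdvd
    obtain ⟨c, hc⟩ := hdvd
    have hnc : n = p * p * c := by
      have h5 := Nat.mul_div_cancel' hpn
      rw [hc] at h5
      rw [← h5]; ring
    have hc0 : 0 < c := by
      rcases Nat.eq_zero_or_pos c with h0 | h0
      · rw [h0, mul_zero] at hnc; omega
      · exact h0
    have hy : (x ^ c) ^ (p * p) = 1 := by
      rw [← pow_mul, mul_comm, ← hnc]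
      exact pow_orderOf_eq_one x
    have hyp := sl_no_p2 hp hp2 hfac (x ^ c) hy
    rw [← pow_mul] at hyp
    have hdvd2 : n ∣ c * p := orderOf_dvd_of_pow_eq_one hyp
    have hle : n ≤ c * p := Nat.le_of_dvd (by positivity) hdvd2
    nlinarith [hp.two_le]
  · rw [Nat.gcd_comm, Nat.Coprime.gcd_eq_one ((hp.coprime_iff_not_dvd).mpr hpn),
      Nat.div_one] at hdvd
    exact hpn hdvd

open Matrix in
lemma key_lemma {p : ℕ} (hp : p.Prime) (hp2 : 2 < p)
    {K : Type} [Field K] [Fintype K]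
    (hfac : (Fintype.card K - 1).factorization p = 1) :
    ∃ ζ : K, orderOf ζ = p ∧
      ∀ z : SpecialLinearGroup (Fin p) K,
        (z : Matrix (Fin p) (Fin p) K) = ζ • 1 →
        ∀ x y : SpecialLinearGroup (Fin p) K, z ≠ x ^ p * y ^ p := by
  classical
  haveI : Fact p.Prime := ⟨hp⟩
  have hcard2 : 2 ≤ Fintype.card K := Fintype.one_lt_card
  have hpd : p ∣ Fintype.card K - 1 := by
    have h := Nat.ordProj_dvd (Fintype.card K - 1) p
    rwa [hfac, pow_one] at h
  obtain ⟨u, hu⟩ := exists_prime_orderOf_dvd_card (G := Kˣ) p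
    (by rwa [Fintype.card_units])
  refine ⟨(u : K), ?_, ?_⟩
  · rw [← orderOf_units] at hu
    exact hu
  · intro z hz x y hxy
    have hζord : orderOf (u : K) = p := by rw [← orderOf_units] at hu; exact hu
    -- z is central
    have hcent : ∀ w : SpecialLinearGroup (Fin p) K, z * w = w * z := by
      intro w
      apply Subtype.coe_injective
      show ((z * w : SpecialLinearGroup (Fin p) K) : Matrix (Fin p) (Fin p) K)
        = ((w * z : SpecialLinearGroup (Fin p) K) : Matrix (Fin p) (Fin p) K)
      rw [Matrix.SpecialLinearGroup.coe_mul, Matrix.SpecialLinearGroup.coe_mul, hz,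
        Matrix.smul_mul, Matrix.mul_smul, one_mul, mul_one]
    -- orderOf z = p
    have hzp : z ^ p = 1 := by
      apply Subtype.coe_injective
      show ((z ^ p : SpecialLinearGroup (Fin p) K) : Matrix (Fin p) (Fin p) K)
        = ((1 : SpecialLinearGroup (Fin p) K) : Matrix (Fin p) (Fin p) K)
      rw [Matrix.SpecialLinearGroup.coe_pow, hz, Matrix.SpecialLinearGroup.coe_one, _root_.smul_pow,
        one_pow, ← hζord, pow_orderOf_eq_one, one_smul]
    have hz1 : z ≠ 1 := by
      intro h
      haveI : NeZero p := ⟨by omega⟩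
      have h0 : ((u : K) • (1 : Matrix (Fin p) (Fin p) K)) = 1 := by
        rw [← hz, h, Matrix.SpecialLinearGroup.coe_one]
      have h0' := congrFun (congrFun h0 0) 0
      rw [Matrix.smul_apply, Matrix.one_apply_eq, smul_eq_mul, mul_one] at h0'
      rw [h0', orderOf_one] at hζord
      omega
    have hordz : orderOf z = p := orderOf_eq_prime hzp hz1
    -- the two p-th powers commute
    have h2 : z * x ^ p = x ^ p * z := hcent (x ^ p)
    have h3 : x ^ p * (y ^ p * x ^ p) = x ^ p * z := by
      rw [← mul_assoc, ← hxy, h2]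
    have h4 : y ^ p * x ^ p = z := mul_left_cancel h3
    have hcomm : Commute (x ^ p) (y ^ p) := by
      show x ^ p * y ^ p = y ^ p * x ^ p
      rw [h4, hxy]
    have hlcm : p ∣ Nat.lcm (orderOf (x ^ p)) (orderOf (y ^ p)) := by
      have h5 := Commute.orderOf_mul_dvd_lcm hcomm
      rw [← hxy, hordz] at h5
      exact h5
    have hdm : p ∣ orderOf (x ^ p) * orderOf (y ^ p) :=
      hlcm.trans (Nat.lcm_dvd_mul _ _)
    rcases (Nat.Prime.dvd_mul hp).mp hdm with h | h
    · exact ord_coprime hp hp2 hfac x h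
    · exact ord_coprime hp hp2 hfac y h

end Aux

theorem stmt10 (q p : ℕ) (hq : IsPrimePow q) (hp : p.Prime) (hp2 : 2 < p) :
    -- the case ε = +1: the p-part of q - 1 equals p
    ((q - 1).factorization p = 1 →
      ∀ (F : Type) [Field F] [Fintype F], Fintype.card F = q →
        ¬ Function.Surjective (fun xy :
            Matrix.SpecialLinearGroup (Fin p) F × Matrix.SpecialLinearGroup (Fin p) F =>
              xy.1 ^ p * xy.2 ^ p)) ∧
    -- the case ε = -1: the p-part of q + 1 equals p
    ((q + 1).factorization p = 1 →
      ∀ (K : Type) [Field K] [Fintype K], Fintype.card K = q ^ 2 →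
        ¬ ∀ g ∈ suSet p q K, ∃ x ∈ suSet p q K, ∃ y ∈ suSet p q K,
          g = x ^ p * y ^ p) := by
  have hq2 : 2 ≤ q := hq.two_le
  constructor
  · intro hfac F _ _ hcard hsurj
    classical
    have hfac' : (Fintype.card F - 1).factorization p = 1 := by rw [hcard]; exact hfac
    obtain ⟨ζ, hζ, hkey⟩ := key_lemma hp hp2 hfac'
    have hζp : ζ ^ p = 1 := by rw [← hζ]; exact pow_orderOf_eq_one ζ
    have hdet : (ζ • (1 : Matrix (Fin p) (Fin p) F)).det = 1 := by
      rw [Matrix.det_smul, Matrix.det_one, Fintype.card_fin, hζp, mul_one]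
    obtain ⟨xy, hxy⟩ := hsurj ⟨ζ • 1, hdet⟩
    exact hkey ⟨ζ • 1, hdet⟩ rfl xy.1 xy.2 hxy.symm
  · intro hfac K _ _ hcard hforall
    classical
    have hq10 : q + 1 ≠ 0 := by omega
    have hpq1 : p ∣ q + 1 := by
      have h := Nat.ordProj_dvd (q + 1) p
      rwa [hfac, pow_one] at h
    have hpqm : ¬ p ∣ q - 1 := by
      intro h
      have h2 : p ∣ (q + 1) - (q - 1) := Nat.dvd_sub hpq1 h
      rw [show (q + 1) - (q - 1) = 2 from by omega] at h2
      have := Nat.le_of_dvd (by norm_num) h2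
      omega
    have hfac' : (Fintype.card K - 1).factorization p = 1 := by
      rw [hcard]
      obtain ⟨n, rfl⟩ : ∃ n, q = n + 1 := ⟨q - 1, by omega⟩
      have hsq : (n + 1) ^ 2 = n * (n + 2) + 1 := by ring
      rw [hsq, Nat.add_sub_cancel,
        show n * (n + 2) = ((n + 1) - 1) * ((n + 1) + 1) from by simp,
        Nat.factorization_mul (by omega) (by omega)]
      rw [Finsupp.add_apply, Nat.factorization_eq_zero_of_not_dvd hpqm, hfac, zero_add]
    obtain ⟨ζ, hζ, hkey⟩ := key_lemma hp hp2 hfac'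
    have hζp : ζ ^ p = 1 := by rw [← hζ]; exact pow_orderOf_eq_one ζ
    have hζq1 : ζ ^ (q + 1) = 1 := by
      obtain ⟨c, hc⟩ := hpq1
      rw [hc, pow_mul, hζp, one_pow]
    have hdet : (ζ • (1 : Matrix (Fin p) (Fin p) K)).det = 1 := by
      rw [Matrix.det_smul, Matrix.det_one, Fintype.card_fin, hζp, mul_one]
    set z : Matrix.SpecialLinearGroup (Fin p) K := ⟨ζ • 1, hdet⟩ with hzdef
    have hmap : (ζ • (1 : Matrix (Fin p) (Fin p) K)).map (· ^ q) = ζ ^ q • 1 := by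
      ext i j
      by_cases hij : i = j
      · subst hij
        simp [Matrix.map_apply, Matrix.smul_apply, Matrix.one_apply_eq, mul_pow]
      · simp [Matrix.map_apply, Matrix.smul_apply, Matrix.one_apply_ne hij,
          zero_pow (show q ≠ 0 from by omega)]
    have hzSU : z ∈ suSet p q K := by
      show UnitaryMat q (z : Matrix (Fin p) (Fin p) K)
      show ((ζ • (1 : Matrix (Fin p) (Fin p) K)).map (· ^ q)).transpose * (ζ • 1) = 1
      rw [hmap, Matrix.transpose_smul, Matrix.transpose_one, Matrix.smul_mul, one_mul,
        smul_smul, ← pow_succ, hζq1, one_smul]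
    obtain ⟨x, hx, y, hy, hxy⟩ := hforall z hzSU
    exact hkey z rfl x y hxy
end

section
/- Let G be a finite quasisimple group and let p be a prime dividing the order of Z(G). Then there exists a positive integer a (depending on G) such that the map (x, y) ↦ x^{p^a} y^{p^a} from G × G to G is not surjective. -/
/-- A group is quasisimple if it is perfect and its quotient by its center is a
non-abelian simple group. -/
def IsQuasisimple (G : Type*) [Group G] : Prop :=
  commutator G = ⊤ ∧ IsSimpleGroup (G ⧸ Subgroup.center G) ∧
    ∃ a b : G ⧸ Subgroup.center G, a * b ≠ b * a

theorem stmt12 (G : Type) [Group G] [Fintype G] (hG : IsQuasisimple G)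
    (p : ℕ) (hp : p.Prime) (hpZ : p ∣ Nat.card (Subgroup.center G)) :
    ∃ a : ℕ, 0 < a ∧
      ¬ Function.Surjective (fun xy : G × G => xy.1 ^ p ^ a * xy.2 ^ p ^ a) := by
  classical
  set e := Monoid.exponent G with he_def
  have he : e ≠ 0 := Monoid.exponent_ne_zero_of_finite
  set k := e.factorization p with hk_def
  set m := e / p ^ k with hm_def
  have hmpos : 0 < m := Nat.ordCompl_pos p he
  have hm : ¬ p ∣ m := Nat.not_dvd_ordCompl hp he
  have hem : e = p ^ k * m := (Nat.ordProj_mul_ordCompl_eq_self e p).symm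
  set t := m.totient with ht_def
  have ht : 0 < t := Nat.totient_pos.mpr hmpos
  refine ⟨(k + 1) * t, by positivity, ?_⟩
  -- a central element of order p
  have : Fact p.Prime := ⟨hp⟩
  obtain ⟨z, hz⟩ := exists_prime_orderOf_dvd_card (G := Subgroup.center G) p
    (by simpa [Nat.card_eq_fintype_card] using hpZ)
  set g : G := (z : G) with hg_def
  have hgord : orderOf g = p := by
    rw [hg_def, Subgroup.orderOf_coe, hz]
  have hgc : ∀ w : G, Commute w g := fun w => (z.2.comm w).symm
  -- exponent divides p ^ a * m
  have hdvd : e ∣ p ^ ((k + 1) * t) * m := by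
    rw [hem]
    exact mul_dvd_mul (pow_dvd_pow p (by nlinarith)) dvd_rfl
  have hpow : ∀ x : G, (x ^ p ^ ((k + 1) * t)) ^ m = 1 := by
    intro x
    rw [← pow_mul]
    obtain ⟨c, hc⟩ := hdvd
    rw [hc, pow_mul, Monoid.pow_exponent_eq_one, one_pow]
  intro hsurj
  obtain ⟨⟨x, y⟩, hxy⟩ := hsurj g
  simp only at hxy
  have hgm : g ^ m = 1 := by
    have h1 : (y ^ p ^ ((k + 1) * t)) ^ m = 1 := hpow y
    have hy : y ^ p ^ ((k + 1) * t) = (x ^ p ^ ((k + 1) * t))⁻¹ * g := by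
      rw [← hxy]; group
    rw [hy, (hgc _).inv_left.mul_pow, ← inv_pow, hpow x⁻¹, one_mul] at h1
    exact h1
  have : p ∣ m := hgord ▸ orderOf_dvd_of_pow_eq_one hgm
  exact hm this
end

section
/- Suppose n ≡ 3 (mod 9), ε = ±1, and q is a prime power with q ≡ 3 + ε (mod 9). Then the map (x, y) ↦ x^9 y^9 from SL^ε_n(q) × SL^ε_n(q) to SL^ε_n(q) is not surjective. -/
open Polynomial Module

section helpers

variable {F : Type*} [Field F]

/-- Restriction of an endomorphism commutes with polynomial evaluation. -/
lemma aeval_restrict_apply {V : Type*} [AddCommGroup V] [Module F V]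
    (f : Module.End F V) {p : Submodule F V} (h : ∀ x ∈ p, f x ∈ p) (q : F[X]) (w : p) :
    ((Polynomial.aeval (f.restrict h) q) w : V) = (Polynomial.aeval f q) (w : V) := by
  induction q using Polynomial.induction_on' with
  | add r s hr hs =>
      simp only [map_add, LinearMap.add_apply, Submodule.coe_add, hr, hs]
  | monomial i c =>
      simp only [aeval_monomial, Module.End.mul_apply, Module.algebraMap_end_apply,
        SetLike.val_smul]
      congr 1
      rw [Module.End.pow_restrict, LinearMap.restrict_apply]

/-- dimension of the kernel of `(aeval f) (p*q)` for coprime `p`, `q`. -/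
lemma ker_aeval_coprime {V : Type*} [AddCommGroup V] [Module F V] [FiniteDimensional F V]
    (f : Module.End F V) {p q : F[X]} (h : IsCoprime p q) :
    finrank F (LinearMap.ker (Polynomial.aeval f (p * q))) =
      finrank F (LinearMap.ker (Polynomial.aeval f p)) +
        finrank F (LinearMap.ker (Polynomial.aeval f q)) := by
  obtain ⟨u, v, huv⟩ := h
  have key : ∀ r s : F[X], ∀ x : V, (Polynomial.aeval f r) x = 0 →
      (Polynomial.aeval f (s * r)) x = 0 := by
    intro r s x hx
    rw [_root_.map_mul, Module.End.mul_apply, hx, map_zero]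
  have hdec : ∀ x : V, x = (Polynomial.aeval f (u * p)) x + (Polynomial.aeval f (v * q)) x := by
    intro x
    have := congrArg (fun r => (Polynomial.aeval f r) x) huv
    simpa only [map_add, map_one, LinearMap.add_apply, Module.End.one_apply] using this.symm
  have hsup : LinearMap.ker (Polynomial.aeval f (p * q)) =
      LinearMap.ker (Polynomial.aeval f p) ⊔ LinearMap.ker (Polynomial.aeval f q) := by
    apply le_antisymm
    · intro x hx
      rw [LinearMap.mem_ker] at hx
      have h1 : (Polynomial.aeval f (u * p)) x ∈ LinearMap.ker (Polynomial.aeval f q) := by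
        rw [LinearMap.mem_ker, ← Module.End.mul_apply, ← _root_.map_mul]
        have hq : q * (u * p) = u * (p * q) := by ring
        rw [hq, _root_.map_mul, Module.End.mul_apply, hx, map_zero]
      have h2 : (Polynomial.aeval f (v * q)) x ∈ LinearMap.ker (Polynomial.aeval f p) := by
        rw [LinearMap.mem_ker, ← Module.End.mul_apply, ← _root_.map_mul]
        have hp : p * (v * q) = v * (p * q) := by ring
        rw [hp, _root_.map_mul, Module.End.mul_apply, hx, map_zero]
      rw [show x = (Polynomial.aeval f (v * q)) x + (Polynomial.aeval f (u * p)) x by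
        rw [add_comm]; exact hdec x]
      exact Submodule.add_mem_sup h2 h1
    · apply sup_le
      · intro x hx
        rw [LinearMap.mem_ker] at hx ⊢
        rw [mul_comm]
        exact key p q x hx
      · intro x hx
        rw [LinearMap.mem_ker] at hx ⊢
        exact key q p x hx
  have hinf : LinearMap.ker (Polynomial.aeval f p) ⊓ LinearMap.ker (Polynomial.aeval f q) = ⊥ := by
    rw [Submodule.eq_bot_iff]
    rintro x ⟨hx1, hx2⟩
    rw [SetLike.mem_coe, LinearMap.mem_ker] at hx1 hx2
    rw [hdec x, _root_.map_mul, _root_.map_mul, Module.End.mul_apply, Module.End.mul_apply,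
      hx1, hx2, map_zero, map_zero, add_zero]
  have hfr := Submodule.finrank_sup_add_finrank_inf_eq
    (LinearMap.ker (Polynomial.aeval f p)) (LinearMap.ker (Polynomial.aeval f q))
  rw [hinf, finrank_bot, add_zero] at hfr
  rw [hsup, hfr]

/-- For an irreducible polynomial `P`, the dimension of `ker (P(f))` is divisible by `deg P`. -/
lemma natDegree_dvd_finrank_ker_aeval {V : Type*} [AddCommGroup V] [Module F V]
    (f : Module.End F V) (P : F[X]) (hP : Irreducible P) :
    P.natDegree ∣ finrank F (LinearMap.ker (Polynomial.aeval f P)) := by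
  classical
  set W := LinearMap.ker (Polynomial.aeval f P) with hW
  have hinv : ∀ x ∈ W, f x ∈ W := by
    intro x hx
    rw [hW, LinearMap.mem_ker] at hx ⊢
    have h1 : Polynomial.aeval f (P * X) = Polynomial.aeval f P * f := by
      rw [_root_.map_mul, Polynomial.aeval_X]
    have h2 : Polynomial.aeval f (X * P) = f * Polynomial.aeval f P := by
      rw [_root_.map_mul, Polynomial.aeval_X]
    have hcomm : Polynomial.aeval f P * f = f * Polynomial.aeval f P := by
      rw [← h1, ← h2, mul_comm P X]
    calc (Polynomial.aeval f P) (f x) = (Polynomial.aeval f P * f) x := rfl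
      _ = (f * Polynomial.aeval f P) x := by rw [hcomm]
      _ = f ((Polynomial.aeval f P) x) := rfl
      _ = 0 := by rw [hx, map_zero]
  set g : Module.End F W := f.restrict hinv with hg
  have hgP : Polynomial.aeval g P = 0 := by
    apply LinearMap.ext
    intro w
    apply Subtype.ext
    rw [aeval_restrict_apply f hinv P w]
    simpa using w.2
  haveI : Fact (Irreducible P) := ⟨hP⟩
  let E := AdjoinRoot P
  have hψvanish : ∀ b ∈ Ideal.span {P}, (Polynomial.aeval g (R := F)).toRingHom b = 0 := by
    intro b hb
    obtain ⟨c, rfl⟩ := Ideal.mem_span_singleton'.mp hb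
    simp only [AlgHom.toRingHom_eq_coe, RingHom.coe_coe, _root_.map_mul, hgP, mul_zero]
  let ψ : E →+* Module.End F W :=
    Ideal.Quotient.lift (Ideal.span {P}) (Polynomial.aeval g (R := F)).toRingHom hψvanish
  have hψmk : ∀ r : F[X], ψ (AdjoinRoot.mk P r) = Polynomial.aeval g r := fun r => rfl
  letI : Module E W := Module.compHom W ψ
  have hsmul : ∀ (e : E) (w : W), e • w = ψ e w := fun _ _ => rfl
  letI : IsScalarTower F E W := by
    constructor
    intro c e w
    induction e using AdjoinRoot.induction_on with
    | ih r =>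
      rw [hsmul, hsmul, AdjoinRoot.smul_mk, hψmk, hψmk, Polynomial.smul_eq_C_mul,
        _root_.map_mul, Module.End.mul_apply, Polynomial.aeval_C, Module.algebraMap_end_apply]
  have htower : finrank F E * finrank E W = finrank F W := Module.finrank_mul_finrank F E W
  have hE : finrank F E = P.natDegree := by
    rw [(AdjoinRoot.powerBasis hP.ne_zero).finrank]
    rfl
  rw [← htower, hE]
  exact Dvd.intro _ rfl

/-- coprimality of `X^m - c` and `X^m - d` for distinct `c`, `d`. -/
lemma isCoprime_X_pow_sub (m : ℕ) {c d : F} (h : c ≠ d) :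
    IsCoprime ((X : F[X]) ^ m - C c) ((X : F[X]) ^ m - C d) := by
  have h0 : d - c ≠ 0 := sub_ne_zero_of_ne (Ne.symm h)
  refine ⟨C (d - c)⁻¹, -C (d - c)⁻¹, ?_⟩
  have key : C (d - c)⁻¹ * ((X : F[X]) ^ m - C c) + -C (d - c)⁻¹ * ((X : F[X]) ^ m - C d)
      = C (d - c)⁻¹ * C (d - c) := by
    rw [map_sub C d c]
    ring
  rw [key, ← _root_.map_mul, inv_mul_cancel₀ h0, map_one]

/-- The key cubing factorization. -/
lemma cube_factor (m : ℕ) {ω : F} (hs : ω ^ 2 + ω + 1 = 0) (h3 : ω ^ 3 = 1) :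
    ((X : F[X]) ^ m - C 1) * (((X : F[X]) ^ m - C ω) * ((X : F[X]) ^ m - C (ω ^ 2)))
      = (X : F[X]) ^ (m * 3) - C 1 := by
  have hc3 : (C ω : F[X]) ^ 3 = 1 := by rw [← map_pow, h3, map_one]
  have hcs : (C ω : F[X]) ^ 2 + C ω + 1 = 0 := by
    have := congrArg (C : F →+* F[X]) hs
    simpa using this
  rw [pow_mul, map_pow C ω 2, map_one]
  linear_combination (((X : F[X]) ^ m) - ((X : F[X]) ^ m) ^ 2) * hcs
    + (((X : F[X]) ^ m) - 1) * hc3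

/-- kernel of `u * h` equals the kernel of `h` when `u` is a unit of the endomorphism ring. -/
lemma ker_unit_mul {V : Type*} [AddCommGroup V] [Module F V]
    {u h : Module.End F V} (hu : IsUnit u) :
    LinearMap.ker (u * h) = LinearMap.ker h := by
  obtain ⟨w, hw⟩ := hu
  ext x
  simp only [LinearMap.mem_ker, Module.End.mul_apply]
  constructor
  · intro hx
    have : ((w⁻¹ : (Module.End F V)ˣ) : Module.End F V) (u (h x)) = 0 := by rw [hx, map_zero]
    rw [← Module.End.mul_apply, ← hw, Units.inv_mul, Module.End.one_apply] at this
    exact this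
  · intro hx
    rw [hx, map_zero]

end helpers

section keylemma

variable {F : Type*} [Field F] [Fintype F]

lemma cube_ne_of_card {c : F} (hF : Fintype.card F % 9 = 4) (hc3 : c ^ 3 = 1) (hc : c ≠ 1) :
    ∀ b : F, b ^ 3 ≠ c := by
  classical
  intro b hb
  have hb0 : b ≠ 0 := by
    intro h
    rw [h] at hb
    have : c = 0 := by rw [← hb]; norm_num
    rw [this] at hc3
    norm_num at hc3
  set u : Fˣ := Units.mk0 b hb0 with hu
  have hu9 : u ^ 9 = 1 := by
    apply Units.ext
    push_cast [hu]
    calc b ^ 9 = (b ^ 3) ^ 3 := by ring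
      _ = 1 := by rw [hb, hc3]
  have hd9 : orderOf u ∣ 9 := orderOf_dvd_of_pow_eq_one hu9
  have hdle : orderOf u ≤ 9 := Nat.le_of_dvd (by norm_num) hd9
  have hdpos : 0 < orderOf u := orderOf_pos u
  have hu3 : u ^ 3 ≠ 1 := by
    intro h
    apply hc
    have hval : (b : F) ^ 3 = 1 := by
      have := congrArg Units.val h
      push_cast [hu] at this
      exact this
    rw [← hb]
    exact hval
  have hcases : orderOf u = 1 ∨ orderOf u = 3 ∨ orderOf u = 9 := by
    interval_cases h : orderOf u <;> revert hd9 <;> decide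
  have hd : orderOf u = 9 := by
    rcases hcases with h | h | h
    · exfalso
      apply hu3
      rw [orderOf_eq_one_iff.mp h, one_pow]
    · exfalso
      apply hu3
      rw [← h]
      exact pow_orderOf_eq_one u
    · exact h
  have hcard : (9 : ℕ) ∣ Fintype.card Fˣ := hd ▸ orderOf_dvd_card
  rw [Fintype.card_units] at hcard
  have h2 : 2 ≤ Fintype.card F := Fintype.one_lt_card
  omega

lemma div9 {V : Type*} [AddCommGroup V] [Module F V] (f : Module.End F V) (c : F)
    (hc : Irreducible ((X : F[X]) ^ 9 - C c)) :
    9 ∣ finrank F (LinearMap.ker (f ^ 9 - c • 1)) := by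
  have he : f ^ 9 - c • 1 = Polynomial.aeval f ((X : F[X]) ^ 9 - C c) := by
    simp [Algebra.algebraMap_eq_smul_one]
  have hdeg : ((X : F[X]) ^ 9 - C c).natDegree = 9 := by
    simpa using Polynomial.natDegree_X_pow_sub_C (n := 9) (a := c)
  have := natDegree_dvd_finrank_ker_aeval f _ hc
  rw [hdeg] at this
  rw [he]
  exact this

lemma keylemma {n : ℕ} (hF : Fintype.card F % 9 = 4) (hn : n % 9 = 3)
    {ω : F} (hω3 : ω ^ 3 = 1) (hω : ω ≠ 1) {a : ℕ} (ha : 2 ≤ a)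
    {S T : Matrix (Fin n) (Fin n) F} (hS : S ^ 3 ^ a = 1) (hST : S ^ 9 * T ^ 9 = ω • 1) :
    False := by
  classical
  have hω0 : ω ≠ 0 := by
    intro h
    rw [h] at hω3
    norm_num at hω3
  have hω2 : ω ^ 2 ≠ 1 := by
    intro h
    apply hω
    calc ω = ω ^ 2 * ω := by rw [h, one_mul]
      _ = ω ^ 3 := by ring
      _ = 1 := hω3
  have hωω2 : ω ≠ ω ^ 2 := by
    intro h
    apply hω2
    calc ω ^ 2 = ω * ω := sq ω
      _ = ω * ω ^ 2 := by rw [← h]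
      _ = ω ^ 3 := by ring
      _ = 1 := hω3
  have hs0 : ω ^ 2 + ω + 1 = 0 := by
    have hfac : (ω - 1) * (ω ^ 2 + ω + 1) = 0 := by
      have : (ω - 1) * (ω ^ 2 + ω + 1) = ω ^ 3 - 1 := by ring
      rw [this, hω3, sub_self]
    rcases mul_eq_zero.mp hfac with h | h
    · exact absurd (sub_eq_zero.mp h) hω
    · exact h
  have hω23 : (ω ^ 2) ^ 3 = 1 := by
    calc (ω ^ 2) ^ 3 = (ω ^ 3) ^ 2 := by ring
      _ = 1 := by rw [hω3, one_pow]
  have hirr : ∀ c : F, (∀ b : F, b ^ 3 ≠ c) → Irreducible ((X : F[X]) ^ 9 - C c) := by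
    intro c h3
    have h9 : (9 : ℕ) = 3 ^ 2 := by norm_num
    rw [h9]
    exact X_pow_sub_C_irreducible_of_prime_pow Nat.prime_three (by norm_num) 2 h3
  have hirr1 := hirr ω (cube_ne_of_card hF hω3 hω)
  have hirr2 := hirr (ω ^ 2) (cube_ne_of_card hF hω23 hω2)
  -- move to endomorphisms
  set f : Module.End F (Fin n → F) := Matrix.toLinAlgEquiv' S with hf
  set g : Module.End F (Fin n → F) := Matrix.toLinAlgEquiv' T with hg
  have hfS : f ^ 3 ^ a = 1 := by
    rw [hf, ← map_pow, hS, map_one]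
  have hfg : f ^ 9 * g ^ 9 = ω • 1 := by
    rw [hf, hg, ← map_pow, ← map_pow, ← _root_.map_mul, hST]
    have h1 : (ω • (1 : Matrix (Fin n) (Fin n) F)) = algebraMap F (Matrix (Fin n) (Fin n) F) ω := by
      rw [Algebra.algebraMap_eq_smul_one]
    rw [h1, AlgEquiv.commutes, Algebra.algebraMap_eq_smul_one]
  -- S^9 (and hence f^9) is invertible
  have h9le : (9 : ℕ) ≤ 3 ^ a := by
    calc (9 : ℕ) = 3 ^ 2 := by norm_num
      _ ≤ 3 ^ a := Nat.pow_le_pow_right (by norm_num) ha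
  have hunit : IsUnit (f ^ 9) := by
    apply isUnit_iff_exists.mpr
    refine ⟨f ^ (3 ^ a - 9), ?_, ?_⟩
    · rw [← pow_add]
      rw [show 9 + (3 ^ a - 9) = 3 ^ a by omega]
      exact hfS
    · rw [← pow_add]
      rw [show 3 ^ a - 9 + 9 = 3 ^ a by omega]
      exact hfS
  -- base case: dim ker (f^9 - 1) = dim ker (g^9 - ω) which is divisible by 9
  have hbase : 9 ∣ finrank F (LinearMap.ker ((f ^ 3 ^ 2 : Module.End F (Fin n → F)) - 1)) := by
    have hid : f ^ 9 * (g ^ 9 - ω • 1) = (-ω) • (f ^ 9 - 1) := by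
      rw [mul_sub, hfg, mul_smul_comm, mul_one]
      module
    have hker1 : LinearMap.ker (f ^ 9 * (g ^ 9 - ω • 1)) = LinearMap.ker (g ^ 9 - ω • 1) :=
      ker_unit_mul hunit
    have hker2 : LinearMap.ker ((-ω) • (f ^ 9 - 1) : Module.End F (Fin n → F))
        = LinearMap.ker (f ^ 9 - 1) :=
      LinearMap.ker_smul _ _ (neg_ne_zero.mpr hω0)
    have hkk : LinearMap.ker ((f ^ 9 : Module.End F (Fin n → F)) - 1)
        = LinearMap.ker (g ^ 9 - ω • 1) := by
      rw [← hker1, hid, hker2]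
    rw [show (3 : ℕ) ^ 2 = 9 by norm_num, hkk]
    exact div9 g ω hirr1
  -- inductive step
  have hstep : ∀ i : ℕ, 2 ≤ i →
      9 ∣ finrank F (LinearMap.ker ((f ^ 3 ^ i : Module.End F (Fin n → F)) - 1)) →
      9 ∣ finrank F (LinearMap.ker ((f ^ 3 ^ (i + 1) : Module.End F (Fin n → F)) - 1)) := by
    intro i hi IH
    have hcop1 : IsCoprime ((X : F[X]) ^ 3 ^ i - C 1) (((X : F[X]) ^ 3 ^ i - C ω)
        * ((X : F[X]) ^ 3 ^ i - C (ω ^ 2))) :=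
      (isCoprime_X_pow_sub _ (Ne.symm hω)).mul_right (isCoprime_X_pow_sub _ (Ne.symm hω2))
    have hcop2 : IsCoprime ((X : F[X]) ^ 3 ^ i - C ω) ((X : F[X]) ^ 3 ^ i - C (ω ^ 2)) :=
      isCoprime_X_pow_sub _ hωω2
    have hpoly := cube_factor (F := F) (3 ^ i) hs0 hω3
    have haev : ∀ (mm : ℕ) (c : F),
        Polynomial.aeval f ((X : F[X]) ^ mm - C c) = f ^ mm - c • 1 := by
      intro mm c
      simp [Algebra.algebraMap_eq_smul_one]
    have hsplit : finrank F (LinearMap.ker ((f ^ 3 ^ (i + 1) : Module.End F (Fin n → F)) - 1))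
        = finrank F (LinearMap.ker ((f ^ 3 ^ i : Module.End F (Fin n → F)) - 1))
          + (finrank F (LinearMap.ker ((f ^ 3 ^ i : Module.End F (Fin n → F)) - ω • 1))
          + finrank F (LinearMap.ker ((f ^ 3 ^ i : Module.End F (Fin n → F)) - ω ^ 2 • 1))) := by
    -- dimension of ker of aeval of the product
      have e0 : f ^ 3 ^ (i + 1) - 1
          = Polynomial.aeval f (((X : F[X]) ^ 3 ^ i - C 1) * (((X : F[X]) ^ 3 ^ i - C ω)
            * ((X : F[X]) ^ 3 ^ i - C (ω ^ 2)))) := by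
        rw [hpoly]
        have h31 : (3 : ℕ) ^ i * 3 = 3 ^ (i + 1) := (pow_succ 3 i).symm
        rw [h31, haev (3 ^ (i + 1)) 1, one_smul]
      rw [e0, ker_aeval_coprime f hcop1, ker_aeval_coprime f hcop2, haev (3 ^ i) 1,
        haev (3 ^ i) ω, haev (3 ^ i) (ω ^ 2), one_smul]
    rw [hsplit]
    have hpow : ∀ c : F, Irreducible ((X : F[X]) ^ 9 - C c) →
        9 ∣ finrank F (LinearMap.ker ((f ^ 3 ^ i : Module.End F (Fin n → F)) - c • 1)) := by
      intro c hcirr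
      have hexp : (3 : ℕ) ^ i = 3 ^ (i - 2) * 9 := by
        have : (9 : ℕ) = 3 ^ 2 := by norm_num
        rw [this, ← pow_add]
        congr 1
        omega
      have : (f ^ 3 ^ i : Module.End F (Fin n → F)) = (f ^ 3 ^ (i - 2)) ^ 9 := by
        rw [hexp, pow_mul]
      rw [this]
      exact div9 (f ^ 3 ^ (i - 2)) c hcirr
    exact Nat.dvd_add IH (Nat.dvd_add (hpow ω hirr1) (hpow (ω ^ 2) hirr2))
  -- induction from 2 to a
  have hmain : ∀ i : ℕ, 2 ≤ i →
      9 ∣ finrank F (LinearMap.ker ((f ^ 3 ^ i : Module.End F (Fin n → F)) - 1)) := by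
    intro i hi
    induction i, hi using Nat.le_induction with
    | base => exact hbase
    | succ i hi IH => exact hstep i hi IH
  have hfinal := hmain a ha
  rw [hfS, sub_self] at hfinal
  rw [LinearMap.ker_zero, finrank_top] at hfinal
  rw [Module.finrank_pi, Fintype.card_fin] at hfinal
  omega

end keylemma

section reduction

lemma det_omega_smul_one {F : Type*} [Field F] {n : ℕ} {ω : F} (hω3 : ω ^ 3 = 1)
    (h3n : 3 ∣ n) : (ω • (1 : Matrix (Fin n) (Fin n) F)).det = 1 := by
  obtain ⟨t, rfl⟩ := h3n
  rw [Matrix.det_smul, Matrix.det_one, mul_one, Fintype.card_fin, pow_mul, hω3, one_pow]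

lemma reduction {F : Type*} [Field F] [Fintype F] [DecidableEq F] {n : ℕ}
    (hF : Fintype.card F % 9 = 4) (hn : n % 9 = 3) {ω : F} (hω3 : ω ^ 3 = 1) (hω : ω ≠ 1)
    (x y z : Matrix.SpecialLinearGroup (Fin n) F)
    (hzv : (z : Matrix (Fin n) (Fin n) F) = ω • 1)
    (hz : x ^ 9 * y ^ 9 = z) : False := by
  obtain ⟨c, hcdef⟩ : ∃ c, c = Fintype.card (Matrix.SpecialLinearGroup (Fin n) F) := ⟨_, rfl⟩
  have hc0 : c ≠ 0 := by rw [hcdef]; exact Fintype.card_ne_zero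
  have hxc : x ^ c = 1 := by rw [hcdef]; exact pow_card_eq_one
  have hyc : y ^ c = 1 := by rw [hcdef]; exact pow_card_eq_one
  obtain ⟨v, hvdef⟩ : ∃ v, v = c.factorization 3 := ⟨_, rfl⟩
  obtain ⟨m, hmdef⟩ : ∃ m, m = c / 3 ^ v := ⟨_, rfl⟩
  have hvm : 3 ^ v * m = c := by
    rw [hmdef, hvdef]
    exact Nat.ordProj_mul_ordCompl_eq_self c 3
  have hm3 : ¬ (3 ∣ m) := by
    rw [hmdef, hvdef]
    exact Nat.not_dvd_ordCompl Nat.prime_three hc0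
  obtain ⟨a, hadef⟩ : ∃ a, a = v + 2 := ⟨_, rfl⟩
  have ha : 2 ≤ a := by omega
  have hco : Nat.Coprime m (3 ^ a) :=
    (((Nat.Prime.coprime_iff_not_dvd Nat.prime_three).mpr hm3).symm).pow_right a
  obtain ⟨k, hk1, hk2⟩ := Nat.chineseRemainder hco 0 1
  have hmk : m ∣ k := by
    have h1 := hk1
    unfold Nat.ModEq at h1
    rw [Nat.zero_mod] at h1
    exact Nat.dvd_of_mod_eq_zero h1
  have hdvd : c ∣ k * 3 ^ a := by
    rw [← hvm, mul_comm k (3 ^ a)]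
    exact mul_dvd_mul (pow_dvd_pow 3 (by omega)) hmk
  have h3n : 3 ∣ n := by omega
  have hcen : ∀ g : Matrix.SpecialLinearGroup (Fin n) F, Commute g z := by
    intro g
    apply Subtype.ext
    rw [Matrix.SpecialLinearGroup.coe_mul, Matrix.SpecialLinearGroup.coe_mul, hzv,
      mul_smul_comm, smul_mul_assoc, mul_one, one_mul]
  have hz3 : z ^ 3 = 1 := by
    apply Subtype.ext
    rw [Matrix.SpecialLinearGroup.coe_pow, hzv, Matrix.SpecialLinearGroup.coe_one,
      _root_.smul_pow, one_pow, hω3, one_smul]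
  have hy9 : y ^ 9 = (x ^ 9)⁻¹ * z := by
    rw [← hz]
    group
  have hk3 : k % 3 = 1 := by
    have h3a : (3 : ℕ) ∣ 3 ^ a := dvd_pow_self 3 (by omega)
    have := Nat.ModEq.of_dvd h3a hk2
    simpa [Nat.ModEq] using this
  have hzk : z ^ k = z := by
    conv_lhs => rw [← Nat.div_add_mod k 3]
    rw [pow_add, pow_mul, hz3, one_pow, one_mul, hk3, pow_one]
  have hYX : (x ^ k) ^ 9 * (y ^ k) ^ 9 = z := by
    have h1 : (y ^ k) ^ 9 = ((x ^ 9)⁻¹) ^ k * z := by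
      rw [← pow_mul, mul_comm k 9, pow_mul, hy9, (hcen ((x ^ 9)⁻¹)).mul_pow, hzk]
    have hx' : (x ^ k) ^ 9 = (x ^ 9) ^ k := by
      rw [← pow_mul, ← pow_mul, mul_comm]
    rw [h1, hx', inv_pow, ← mul_assoc]
    simp
  have hxk1 : (x ^ k) ^ 3 ^ a = 1 := by
    obtain ⟨t, ht⟩ := hdvd
    rw [← pow_mul, ht, pow_mul, hxc, one_pow]
  have hS : ((x ^ k : Matrix.SpecialLinearGroup (Fin n) F) : Matrix (Fin n) (Fin n) F) ^ 3 ^ a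
      = 1 := by
    rw [← Matrix.SpecialLinearGroup.coe_pow, hxk1, Matrix.SpecialLinearGroup.coe_one]
  have hST : ((x ^ k : Matrix.SpecialLinearGroup (Fin n) F) : Matrix (Fin n) (Fin n) F) ^ 9
      * ((y ^ k : Matrix.SpecialLinearGroup (Fin n) F) : Matrix (Fin n) (Fin n) F) ^ 9
      = ω • 1 := by
    rw [← Matrix.SpecialLinearGroup.coe_pow, ← Matrix.SpecialLinearGroup.coe_pow,
      ← Matrix.SpecialLinearGroup.coe_mul, hYX, hzv]
  exact keylemma hF hn hω3 hω ha hS hST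

/-- Existence of a primitive cube root of unity. -/
lemma exists_omega {F : Type*} [Field F] [Fintype F] (h3 : Fintype.card F % 3 = 1) :
    ∃ ω : F, ω ^ 3 = 1 ∧ ω ≠ 1 := by
  classical
  haveI : Fact (Nat.Prime 3) := ⟨Nat.prime_three⟩
  have h2 : 2 ≤ Fintype.card F := Fintype.one_lt_card
  have hdvd : (3 : ℕ) ∣ Fintype.card Fˣ := by
    rw [Fintype.card_units]
    omega
  obtain ⟨u, hu⟩ := exists_prime_orderOf_dvd_card 3 hdvd
  refine ⟨(u : F), ?_, ?_⟩
  · have h1 : u ^ 3 = 1 := by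
      rw [← hu]
      exact pow_orderOf_eq_one u
    calc ((u : F)) ^ 3 = ((u ^ 3 : Fˣ) : F) := by push_cast; ring
      _ = 1 := by rw [h1]; rfl
  · intro h
    have h1 : u = 1 := Units.ext h
    rw [h1, orderOf_one] at hu
    norm_num at hu

end reduction

theorem stmt14 (n q : ℕ) (hq : IsPrimePow q) (hn : n ≡ 3 [MOD 9]) :
    -- the case ε = +1: q ≡ 4 (mod 9)
    (q ≡ 4 [MOD 9] →
      ∀ (F : Type) [Field F] [Fintype F], Fintype.card F = q →
        ¬ Function.Surjective (fun xy :
            Matrix.SpecialLinearGroup (Fin n) F × Matrix.SpecialLinearGroup (Fin n) F =>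
              xy.1 ^ 9 * xy.2 ^ 9)) ∧
    -- the case ε = -1: q ≡ 2 (mod 9)
    (q ≡ 2 [MOD 9] →
      ∀ (K : Type) [Field K] [Fintype K], Fintype.card K = q ^ 2 →
        ¬ ∀ g ∈ suSet n q K, ∃ x ∈ suSet n q K, ∃ y ∈ suSet n q K,
          g = x ^ 9 * y ^ 9) := by
  have hn' : n % 9 = 3 := by
    have := hn
    unfold Nat.ModEq at this
    omega
  have h3n : (3 : ℕ) ∣ n := by omega
  constructor
  · intro hq4 F _ _ hcard hsurj
    classical
    have hF : Fintype.card F % 9 = 4 := by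
      have := hq4
      unfold Nat.ModEq at this
      omega
    obtain ⟨ω, hω3, hω⟩ := exists_omega (F := F) (by omega)
    obtain ⟨⟨x, y⟩, hxy⟩ := hsurj ⟨ω • 1, det_omega_smul_one hω3 h3n⟩
    simp only at hxy
    exact reduction hF hn' hω3 hω x y _ rfl hxy
  · intro hq2 K _ _ hcard H
    classical
    have hq2' : q % 9 = 2 := by
      have := hq2
      unfold Nat.ModEq at this
      omega
    have hF : Fintype.card K % 9 = 4 := by
      have hmul : q * q ≡ 2 * 2 [MOD 9] := Nat.ModEq.mul hq2 hq2
      unfold Nat.ModEq at hmul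
      rw [hcard, pow_two]
      omega
    obtain ⟨ω, hω3, hω⟩ := exists_omega (F := K) (by omega)
    have hzU : (⟨ω • 1, det_omega_smul_one hω3 h3n⟩ :
        Matrix.SpecialLinearGroup (Fin n) K) ∈ suSet n q K := by
      show UnitaryMat q (ω • (1 : Matrix (Fin n) (Fin n) K))
      unfold UnitaryMat
      have hq0 : q ≠ 0 := by omega
      have hmap : (ω • (1 : Matrix (Fin n) (Fin n) K)).map (· ^ q) = (ω ^ q) • 1 := by
        ext i j
        by_cases hij : i = j
        · simp [Matrix.map_apply, Matrix.one_apply, hij]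
        · simp [Matrix.map_apply, Matrix.one_apply, hij, zero_pow hq0]
      rw [hmap, Matrix.transpose_smul, Matrix.transpose_one, smul_mul_assoc, mul_smul_comm,
        mul_one, smul_smul, ← pow_succ]
      have h3q : (3 : ℕ) ∣ q + 1 := by omega
      obtain ⟨t, ht⟩ := h3q
      rw [ht, pow_mul, hω3, one_pow, one_smul]
    obtain ⟨x, hx, y, hy, hgeq⟩ := H _ hzU
    exact reduction hF hn' hω3 hω x y _ rfl hgeq.symm
end

section
/- Suppose n is an odd positive integer and q is a prime power with q ≡ 5 (mod 8). Then the map (x, y) ↦ x^8 y^8 from Sp_{2n}(q) × Sp_{2n}(q) to Sp_{2n}(q) is not surjective. -/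
set_option linter.unusedSectionVars false
set_option maxHeartbeats 1000000

lemma nt_binom (z : ℤ) (e : ℕ) : (z^2) ∣ (1 + z)^e - (1 + e * z) := by
  induction e with
  | zero => simp
  | succ e ih =>
    have h1 : (1 + z)^(e+1) - (1 + (e+1:ℕ) * z)
        = ((1 + z)^e - (1 + e * z)) * (1 + z) + (e * z) * z := by
      push_cast; ring
    rw [h1]
    exact dvd_add (ih.mul_right _) ⟨e, by ring⟩

lemma nt_two_pow (q : ℤ) (hq : (8:ℤ) ∣ q - 5) (k : ℕ) (hk : 1 ≤ k) :
    (2:ℤ)^(k+3) ∣ q^(2^k) - (1 + 2^(k+2)) := by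
  induction k with
  | zero => omega
  | succ k ih =>
    rcases Nat.lt_or_ge 1 (k+1) with h2 | h1
    · have hk' : 1 ≤ k := by omega
      have hd := ih hk'
      set a := q^(2^k) with ha
      set b : ℤ := 1 + 2^(k+2) with hb
      obtain ⟨c, hc⟩ := hd
      have hab : a = b + 2^(k+3) * c := by omega
      have h1 : a^2 - (1 + 2^((k+1)+2)) = 2^(k+4) * (2^(k+2)*c + 2^(k+2)*c^2 + c + 2^k) := by
        rw [hab, hb]; ring
      have key : (2:ℤ)^((k+1)+3) ∣ a^2 - (1 + 2^((k+1)+2)) := by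
        rw [h1]; exact ⟨_, rfl⟩
      have hq2 : q^(2^(k+1)) = a^2 := by rw [ha, ← pow_mul, ← pow_succ]
      rw [hq2]; exact key
    · have hk0 : k = 0 := by omega
      subst hk0
      obtain ⟨u, hu⟩ := hq
      have hqe : q = 5 + 8*u := by omega
      subst hqe
      exact ⟨1 + 5*u + 4*u^2, by ring⟩

lemma nt_odd_sq (q : ℤ) (hq : (8:ℤ) ∣ q - 5) : (8:ℤ) ∣ q^2 - 1 := by
  obtain ⟨u, hu⟩ := hq
  have : q = 5 + 8*u := by omega
  subst this
  exact ⟨3 + 10*u + 8*u^2, by ring⟩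

lemma nt_odd_pow (q : ℤ) (hq : (8:ℤ) ∣ q - 5) (e : ℕ) (he : Odd e) :
    (8:ℤ) ∣ q^e - 5 := by
  obtain ⟨f, hf⟩ := he
  subst hf
  induction f with
  | zero => simpa using hq
  | succ f ih =>
    have h1 : q^(2*(f+1)+1) - 5 = q^2 * (q^(2*f+1) - 5) + 5*(q^2 - 1) := by ring
    rw [h1]
    exact dvd_add (ih.mul_left _) ((nt_odd_sq q hq).mul_left 5)

lemma nt_main_s15 (q : ℤ) (hq : (8:ℤ) ∣ q - 5) (m d : ℕ) (hm : 4 ≤ m)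
    (h : (2:ℤ)^m ∣ q^d - 1) : 2^(m-2) ∣ d := by
  rcases Nat.eq_zero_or_pos d with rfl | hd
  · simp
  set k := d.factorization 2 with hk
  obtain ⟨e, he⟩ := Nat.ordProj_dvd d 2
  rw [← hk] at he
  have he_odd : Odd e := by
    rcases Nat.even_or_odd e with ⟨f, hf⟩ | hod
    · exfalso
      have h21 : 2^(k+1) ∣ d := ⟨f, by rw [he, hf]; ring⟩
      have := (Nat.Prime.pow_dvd_iff_le_factorization Nat.prime_two (by omega)).mp h21
      omega
    · exact hod
  rcases Nat.eq_zero_or_pos k with hk0 | hk1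
  · exfalso
    have hdo : Odd d := by rw [he, hk0]; simpa using he_odd
    have h5 := nt_odd_pow q hq d hdo
    have h8 : (8:ℤ) ∣ q^d - 1 := by
      refine dvd_trans ?_ h
      refine ⟨2^(m-3), ?_⟩
      rw [show (8:ℤ) = 2^3 by norm_num, ← pow_add]
      congr 1; omega
    omega
  · have hpow : q^d = (q^(2^k))^e := by rw [← pow_mul, ← he]
    obtain ⟨c, hc⟩ := nt_two_pow q hq k hk1
    set b : ℤ := 1 + 2^(k+2) with hb
    have hab : q^(2^k) = b + 2^(k+3) * c := by omega
    -- q^d - b^e divisible by 2^(k+3)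
    have h2 : (2:ℤ)^(k+3) ∣ q^d - b^e := by
      rw [hpow, hab]
      have := sub_dvd_pow_sub_pow (b + 2^(k+3)*c) b e
      have hdd : (b + 2^(k+3)*c) - b = 2^(k+3)*c := by ring
      rw [hdd] at this
      exact dvd_trans ⟨c, rfl⟩ this
    -- b^e ≡ 1 + e·2^(k+2) mod 2^(k+3); e odd so ≡ 1 + 2^(k+2)
    have h3 : (2:ℤ)^(k+3) ∣ b^e - (1 + e * 2^(k+2)) := by
      have hbin := nt_binom ((2:ℤ)^(k+2)) e
      have hsq : ((2:ℤ)^(k+2))^2 = 2^(k+3) * 2^(k+1) := by rw [← pow_add, ← pow_mul]; congr 1; omega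
      rw [hsq] at hbin
      exact dvd_trans (Dvd.intro _ rfl) hbin
    obtain ⟨f, hf⟩ := he_odd
    have h4 : (2:ℤ)^(k+3) ∣ (e:ℤ) * 2^(k+2) - 2^(k+2) := by
      refine ⟨f, ?_⟩
      have : (e:ℤ) = 2*f + 1 := by exact_mod_cast congrArg Nat.cast hf
      rw [this]; ring
    -- combine : q^d ≡ 1 + 2^(k+2) mod 2^(k+3)
    have h5 : (2:ℤ)^(k+3) ∣ q^d - (1 + 2^(k+2)) := by
      have : q^d - (1 + 2^(k+2)) = (q^d - b^e) + (b^e - (1 + e*2^(k+2))) + ((e:ℤ)*2^(k+2) - 2^(k+2)) := by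
        rw [hb]; ring
      rw [this]
      exact dvd_add (dvd_add h2 h3) h4
    -- if m ≥ k+3 then 2^(k+2) ≡ 0 mod 2^(k+3), contradiction
    have hmk : m ≤ k + 2 := by
      by_contra hcon
      have hm3 : k + 3 ≤ m := by omega
      have h6 : (2:ℤ)^(k+3) ∣ q^d - 1 := dvd_trans ⟨2^(m-(k+3)), by rw [← pow_add]; congr 1; omega⟩ h
      have h7 : (2:ℤ)^(k+3) ∣ 2^(k+2) := by
        have : (2:ℤ)^(k+2) = (q^d - 1) - (q^d - (1 + 2^(k+2))) := by ring
        rw [this]; exact dvd_sub h6 h5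
      have h8 : (2:ℤ)^(k+3) = 2 * 2^(k+2) := by ring
      have hpos : (0:ℤ) < 2^(k+2) := by positivity
      obtain ⟨w, hw⟩ := h7
      rw [h8] at hw
      have h10 : (2:ℤ)^(k+2) * 1 = 2^(k+2) * (2*w) := by linarith [hw]
      have := mul_left_cancel₀ (ne_of_gt hpos) h10
      omega
    refine dvd_trans (pow_dvd_pow 2 (by omega : m - 2 ≤ k)) ⟨e, he⟩

open Module

lemma orb_card_dvd {F V : Type*} [Field F] [Fintype F] [AddCommGroup V] [Module F V]
    [Fintype V] (h2 : (2:F) ≠ 0) (e : Module.End F V) (r : ℕ) (he : e ^ (2^r) = -1) :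
    2^(r+1) ∣ Fintype.card V - 1 := by
  classical
  rcases subsingleton_or_nontrivial V with hV | hV
  · have : Fintype.card V = 1 := Fintype.card_eq_one_iff.mpr ⟨0, fun v => Subsingleton.elim _ _⟩
    simp [this]
  have two_smul_ne : ∀ v : V, v ≠ 0 → -v ≠ v := by
    intro v hv hcon
    apply hv
    have h5 : v + v = 0 := by nth_rewrite 1 [← hcon]; abel
    have h4 : (2:F) • v = 0 := by rw [two_smul]; exact h5
    simpa [smul_eq_zero, h2] using h4
  have hne : (-1 : Module.End F V) ≠ 1 := by
    intro hcon
    obtain ⟨v, hv⟩ := exists_ne (0 : V)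
    have h3 : (-1 : Module.End F V) v = (1 : Module.End F V) v := by rw [hcon]
    simp only [LinearMap.neg_apply, Module.End.one_apply] at h3
    exact two_smul_ne v hv h3
  have hepow : e ^ (2^(r+1)) = 1 := by
    rw [pow_succ, pow_mul, he]; exact neg_one_sq
  have hpow_sub : 2^(r+1) - 1 + 1 = 2^(r+1) := by
    have := Nat.one_le_two_pow (n := r+1); omega
  have hunit1 : e * e ^ (2^(r+1) - 1) = 1 := by
    rw [← pow_succ', hpow_sub]; exact hepow
  have hunit2 : e ^ (2^(r+1) - 1) * e = 1 := by
    rw [← pow_succ, hpow_sub]; exact hepow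
  set U : (Module.End F V)ˣ := ⟨e, e ^ (2^(r+1) - 1), hunit1, hunit2⟩ with hU
  have hUr : U ^ (2^r) = -1 := by
    refine Units.ext ?_; rw [Units.val_pow_eq_pow_val]; simpa using he
  have hU1 : U ^ (2^(r+1)) = 1 := by
    refine Units.ext ?_; rw [Units.val_pow_eq_pow_val]; simpa using hepow
  haveI : Fact (Nat.Prime 2) := ⟨Nat.prime_two⟩
  have hord : orderOf U = 2^(r+1) :=
    orderOf_eq_prime_pow
      (by rw [hUr]; intro hcon; apply hne; simpa using congrArg Units.val hcon) hU1
  set H := Subgroup.zpowers U with hH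
  letI actH : MulAction H {v : V // v ≠ 0} :=
    { smul := fun g v => ⟨(g : (Module.End F V)ˣ) • (v : V), by
        intro hcon
        have h6 := congrArg (fun w => ((g : (Module.End F V)ˣ)⁻¹ : (Module.End F V)ˣ) • w) hcon
        simp only [inv_smul_smul, smul_zero] at h6
        exact v.2 h6⟩
      one_smul := fun v => Subtype.ext (by
        show (((1:H) : (Module.End F V)ˣ)) • (v:V) = (v:V)
        rw [OneMemClass.coe_one, one_smul])
      mul_smul := fun g g' v => Subtype.ext (by
        show ((g * g' : H) : (Module.End F V)ˣ) • (v:V) = _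
        push_cast
        rw [mul_smul]
        rfl) }
  have smul_coe : ∀ (g : H) (v : {v : V // v ≠ 0}),
      ((g • v : {v : V // v ≠ 0}) : V) = (((g : (Module.End F V)ˣ) : Module.End F V)) (v : V) :=
    fun g v => rfl
  -- stabilizers are trivial
  have hstab : ∀ v : {v : V // v ≠ 0}, MulAction.stabilizer H v = ⊥ := by
    intro v
    rw [Subgroup.eq_bot_iff_forall]
    intro g hgstab
    by_contra hgne
    set gu : (Module.End F V)ˣ := (g : (Module.End F V)ˣ) with hgu
    have hgune : gu ≠ 1 := by
      intro hcon; apply hgne; exact Subtype.ext hcon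
    have hfix : (gu : Module.End F V) (v : V) = (v : V) := by
      have := congrArg (Subtype.val) (hgstab : g • v = v)
      rwa [smul_coe] at this
    have hfixpow : ∀ m : ℕ, ((gu^m : (Module.End F V)ˣ) : Module.End F V) (v : V) = (v : V) := by
      intro m
      induction m with
      | zero => simp
      | succ m ih =>
        rw [pow_succ, Units.val_mul, Module.End.mul_apply, hfix, ih]
    have hdvd : orderOf gu ∣ 2^(r+1) := by
      rw [← hord]; exact orderOf_dvd_of_mem_zpowers g.2
    obtain ⟨t, ht, hto⟩ := (Nat.dvd_prime_pow Nat.prime_two).mp hdvd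
    have ht1 : 1 ≤ t := by
      rcases Nat.eq_zero_or_pos t with h0 | h1
      · exfalso; apply hgune
        have : orderOf gu = 1 := by rw [hto, h0, pow_zero]
        exact orderOf_eq_one_iff.mp this
      · exact h1
    set h := gu ^ (2^(t-1)) with hh
    have hh2 : h ^ 2 = 1 := by
      rw [hh, ← pow_mul]
      have : 2^(t-1) * 2 = 2^t := by
        rw [← pow_succ]; congr 1; omega
      rw [this, ← hto]; exact pow_orderOf_eq_one gu
    have hhne : h ≠ 1 := by
      apply pow_ne_one_of_lt_orderOf
      · positivity
      · rw [hto]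
        exact Nat.pow_lt_pow_right (by norm_num) (by omega)
    -- h ∈ zpowers U, h² = 1, h ≠ 1 ⇒ h = -1
    have hmem : h ∈ Subgroup.zpowers U := Subgroup.pow_mem _ g.2 _
    obtain ⟨j, hj⟩ := Subgroup.mem_zpowers_iff.mp hmem
    have hU2j : U ^ (2*j) = 1 := by
      rw [mul_comm, zpow_mul]
      norm_cast
      rw [hj]
      exact_mod_cast hh2
    have hdvd2 : (((2^(r+1) : ℕ)) : ℤ) ∣ 2*j := by
      have h9 : ((orderOf U : ℕ) : ℤ) ∣ 2*j := orderOf_dvd_iff_zpow_eq_one.mpr hU2j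
      rwa [hord] at h9
    obtain ⟨c, hc⟩ := hdvd2
    have hjc : j = 2^r * c := by
      have h7 : (((2^(r+1) : ℕ)) : ℤ) = 2 * 2^r := by push_cast; ring
      rw [h7] at hc
      have hc' : 2*j = 2*(2^r*c) := by rw [hc, mul_assoc]
      omega
    have hhval : h = (U^(2^r : ℕ))^c := by
      rw [← hj, hjc, ← zpow_natCast, ← zpow_mul]
      norm_cast
    rw [hUr] at hhval
    have hsq1 : ((-1 : (Module.End F V)ˣ))^(2:ℤ) = 1 := by
      rw [zpow_two]; simp
    have hhneg : h = -1 := by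
      rcases Int.even_or_odd c with ⟨w, hw⟩ | ⟨w, hw⟩
      · exfalso; apply hhne
        rw [hhval, hw, ← two_mul, zpow_mul, hsq1, one_zpow]
      · rw [hhval, hw, zpow_add, zpow_mul, hsq1, one_zpow, zpow_one, one_mul]
    -- -1 fixes v : contradiction
    have : ((h : (Module.End F V)ˣ) : Module.End F V) (v:V) = (v:V) := by
      rw [hh]
      exact hfixpow _
    rw [hhneg] at this
    simp only [Units.val_neg, Units.val_one, LinearMap.neg_apply, Module.End.one_apply] at this
    exact two_smul_ne _ v.2 this
  -- orbit counting
  haveI : Finite (Module.End F V) := Finite.of_injective (fun f => (f : V → V)) DFunLike.coe_injective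
  haveI : Fintype (Module.End F V) := Fintype.ofFinite _
  haveI : Fintype (Module.End F V)ˣ := Fintype.ofFinite _
  haveI : Fintype H := Fintype.ofFinite _
  have hcardH : Fintype.card H = 2^(r+1) := by
    have hnc := Nat.card_zpowers U
    rw [hord] at hnc
    exact (Nat.card_eq_fintype_card (α := H)).symm.trans hnc
  have hcardS : Fintype.card {v : V // v ≠ 0} = Fintype.card V - 1 := by
    have h1 : Fintype.card {x : V // x = 0} = 1 := Fintype.card_subtype_eq (0 : V)
    have h2 := Fintype.card_subtype_compl (fun v : V => v = 0)
    rw [h1] at h2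
    exact h2
  have horbit : ∀ v : {v : V // v ≠ 0}, Fintype.card (MulAction.orbit H v) = 2^(r+1) := by
    intro v
    have hos := MulAction.card_orbit_mul_card_stabilizer_eq_card_group H v
    have hst1 : Fintype.card (MulAction.stabilizer H v) = 1 := by
      apply Fintype.card_eq_one_iff.mpr
      refine ⟨⟨1, (MulAction.stabilizer H v).one_mem⟩, ?_⟩
      intro g
      apply Subtype.ext
      have hg : (g : H) ∈ (⊥ : Subgroup H) := by rw [← hstab v]; exact g.2
      exact Subgroup.mem_bot.mp hg
    rw [hst1, mul_one, hcardH] at hos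
    exact hos
  have hcount := Fintype.card_congr (MulAction.selfEquivSigmaOrbits H {v : V // v ≠ 0})
  rw [Fintype.card_sigma] at hcount
  rw [← hcardS, hcount]
  apply Finset.dvd_sum
  intro ω _
  rw [horbit]

open Module Matrix

variable {F : Type} [Field F] {l : Type} [DecidableEq l] [Fintype l]

-- kernel dimension of a matrix
noncomputable def kdim (M : Matrix l l F) : ℕ := finrank F (LinearMap.ker M.mulVecLin)

lemma kdim_add_rank (M : Matrix l l F) : kdim M + M.rank = Fintype.card l := by
  have := LinearMap.finrank_range_add_finrank_ker (M.mulVecLin)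
  rw [Module.finrank_fintype_fun_eq_card] at this
  rw [kdim, Matrix.rank]
  omega

lemma kdim_zero_matrix : kdim (0 : Matrix l l F) = Fintype.card l := by
  have h := kdim_add_rank (0 : Matrix l l F)
  rw [Matrix.rank_zero] at h
  omega

lemma mem_ker_iff (M : Matrix l l F) (v : l → F) :
    v ∈ LinearMap.ker M.mulVecLin ↔ M.mulVec v = 0 := by
  rw [LinearMap.mem_ker, Matrix.mulVecLin_apply]

lemma sub_smul_mulVec (P : Matrix l l F) (a : F) (v : l → F) :
    (P - a • 1).mulVec v = P.mulVec v - a • v := by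
  rw [Matrix.sub_mulVec, Matrix.smul_mulVec, Matrix.one_mulVec]

lemma commute_sub_smul_one (P : Matrix l l F) (a b : F) :
    Commute (P - a • 1) (P - b • 1) := by
  have c1 : Commute P (a • (1 : Matrix l l F)) := (Commute.one_right P).smul_right a
  have c2 : Commute (P - a • 1) P := ((Commute.refl P).sub_left c1.symm)
  have c3 : Commute (P - a • 1) (b • (1 : Matrix l l F)) :=
    (Commute.one_right _).smul_right b
  exact c2.sub_right c3

lemma smul_one_comm (P : Matrix l l F) (a b : F) :
    (P - a • 1) * (P - b • 1) = (P - b • 1) * (P - a • 1) :=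
  (commute_sub_smul_one P a b).eq

lemma kdim_split (P : Matrix l l F) (a b : F) (hab : a ≠ b) :
    kdim ((P - a • 1) * (P - b • 1)) = kdim (P - a • 1) + kdim (P - b • 1) := by
  set A := P - a • 1 with hA
  set B := P - b • 1 with hB
  have hcomm : A * B = B * A := smul_one_comm P a b
  set Ka := LinearMap.ker A.mulVecLin with hKa
  set Kb := LinearMap.ker B.mulVecLin with hKb
  have hle_a : Ka ≤ LinearMap.ker (A*B).mulVecLin := by
    intro v hv
    rw [mem_ker_iff] at hv ⊢
    rw [hcomm, ← Matrix.mulVec_mulVec, hv, Matrix.mulVec_zero]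
  have hle_b : Kb ≤ LinearMap.ker (A*B).mulVecLin := by
    intro v hv
    rw [mem_ker_iff] at hv ⊢
    rw [← Matrix.mulVec_mulVec, hv, Matrix.mulVec_zero]
  have hsup : Ka ⊔ Kb = LinearMap.ker (A*B).mulVecLin := by
    apply le_antisymm (sup_le hle_a hle_b)
    intro v hv
    rw [mem_ker_iff] at hv
    have h1 : (a-b) ≠ 0 := sub_ne_zero.mpr hab
    have hvab : v = (a - b)⁻¹ • (B.mulVec v) + (-(a - b)⁻¹) • (A.mulVec v) := by
      rw [hA, hB, sub_smul_mulVec, sub_smul_mulVec, neg_smul]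
      rw [← sub_eq_add_neg, ← smul_sub]
      have hinner : (P.mulVec v - b • v) - (P.mulVec v - a • v) = (a - b) • v := by
        rw [sub_smul]; abel
      rw [hinner, smul_smul, inv_mul_cancel₀ h1, one_smul]
    rw [hvab]
    apply Submodule.add_mem
    · apply Submodule.mem_sup_left
      rw [hKa, mem_ker_iff]
      rw [Matrix.mulVec_smul, Matrix.mulVec_mulVec, hv, smul_zero]
    · apply Submodule.mem_sup_right
      rw [hKb, mem_ker_iff]
      rw [Matrix.mulVec_smul, Matrix.mulVec_mulVec, ← hcomm, hv, smul_zero]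
  have hinf : Ka ⊓ Kb = ⊥ := by
    rw [Submodule.eq_bot_iff]
    intro v hvv
    rw [Submodule.mem_inf] at hvv
    obtain ⟨hva, hvb⟩ := hvv
    rw [hKa, mem_ker_iff, hA, sub_smul_mulVec] at hva
    rw [hKb, mem_ker_iff, hB, sub_smul_mulVec] at hvb
    have : (a - b) • v = 0 := by
      rw [sub_smul]
      rw [sub_eq_zero] at hva hvb ⊢
      rw [← hva, ← hvb]
    rcases smul_eq_zero.mp this with h | h
    · exact absurd (sub_eq_zero.mp (by exact h)) hab
    · exact h
  have := Submodule.finrank_sup_add_finrank_inf_eq Ka Kb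
  rw [hsup, hinf] at this
  rw [kdim, kdim, kdim, ← hKa, ← hKb]
  simpa using this

lemma expand_sub_smul_one (P : Matrix l l F) (a b : F) :
    (P - a•1) * (P - b•1) = P*P - (a+b) • P + (a*b) • 1 := by
  have e1 : P * (b•(1: Matrix l l F)) = b • P := by rw [mul_smul_comm, mul_one]
  have e2 : (a•(1: Matrix l l F)) * P = a • P := by rw [smul_mul_assoc, one_mul]
  have e3 : (a•(1: Matrix l l F)) * (b•(1: Matrix l l F)) = (a*b) • (1: Matrix l l F) := by
    rw [smul_mul_assoc, mul_smul_comm, one_mul, smul_smul]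
  rw [sub_mul, mul_sub, mul_sub, e1, e2, e3, add_smul]
  abel

lemma kdim_dual (M Mi : Matrix (l ⊕ l) (l ⊕ l) F) (hM : M ∈ Matrix.symplecticGroup l F)
    (h1 : M * Mi = 1) (h2 : Mi * M = 1) (c : F) (hc : c ≠ 0) :
    kdim (M - c • 1) = kdim (M - c⁻¹ • 1) := by
  have hdetM : IsUnit M.det := by
    apply IsUnit.of_mul_eq_one Mi.det
    rw [← Matrix.det_mul, h1, Matrix.det_one]
  -- J * Mᵀ = Mi * J
  have hJM : J l F * Mᵀ = Mi * J l F := by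
    have h3 := (SymplecticGroup.mem_iff).mp hM
    calc J l F * Mᵀ = (Mi * M) * J l F * Mᵀ := by rw [h2, Matrix.one_mul]
    _ = Mi * (M * J l F * Mᵀ) := by noncomm_ring
    _ = Mi * J l F := by rw [h3]
  -- J * (Mᵀ - c•1) = (Mi - c•1) * J
  have hJMc : J l F * (Mᵀ - c • 1) = (Mi - c • 1) * J l F := by
    rw [Matrix.mul_sub, Matrix.sub_mul, hJM, mul_smul_comm, smul_mul_assoc,
      Matrix.mul_one, Matrix.one_mul]
  have hdetJ : IsUnit (J l F).det := isUnit_det_J l F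
  -- rank (M - c•1) = rank (Mi - c•1)
  have hr1 : (M - c • 1).rank = (Mi - c • 1).rank := by
    calc (M - c • 1).rank = (M - c • 1)ᵀ.rank := (Matrix.rank_transpose _).symm
    _ = (Mᵀ - c • 1).rank := by rw [Matrix.transpose_sub, Matrix.transpose_smul,
        Matrix.transpose_one]
    _ = (J l F * (Mᵀ - c • 1)).rank := (Matrix.rank_mul_eq_right_of_isUnit_det _ _ hdetJ).symm
    _ = ((Mi - c • 1) * J l F).rank := by rw [hJMc]
    _ = (Mi - c • 1).rank := Matrix.rank_mul_eq_left_of_isUnit_det _ _ hdetJ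
  -- rank (Mi - c•1) = rank (M - c⁻¹•1)
  have hexp : M * (Mi - c • 1) = ((-c) • 1) * (M - c⁻¹ • 1) := by
    rw [Matrix.mul_sub, h1, mul_smul_comm, Matrix.mul_one]
    rw [smul_mul_assoc, Matrix.one_mul, smul_sub, smul_smul]
    rw [neg_mul, inv_eq_one_div, mul_one_div, div_self hc]
    simp only [neg_smul, one_smul, sub_neg_eq_add]
    abel
  have hdetc : IsUnit (((-c) • 1 : Matrix (l ⊕ l) (l ⊕ l) F)).det := by
    rw [Matrix.det_smul, Matrix.det_one, mul_one]
    exact (IsUnit.pow _ (Ne.isUnit (neg_ne_zero.mpr hc)))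
  have hr2 : (Mi - c • 1).rank = (M - c⁻¹ • 1).rank := by
    calc (Mi - c • 1).rank = (M * (Mi - c • 1)).rank :=
      (Matrix.rank_mul_eq_right_of_isUnit_det _ _ hdetM).symm
    _ = (((-c) • 1) * (M - c⁻¹ • 1)).rank := by rw [hexp]
    _ = (M - c⁻¹ • 1).rank := Matrix.rank_mul_eq_right_of_isUnit_det _ _ hdetc
  have k1 := kdim_add_rank (M - c • 1)
  have k2 := kdim_add_rank (M - c⁻¹ • 1)
  rw [hr1, hr2] at k1
  omega

lemma mulVecLin_pow (M : Matrix l l F) (k : ℕ) : (M^k).mulVecLin = (M.mulVecLin)^k := by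
  induction k with
  | zero => rw [pow_zero, pow_zero, Matrix.mulVecLin_one]; rfl
  | succ k ih => rw [pow_succ, pow_succ, Matrix.mulVecLin_mul, ih]; rfl

-- restriction of M to the kernel of A, orbit counting, number theory
lemma kdim_div (q : ℕ) [Fintype F] (hFq : Fintype.card F = q) (hq : (8:ℤ) ∣ (q:ℤ) - 5)
    (h2 : (2:F) ≠ 0) (M A : Matrix l l F) (hcomm : M * A = A * M) (r : ℕ) (hr : 3 ≤ r)
    (hker : ∀ v, A.mulVec v = 0 → (M^(2^r)).mulVec v = -v) :
    2^(r-1) ∣ kdim A := by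
  classical
  set W := LinearMap.ker A.mulVecLin with hW
  have hinv : ∀ v ∈ W, M.mulVecLin v ∈ W := by
    intro v hv
    rw [hW, mem_ker_iff] at hv ⊢
    rw [Matrix.mulVecLin_apply, Matrix.mulVec_mulVec, ← hcomm, ← Matrix.mulVec_mulVec, hv,
      Matrix.mulVec_zero]
  set u : W →ₗ[F] W := (M.mulVecLin).restrict hinv with hu
  have hupow : ∀ k : ℕ, ∀ w : W, ((u^k) w : l → F) = ((M^k).mulVecLin) (w : l → F) := by
    intro k
    induction k with
    | zero => intro w; simp
    | succ k ih =>
      intro w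
      rw [pow_succ', Module.End.mul_apply]
      have h6 : (u ((u ^ k) w) : l → F) = M.mulVecLin ((u^k) w : l → F) := rfl
      rw [h6, ih w, pow_succ' M k, Matrix.mulVecLin_mul]
      rfl
  have hur : u^(2^r) = -1 := by
    apply LinearMap.ext
    intro w
    apply Subtype.ext
    rw [hupow (2^r) w]
    have hwker : A.mulVec (w : l → F) = 0 := by
      have h5 : (w : l → F) ∈ LinearMap.ker A.mulVecLin := w.2
      rwa [mem_ker_iff] at h5
    have := hker (w : l → F) hwker
    rw [Matrix.mulVecLin_apply, this]
    rfl
  haveI : Fintype W := Fintype.ofFinite _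
  have horb := orb_card_dvd h2 u r hur
  have hcardW : Fintype.card W = q ^ (finrank F W) := by
    rw [← hFq]
    exact card_eq_pow_finrank
  rw [hcardW] at horb
  -- cast to ℤ
  have hq1 : 1 ≤ q := by
    rcases Nat.eq_zero_or_pos q with h0 | h1
    · exfalso; rw [← hFq] at h0; exact absurd h0 (Nat.pos_iff_ne_zero.mp Fintype.card_pos)
    · exact h1
  have hcast : ((2:ℤ))^(r+1) ∣ (q:ℤ)^(finrank F W) - 1 := by
    have h3 : ((2^(r+1) : ℕ) : ℤ) ∣ (((q ^ finrank F W - 1) : ℕ) : ℤ) :=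
      Int.natCast_dvd_natCast.mpr horb
    have h4 : (((q ^ finrank F W - 1) : ℕ) : ℤ) = (q:ℤ)^(finrank F W) - 1 := by
      have : 1 ≤ q ^ finrank F W := Nat.one_le_pow _ _ hq1
      push_cast [Nat.cast_sub this]
      ring
    rw [h4] at h3
    push_cast at h3
    exact h3
  have := nt_main_s15 (q:ℤ) hq (r+1) (finrank F W) (by omega) hcast
  have hrw : r + 1 - 2 = r - 1 := by omega
  rw [hrw] at this
  exact this

lemma kdim_eight (q : ℕ) [Fintype F] (hFq : Fintype.card F = q) (hq : (8:ℤ) ∣ (q:ℤ) - 5)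
    (h2 : (2:F) ≠ 0) (i : F) (hi : i * i = -1)
    (M Mi : Matrix (l ⊕ l) (l ⊕ l) F) (hM : M ∈ Matrix.symplecticGroup l F)
    (h1 : M * Mi = 1) (hmi : Mi * M = 1) :
    8 ∣ kdim (M^8 + 1) := by
  have hi0 : i ≠ 0 := by
    intro h; rw [h, mul_zero] at hi; exact one_ne_zero (neg_eq_zero.mp hi.symm)
  have hine : i ≠ -i := by
    intro h
    apply hi0
    have h3 : i + i = 0 := by nth_rewrite 1 [h]; abel
    have h4 : (2:F) * i = 0 := by rw [two_mul]; exact h3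
    rcases mul_eq_zero.mp h4 with h5 | h5
    · exact absurd h5 h2
    · exact h5
  have hcommMMi : Commute M Mi := by unfold Commute SemiconjBy; rw [h1, hmi]
  have hM4Mi4 : (M^4) * (Mi^4) = 1 := by
    rw [← hcommMMi.mul_pow, h1, one_pow]
  have hMi4M4 : (Mi^4) * (M^4) = 1 := by
    rw [← hcommMMi.symm.mul_pow, hmi, one_pow]
  set P := M^4 with hP
  have hfac : (P - i•1) * (P - (-i)•1) = M^8 + 1 := by
    rw [expand_sub_smul_one]
    rw [add_neg_cancel, zero_smul, sub_zero, mul_neg, hi, neg_neg, one_smul]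
    congr 1
    rw [hP, ← pow_add]
  have hsplit := kdim_split P i (-i) hine
  rw [hfac] at hsplit
  have hiinv : i⁻¹ = -i := by
    have : i * (-i) = 1 := by rw [mul_neg, hi, neg_neg]
    exact inv_eq_of_mul_eq_one_right this
  have hdual := kdim_dual (M^4) (Mi^4) (pow_mem hM 4) hM4Mi4 hMi4M4 i hi0
  rw [hiinv] at hdual
  -- 4 ∣ kdim (P - i•1)
  have hcomm' : M * (P - i•1) = (P - i•1) * M := by
    rw [Matrix.mul_sub, Matrix.sub_mul, mul_smul_comm, smul_mul_assoc, mul_one, one_mul,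
      ((Commute.refl M).pow_right 4).eq]
  have hker : ∀ v, (P - i•1).mulVec v = 0 → (M^(2^3)).mulVec v = -v := by
    intro v hv
    rw [sub_smul_mulVec, sub_eq_zero] at hv
    have h8 : M^(2^3) = P * P := by rw [hP, ← pow_add]; norm_num
    rw [h8, ← Matrix.mulVec_mulVec, hv, Matrix.mulVec_smul, hv, smul_smul, hi,
      neg_smul, one_smul]
  have hquarter := kdim_div q hFq hq h2 M (P - i•1) hcomm' 3 le_rfl hker
  norm_num at hquarter
  rw [← hP] at hdual
  rw [hsplit, ← hdual]
  omega

lemma main_count (q : ℕ) [Fintype F] (hFq : Fintype.card F = q) (hq : (8:ℤ) ∣ (q:ℤ) - 5)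
    (h2 : (2:F) ≠ 0) (i : F) (hi : i * i = -1)
    (S Si T Ti : Matrix (l ⊕ l) (l ⊕ l) F)
    (hS : S ∈ Matrix.symplecticGroup l F) (hT : T ∈ Matrix.symplecticGroup l F)
    (hSSi : S * Si = 1) (hSiS : Si * S = 1) (hTTi : T * Ti = 1) (hTiT : Ti * T = 1)
    (α : ℕ) (hα : 3 ≤ α) (hSo : S^(2^α) = 1) (hrel : T^8 = -(Si^8)) :
    8 ∣ Fintype.card (l ⊕ l) := by
  have hcommS : Commute S Si := by unfold Commute SemiconjBy; rw [hSSi, hSiS]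
  -- 8 divides kdim (S^(2^j) + 1) for any j ≥ 3
  have step1 : ∀ j, 3 ≤ j → 8 ∣ kdim (S^(2^j) - (-1 : F)•1) := by
    intro j hj
    have hMpow : (S^(2^(j-3)))^8 = S^(2^j) := by
      rw [← pow_mul]
      congr 1
      have : 2^(j-3) * 8 = 2^(j-3) * 2^3 := by norm_num
      rw [this, ← pow_add]
      congr 1
      omega
    have hM4 : (S^(2^(j-3))) * (Si^(2^(j-3))) = 1 := by
      rw [← hcommS.mul_pow, hSSi, one_pow]
    have hMi4 : (Si^(2^(j-3))) * (S^(2^(j-3))) = 1 := by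
      rw [← hcommS.symm.mul_pow, hSiS, one_pow]
    have h8 := kdim_eight q hFq hq h2 i hi (S^(2^(j-3))) (Si^(2^(j-3)))
      (pow_mem hS _) hM4 hMi4
    rw [hMpow] at h8
    have hrw : S^(2^j) - (-1 : F)•1 = S^(2^j) + 1 := by
      rw [neg_smul, one_smul, sub_neg_eq_add]
    rw [hrw]
    exact h8
  -- 8 divides kdim (S^8 - 1)
  have step2 : 8 ∣ kdim (S^8 - (1:F)•1) := by
    have hT8 := kdim_eight q hFq hq h2 i hi T Ti hT hTTi hTiT
    have hkereq : LinearMap.ker (T^8 + 1).mulVecLin = LinearMap.ker (S^8 - (1:F)•1).mulVecLin := by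
      apply le_antisymm
      · intro v hv
        rw [mem_ker_iff] at hv ⊢
        rw [Matrix.add_mulVec, Matrix.one_mulVec, hrel, Matrix.neg_mulVec] at hv
        have h3 : (Si^8).mulVec v = v := by
          have h4 : -((Si^8).mulVec v) + v = 0 := hv
          linear_combination (norm := module) -h4
        rw [sub_smul_mulVec, one_smul, sub_eq_zero]
        calc (S^8).mulVec v = (S^8).mulVec ((Si^8).mulVec v) := by rw [h3]
        _ = ((S^8) * (Si^8)).mulVec v := Matrix.mulVec_mulVec _ _ _
        _ = v := by rw [← hcommS.mul_pow, hSSi, one_pow, Matrix.one_mulVec]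
      · intro v hv
        rw [mem_ker_iff] at hv ⊢
        rw [sub_smul_mulVec, one_smul, sub_eq_zero] at hv
        rw [Matrix.add_mulVec, Matrix.one_mulVec, hrel, Matrix.neg_mulVec]
        have h3 : (Si^8).mulVec v = v := by
          have h4 : (Si^8).mulVec ((S^8).mulVec v) = v := by
            rw [Matrix.mulVec_mulVec, ← hcommS.symm.mul_pow, hSiS, one_pow, Matrix.one_mulVec]
          rw [hv] at h4
          exact h4
        rw [h3]
        abel
    have : kdim (T^8 + 1) = kdim (S^8 - (1:F)•1) := by
      rw [kdim, kdim, hkereq]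
    omega
  -- telescoping
  have hone : (1:F) ≠ -1 := by
    intro h
    apply h2
    have h3 : (1:F) + 1 = 0 := by nth_rewrite 1 [h]; abel
    rw [← one_add_one_eq_two]
    exact h3
  have step3 : ∀ j, 3 ≤ j → ∃ c, kdim (S^(2^j) - (1:F)•1) = kdim (S^8 - (1:F)•1) + 8 * c := by
    intro j hj
    induction j with
    | zero => omega
    | succ j ih =>
      rcases Nat.lt_or_ge j 3 with hj3 | hj3
      · have : j + 1 = 3 := by omega
        rw [this]
        exact ⟨0, by norm_num⟩
      · obtain ⟨c, hc⟩ := ih hj3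
        have hfac : (S^(2^j) - (1:F)•1) * (S^(2^j) - (-1:F)•1) = S^(2^(j+1)) - (1:F)•1 := by
          rw [expand_sub_smul_one]
          rw [add_neg_cancel, zero_smul, sub_zero, mul_neg_one, ← pow_add]
          rw [neg_smul, ← sub_eq_add_neg]
          congr 2
          omega
        have hsplit := kdim_split (S^(2^j)) (1:F) (-1:F) hone
        rw [hfac] at hsplit
        obtain ⟨w, hw⟩ := step1 j hj3
        refine ⟨c + w, ?_⟩
        rw [hsplit, hc, hw]
        ring
  obtain ⟨c, hc⟩ := step3 α hα
  have hfinal : kdim (S^(2^α) - (1:F)•1) = Fintype.card (l ⊕ l) := by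
    rw [hSo, one_smul, sub_self, kdim_zero_matrix]
  obtain ⟨w, hw⟩ := step2
  omega
theorem stmt15 (n q : ℕ) (hn : Odd n) (hn0 : 0 < n) (hq : IsPrimePow q)
    (hq8 : q ≡ 5 [MOD 8])
    (F : Type) [Field F] [Fintype F] (hF : Fintype.card F = q) :
    ¬ Function.Surjective (fun xy :
        Matrix.symplecticGroup (Fin n) F × Matrix.symplecticGroup (Fin n) F =>
          xy.1 ^ 8 * xy.2 ^ 8) := by
  intro hsurj
  classical
  set G := Matrix.symplecticGroup (Fin n) F with hG
  -- q arithmetic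
  have hq5 : q % 8 = 5 := by
    have := hq8
    unfold Nat.ModEq at this
    omega
  have hqz : (8:ℤ) ∣ (q:ℤ) - 5 := by
    obtain ⟨k, hk⟩ : ∃ k, q = 8*k + 5 := ⟨q/8, by omega⟩
    refine ⟨k, by rw [hk]; push_cast; ring⟩
  -- char F ≠ 2
  have h2F : (2:F) ≠ 0 := by
    intro hcon
    set p := ringChar F with hp
    haveI : CharP F p := ringChar.charP F
    have hdvd : p ∣ 2 := (CharP.cast_eq_zero_iff F p 2).mp (by exact_mod_cast hcon)
    have hprime : p.Prime := CharP.char_is_prime F p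
    have hp2 : p = 2 := by
      rcases (Nat.Prime.eq_one_or_self_of_dvd Nat.prime_two p hdvd) with h | h
      · exact absurd h hprime.ne_one
      · exact h
    obtain ⟨m, hm, hcard⟩ := FiniteField.card F p
    rw [hF, hp2] at hcard
    have : q % 2 = 0 := by
      rw [hcard]
      have : (1:ℕ) ≤ (m:ℕ) := m.2
      rcases Nat.exists_eq_add_of_le this with ⟨k, hk⟩
      rw [hk, pow_add, pow_one]
      omega
    omega
  -- i with i² = -1
  have hsq : IsSquare (-1 : F) := by
    rw [FiniteField.isSquare_neg_one_iff, hF]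
    omega
  obtain ⟨i, hi⟩ := hsq
  have hi' : i * i = -1 := hi.symm
  -- the element -1 of the symplectic group
  have hneg1mem : (-1 : Matrix (Fin n ⊕ Fin n) (Fin n ⊕ Fin n) F) ∈ G :=
    SymplecticGroup.neg_mem (one_mem _)
  set neg1 : G := ⟨-1, hneg1mem⟩ with hneg1
  obtain ⟨⟨x, y⟩, hxy⟩ := hsurj neg1
  simp only at hxy
  -- group theory setup
  haveI : Finite G := Subtype.finite
  set N := Nat.card G with hN
  have hN0 : N ≠ 0 := Nat.card_pos.ne'
  set f := N.factorization 2 with hf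
  set c := N / 2^f with hc
  set α := f + 3 with hα
  have hcodd : Odd c := by
    have h9 := Nat.not_dvd_ordCompl Nat.prime_two hN0
    have h10 : ¬ 2 ∣ c := h9
    rw [Nat.odd_iff]
    omega
  have hNsplit : 2^f * c = N := Nat.ordProj_mul_ordCompl_eq_self N 2
  have hdvdN : N ∣ c * 2^α := by
    refine ⟨2^3, ?_⟩
    rw [← hNsplit, hα, pow_add]
    ring
  have hpow1 : ∀ g : G, g ^ (c * 2^α) = 1 := by
    intro g
    obtain ⟨k, hk⟩ := hdvdN
    rw [hk, pow_mul, pow_card_eq_one', one_pow]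
  -- s and t
  set s := x^c with hs
  set t := y^c with ht
  have hs2 : s^(2^α) = 1 := by rw [hs, ← pow_mul]; exact hpow1 x
  have ht2 : t^(2^α) = 1 := by rw [ht, ← pow_mul]; exact hpow1 y
  -- neg1 is central
  have hcen : ∀ g : G, Commute g neg1 := by
    intro g
    unfold Commute SemiconjBy
    apply Subtype.ext
    push_cast
    rw [mul_neg_one, neg_one_mul]
  have hneg1sq : neg1 * neg1 = 1 := by
    apply Subtype.ext
    push_cast
    rw [neg_one_mul, neg_neg]
  have hneg1pow : neg1 ^ c = neg1 := by
    obtain ⟨m, hm⟩ := hcodd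
    rw [hm, pow_add, pow_mul, pow_one]
    have : neg1^2 = 1 := by rw [pow_two]; exact hneg1sq
    rw [this, one_pow, one_mul]
  -- t^8 = (s⁻¹)^8 * neg1
  have hy8 : y^8 = (x⁻¹)^8 * neg1 := by
    rw [inv_pow]
    rw [eq_inv_mul_iff_mul_eq]
    exact hxy
  have ht8 : t^8 = (s⁻¹)^8 * neg1 := by
    rw [ht, ← pow_mul, mul_comm c 8, pow_mul, hy8]
    rw [(hcen ((x⁻¹)^8)).mul_pow]
    rw [hneg1pow]
    congr 1
    rw [hs, ← inv_pow, ← pow_mul, ← pow_mul, Nat.mul_comm 8 c]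
  -- coerce to matrices
  set S : Matrix (Fin n ⊕ Fin n) (Fin n ⊕ Fin n) F := s.1 with hSdef
  set Si : Matrix (Fin n ⊕ Fin n) (Fin n ⊕ Fin n) F := (s⁻¹ : G).1 with hSidef
  set T : Matrix (Fin n ⊕ Fin n) (Fin n ⊕ Fin n) F := t.1 with hTdef
  set Ti : Matrix (Fin n ⊕ Fin n) (Fin n ⊕ Fin n) F := (t⁻¹ : G).1 with hTidef
  have hcoe_mul : ∀ a b : G, (a * b : G).1 = a.1 * b.1 :=
    fun a b => rfl
  have hcoe_pow : ∀ (a : G) (k : ℕ), (a ^ k : G).1 = a.1 ^ k := by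
    intro a k
    induction k with
    | zero => rfl
    | succ k ih => rw [pow_succ, pow_succ, hcoe_mul, ih]
  have hSSi : S * Si = 1 := by
    rw [hSdef, hSidef, ← hcoe_mul, mul_inv_cancel]; rfl
  have hSiS : Si * S = 1 := by
    rw [hSdef, hSidef, ← hcoe_mul, inv_mul_cancel]; rfl
  have hTTi : T * Ti = 1 := by
    rw [hTdef, hTidef, ← hcoe_mul, mul_inv_cancel]; rfl
  have hTiT : Ti * T = 1 := by
    rw [hTdef, hTidef, ← hcoe_mul, inv_mul_cancel]; rfl
  have hSmem : S ∈ Matrix.symplecticGroup (Fin n) F := s.2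
  have hTmem : T ∈ Matrix.symplecticGroup (Fin n) F := t.2
  have hSo : S ^ (2^α) = 1 := by
    rw [hSdef, ← hcoe_pow, hs2]; rfl
  have hrelM : T ^ 8 = -(Si ^ 8) := by
    rw [hTdef, hSidef, ← hcoe_pow, ← hcoe_pow, ht8, hcoe_mul]
    show ((s⁻¹:G)^8).1 * (-1) = -(((s⁻¹:G)^8).1)
    rw [mul_neg_one]
  have hαge : 3 ≤ α := by omega
  have hmain := main_count q hF hqz h2F i hi' S Si T Ti hSmem hTmem hSSi hSiS hTTi hTiT
    α hαge hSo hrelM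
  rw [Fintype.card_sum, Fintype.card_fin] at hmain
  rw [Nat.odd_iff] at hn
  omega
end

section
/- Let q ≥ 3 be an odd prime power. Then every element g of SL_2(q) can be written as a product of two squares: g = x^2 y^2 for some x, y ∈ SL_2(q). -/
open Matrix

lemma sq_of_trace {F : Type} [Field F] (X : Matrix.SpecialLinearGroup (Fin 2) F)
    (τ : F) (hτ : τ ≠ 0) (h : τ * τ = X.1 0 0 + X.1 1 1 + 2) :
    ∃ z : Matrix.SpecialLinearGroup (Fin 2) F, z ^ 2 = X := by
  have hdet : X.1 0 0 * X.1 1 1 - X.1 0 1 * X.1 1 0 = 1 := by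
    have := X.2; rwa [Matrix.det_fin_two] at this
  set a := X.1 0 0 with ha
  set b := X.1 0 1 with hb
  set c := X.1 1 0 with hc
  set d := X.1 1 1 with hd
  set t := τ⁻¹ with ht
  have hinv : τ * t = 1 := mul_inv_cancel₀ hτ
  have hX : X.1 = !![a, b; c, d] := by
    ext i j; fin_cases i <;> fin_cases j <;> rfl
  refine ⟨⟨!![t*(a+1), t*b; t*c, t*(d+1)], ?_⟩, ?_⟩
  · rw [Matrix.det_fin_two_of]
    linear_combination t^2*hdet - t^2*h + (t*τ+1)*hinv
  · ext i j
    erw [Matrix.SpecialLinearGroup.coe_pow]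
    simp only [pow_two, Matrix.SpecialLinearGroup.coe_mul, hX]
    fin_cases i <;> fin_cases j
    · simp [Matrix.mul_apply, Fin.sum_univ_two]
      linear_combination (-t^2)*hdet - a*t^2*h + a*(t*τ+1)*hinv
    · simp [Matrix.mul_apply, Fin.sum_univ_two]
      linear_combination (-b*t^2)*h + b*(t*τ+1)*hinv
    · simp [Matrix.mul_apply, Fin.sum_univ_two]
      linear_combination (-c*t^2)*h + c*(t*τ+1)*hinv
    · simp [Matrix.mul_apply, Fin.sum_univ_two]
      linear_combination (-t^2)*hdet - d*t^2*h + d*(t*τ+1)*hinv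

theorem stmt17 (q : ℕ) (hq : IsPrimePow q) (hodd : Odd q) (hq3 : 3 ≤ q)
    (F : Type) [Field F] [Fintype F] (hF : Fintype.card F = q) :
    ∀ g : Matrix.SpecialLinearGroup (Fin 2) F,
      ∃ x y : Matrix.SpecialLinearGroup (Fin 2) F, g = x ^ 2 * y ^ 2 := by
  -- characteristic is odd
  have h2 : (2 : F) ≠ 0 := by
    haveI : CharP F (ringChar F) := ringChar.charP F
    obtain ⟨n, hp, hcard⟩ := FiniteField.card F (ringChar F)
    intro h20
    have hdvd : ringChar F ∣ 2 := by
      have := (CharP.cast_eq_zero_iff F (ringChar F) 2).mp (by exact_mod_cast h20)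
      exact this
    have hP2 : ringChar F = 2 := (Nat.prime_dvd_prime_iff_eq hp Nat.prime_two).mp hdvd
    rw [hP2] at hcard
    rw [hF] at hcard
    have : Even q := by
      rw [hcard]
      exact (Nat.even_pow' n.ne_zero).mpr even_two
    exact (Nat.not_even_iff_odd.mpr hodd) this
  intro g
  set a := g.1 0 0 with ha
  set b := g.1 0 1 with hb
  set c := g.1 1 0 with hc
  set d := g.1 1 1 with hd
  have hdet : a * d - b * c = 1 := by
    have := g.2; rwa [Matrix.det_fin_two] at this
  have hg : g.1 = !![a, b; c, d] := by
    ext i j; fin_cases i <;> fin_cases j <;> rfl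
  rcases eq_or_ne c 0 with hc0 | hc0
  case inr =>
    -- c ≠ 0
    obtain ⟨w, hcw⟩ : ∃ w : F, c * w = a + d - 2 := ⟨(a + d - 2)/c, by field_simp⟩
    obtain ⟨x, hx⟩ := sq_of_trace ⟨!![a, b - a*w; c, d - c*w], by
        rw [Matrix.det_fin_two_of]; linear_combination hdet⟩ 2 h2 (by
        show (2:F)*2 = a + (d - c*w) + 2
        linear_combination hcw)
    obtain ⟨y, hy⟩ := sq_of_trace ⟨!![1, w; 0, 1], by
        rw [Matrix.det_fin_two_of]; ring⟩ 2 h2 (by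
        show (2:F)*2 = 1 + 1 + 2
        ring)
    refine ⟨x, y, ?_⟩
    rw [hx, hy]
    ext i j
    erw [Matrix.SpecialLinearGroup.coe_mul]
    simp only [Matrix.SpecialLinearGroup.coe_mul, hg]
    fin_cases i <;> fin_cases j <;>
      (try simp [Matrix.mul_apply, Fin.sum_univ_two]) <;> (try ring) <;> rfl
  case inl =>
    rcases eq_or_ne b 0 with hb0 | hb0
    case inr =>
      -- c = 0, b ≠ 0
      obtain ⟨w, hbw⟩ : ∃ w : F, b * w = a + d - 2 := ⟨(a + d - 2)/b, by field_simp⟩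
      obtain ⟨x, hx⟩ := sq_of_trace ⟨!![a - b*w, b; -(d*w), d], by
          rw [Matrix.det_fin_two_of]; linear_combination hdet + b*hc0⟩ 2 h2 (by
          show (2:F)*2 = (a - b*w) + d + 2
          linear_combination hbw)
      obtain ⟨y, hy⟩ := sq_of_trace ⟨!![1, 0; w, 1], by
          rw [Matrix.det_fin_two_of]; ring⟩ 2 h2 (by
          show (2:F)*2 = 1 + 1 + 2
          ring)
      refine ⟨x, y, ?_⟩
      rw [hx, hy]
      ext i j
      erw [Matrix.SpecialLinearGroup.coe_mul]
      simp only [Matrix.SpecialLinearGroup.coe_mul, hg, hc0]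
      fin_cases i <;> fin_cases j <;>
        (try simp [Matrix.mul_apply, Fin.sum_univ_two]) <;> (try ring) <;> rfl
    case inl =>
      -- b = c = 0, so g is diagonal with a*d = 1
      have had : a * d = 1 := by linear_combination hdet + c*hb0
      rcases eq_or_ne a 1 with ha1 | ha1
      · -- g = 1
        have hd1 : d = 1 := by rw [ha1] at had; linear_combination had
        refine ⟨1, 1, ?_⟩
        ext i j
        simp only [one_pow, mul_one, hg, ha1, hb0, hc0, hd1]
        rw [show ((1 : Matrix.SpecialLinearGroup (Fin 2) F) : Matrix (Fin 2) (Fin 2) F) = 1 from rfl,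
          Matrix.one_fin_two]
      · rcases eq_or_ne a (-1) with ham | ham
        · -- g = -1
          have hdm : d = -1 := by rw [ham] at had; linear_combination -had
          refine ⟨⟨!![0, -1; 1, 0], by rw [Matrix.det_fin_two_of]; ring⟩, 1, ?_⟩
          ext i j
          erw [one_pow, mul_one, Matrix.SpecialLinearGroup.coe_pow]
          simp only [one_pow, mul_one, pow_two, Matrix.SpecialLinearGroup.coe_mul, hg, ham, hb0, hc0, hdm]
          fin_cases i <;> fin_cases j <;>
            simp [Matrix.mul_apply, Fin.sum_univ_two]
        · -- a ≠ ±1, diagonal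
          have hadne : a - d ≠ 0 := by
            intro hsub
            have : a = d := by linear_combination hsub
            rw [← this] at had
            rcases mul_self_eq_one_iff.mp had with h | h
            · exact ha1 h
            · exact ham h
          obtain ⟨p, hpe⟩ : ∃ p : F, (a - d) * p = -1 - 2*d :=
            ⟨(-1 - 2*d)/(a - d), by field_simp⟩
          obtain ⟨x, hx⟩ := sq_of_trace ⟨!![a*p, a*(p-1); d*(1-p), d*(2-p)], by
              rw [Matrix.det_fin_two_of]; linear_combination had⟩ 1 one_ne_zero (by
              show (1:F)*1 = a*p + d*(2-p) + 2
              linear_combination -hpe)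
          obtain ⟨y, hy⟩ := sq_of_trace ⟨!![2-p, 1-p; p-1, p], by
              rw [Matrix.det_fin_two_of]; ring⟩ 2 h2 (by
              show (2:F)*2 = (2-p) + p + 2
              ring)
          refine ⟨x, y, ?_⟩
          rw [hx, hy]
          ext i j
          erw [Matrix.SpecialLinearGroup.coe_mul]
          simp only [Matrix.SpecialLinearGroup.coe_mul, hg, hb0, hc0]
          fin_cases i <;> fin_cases j <;>
            (try simp [Matrix.mul_apply, Fin.sum_univ_two]) <;> (try ring) <;> rfl
end
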